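/- arXiv:math/0001163 — 6 statements merged into one kernel-verified Lean document; each statement's English description precedes it below -/
import Mathlib

section
/- For the Kirchhoff matrix C = D - G of a weighted digraph G on N vertices, det(λI - C) = (-1)^N Σ_{k=0}^{N} (-λ)^k Σ_{F ∈ F^k(G)} π_F, where F^k(G) is the set of spanning forests of G with exactly k trees (each tree an in-forest with all arcs oriented toward its root), and π_F = Π_{(i,j)∈A(F)} g_ij. -/
open scoped Classical
open Finset

noncomputable section

/-- The step relation of an out-neighbor map: there is an arc from `a` to `b`. -/
def FStep {V : Type*} (f : V → Option V) (a b : V) : Prop := f a = some b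

/-- A forest: a digraph in which every vertex has out-degree ≤ 1 (encoded by the
out-neighbor map `f`) and which has no directed circuits. -/
def IsForest {V : Type*} (f : V → Option V) : Prop :=
  ∀ v, ¬ Relation.TransGen (FStep f) v v

/-- The roots of a forest: vertices of out-degree 0.  For a forest, the number of
trees (connected components) equals the number of roots. -/
def roots {V : Type*} [Fintype V] (f : V → Option V) : Finset V :=
  Finset.univ.filter (fun v => f v = none)

/-- `Reach f a b`: the directed path out of `a` (following arcs) passes through `b`. -/
def Reach {V : Type*} (f : V → Option V) (a b : V) : Prop :=
  Relation.ReflTransGen (FStep f) a b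

/-- The productivity π_F of a forest: product of the weights of its arcs. -/
def forestProd {V K : Type*} [Fintype V] [CommRing K] (w : V → V → K)
    (f : V → Option V) : K :=
  ∏ v, (match f v with | some u => w v u | none => 1)

/-- Arc weights of the augmented digraph G† on vertex set `Option (Fin N)`,
where `none` plays the role of the extra vertex †: arcs (i,j), i ≠ j, have
weight g_ij, arcs (i,†) have weight -Σ_j g_ij; there are no loops and no
arcs out of †. -/
def daggerWeight {N : ℕ} {K : Type*} [CommRing K] (G : Matrix (Fin N) (Fin N) K) :
    Option (Fin N) → Option (Fin N) → K
  | some i, some j => if i = j then 0 else G i j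
  | some i, none => -(∑ j, G i j)
  | none, _ => 0

section Helpers

variable {V : Type*} [Fintype V] [DecidableEq V]

/-- Total successor function. -/
def fnext (f : V → Option V) (x : V) : V := (f x).getD x

lemma transGen_iterate {f : V → Option V} {a b : V}
    (h : Relation.TransGen (FStep f) a b) :
    ∃ n, 0 < n ∧ (fnext f)^[n] a = b ∧
      ∀ i < n, f ((fnext f)^[i] a) = some ((fnext f)^[i+1] a) := by
  induction h with
  | single hab =>
    rename_i c
    have h' : f a = some c := hab
    refine ⟨1, one_pos, by simp [fnext, h'], ?_⟩
    intro i hi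
    have : i = 0 := by omega
    subst this
    simp [fnext, h']
  | tail hab hbc ih =>
    rename_i b' c'
    obtain ⟨n, hn, hb, hchain⟩ := ih
    have h' : f b' = some c' := hbc
    refine ⟨n + 1, by omega, ?_, ?_⟩
    · rw [Function.iterate_succ_apply', hb]
      simp [fnext, h']
    · intro i hi
      rcases Nat.lt_succ_iff_lt_or_eq.mp hi with h1 | h1
      · exact hchain i h1
      · subst h1
        rw [Function.iterate_succ_apply', hb]
        simp [fnext, h']

lemma moved_frame {f : V → Option V} {σ : Equiv.Perm V}
    (hc : ∀ i, σ i ≠ i → f i = some (σ i)) {x : V} (hx : σ x ≠ x) :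
    f x = some (σ x) ∧ σ (σ x) ≠ σ x :=
  ⟨hc x hx, fun h => hx (σ.injective h)⟩

lemma forest_compat_eq_one {f : V → Option V} (hf : IsForest f) {σ : Equiv.Perm V}
    (hc : ∀ i, σ i ≠ i → f i = some (σ i)) : σ = 1 := by
  by_contra hσ
  obtain ⟨x, hx⟩ : ∃ x, σ x ≠ x := by
    by_contra h; push_neg at h; exact hσ (Equiv.ext h)
  have key : ∀ j : ℕ, Relation.TransGen (FStep f) x ((⇑σ)^[j+1] x) ∧
      σ ((⇑σ)^[j+1] x) ≠ (⇑σ)^[j+1] x := by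
    intro j
    induction j with
    | zero =>
      obtain ⟨h1, h2⟩ := moved_frame hc hx
      exact ⟨Relation.TransGen.single h1, by simpa using h2⟩
    | succ j ih =>
      obtain ⟨h1, h2⟩ := ih
      obtain ⟨h3, h4⟩ := moved_frame hc h2
      have e : (⇑σ)^[j+1+1] x = σ ((⇑σ)^[j+1] x) := Function.iterate_succ_apply' _ _ _
      exact ⟨by rw [e]; exact h1.tail h3, by rw [e]; exact h4⟩
  have hn : 0 < orderOf σ := orderOf_pos σ
  have hpow : (⇑σ)^[orderOf σ] x = x := by
    rw [← Equiv.Perm.coe_pow, pow_orderOf_eq_one]; rfl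
  obtain ⟨h1, -⟩ := key (orderOf σ - 1)
  have he : orderOf σ - 1 + 1 = orderOf σ := Nat.succ_pred_eq_of_pos hn
  rw [he, hpow] at h1
  exact hf x h1

end Helpers

section SignSum

variable {V : Type*} [Fintype V] [DecidableEq V]

lemma signSum {f : V → Option V} (hf : ∀ i, f i ≠ some i) :
    (∑ σ ∈ univ.filter (fun σ : Equiv.Perm V => ∀ i, σ i ≠ i → f i = some (σ i)),
      ((Equiv.Perm.sign σ : ℤ) : ℂ) * (-1) ^ (univ.filter fun i => σ i ≠ i).card)
    = if IsForest f then 1 else 0 := by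
  by_cases hfor : IsForest f
  · rw [if_pos hfor]
    have hone : univ.filter (fun σ : Equiv.Perm V => ∀ i, σ i ≠ i → f i = some (σ i)) = {1} := by
      ext σ
      simp only [mem_filter, mem_univ, true_and, mem_singleton]
      constructor
      · exact forest_compat_eq_one hfor
      · rintro rfl i hi; simp at hi
    rw [hone]
    simp
  · rw [if_neg hfor]
    obtain ⟨v, hv⟩ : ∃ v, Relation.TransGen (FStep f) v v := by
      by_contra h; push_neg at h; exact hfor h
    obtain ⟨k, hk0, hkv, hkchain⟩ := transGen_iterate hv
    set g : V → V := fnext f with hg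
    set C : Finset V := (Finset.range k).image (fun i => g^[i] v) with hCdef
    have hvC : v ∈ C := mem_image.mpr ⟨0, mem_range.mpr hk0, rfl⟩
    have hCmem : ∀ x ∈ C, ∃ i, i < k ∧ g^[i] v = x := by
      intro x hx; obtain ⟨i, hi, he⟩ := mem_image.mp hx; exact ⟨i, mem_range.mp hi, he⟩
    have hfsome : ∀ x ∈ C, f x = some (g x) := by
      intro x hx
      obtain ⟨i, hi, rfl⟩ := hCmem x hx
      rw [hkchain i hi, Function.iterate_succ_apply']
    have hgC : ∀ x ∈ C, g x ∈ C := by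
      intro x hx
      obtain ⟨i, hi, rfl⟩ := hCmem x hx
      rcases Nat.lt_or_ge (i+1) k with h | h
      · exact mem_image.mpr ⟨i+1, mem_range.mpr h, Function.iterate_succ_apply' g i v⟩
      · have he : i + 1 = k := by omega
        have : g (g^[i] v) = v := by
          rw [show g (g^[i] v) = g^[i+1] v from (Function.iterate_succ_apply' g i v).symm,
            he, hkv]
        rw [this]; exact hvC
    have hgiC : ∀ (j : ℕ), ∀ x ∈ C, g^[j] x ∈ C := by
      intro j
      induction j with
      | zero => exact fun x hx => hx
      | succ j ih =>
        intro x hx; rw [Function.iterate_succ_apply']; exact hgC _ (ih x hx)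
    have hper : ∀ x ∈ C, g^[k] x = x := by
      intro x hx
      obtain ⟨i, hi, rfl⟩ := hCmem x hx
      rw [← Function.iterate_add_apply g k i v, Nat.add_comm, Function.iterate_add_apply, hkv]
    have hgne : ∀ x ∈ C, g x ≠ x := by
      intro x hx h
      exact hf x (by rw [hfsome x hx, h])
    have hinjC : ∀ x ∈ C, ∀ y ∈ C, g x = g y → x = y := by
      intro x hx y hy h
      have hx' := hper x hx
      have hy' := hper y hy
      have hk' : k = (k-1) + 1 := by omega
      rw [hk', Function.iterate_succ_apply, h] at hx'
      rw [hk', Function.iterate_succ_apply] at hy'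
      rw [← hx']; exact hy'
    have hinj : Function.Injective (fun x => if x ∈ C then g x else x) := by
      intro x y h
      simp only at h
      by_cases hx : x ∈ C <;> by_cases hy : y ∈ C
      · rw [if_pos hx, if_pos hy] at h; exact hinjC x hx y hy h
      · rw [if_pos hx, if_neg hy] at h; exact absurd (by rw [← h]; exact hgC x hx) hy
      · rw [if_neg hx, if_pos hy] at h; exact absurd (by rw [h]; exact hgC y hy) hx
      · rw [if_neg hx, if_neg hy] at h; exact h
    set τ : Equiv.Perm V := Equiv.ofBijective _ (Finite.injective_iff_bijective.mp hinj) with hτdef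
    have hτ : ∀ x, τ x = if x ∈ C then g x else x := fun x => rfl
    have hτC : ∀ x ∈ C, τ x = g x := by intro x hx; rw [hτ, if_pos hx]
    have hτnC : ∀ x, x ∉ C → τ x = x := by intro x hx; rw [hτ, if_neg hx]
    have hτinvC : ∀ y ∈ C, τ⁻¹ y ∈ C := by
      intro y hy
      have hz : g^[k-1] y ∈ C := hgiC _ y hy
      have hzy : τ (g^[k-1] y) = y := by
        rw [hτC _ hz,
          show g (g^[k-1] y) = g^[k-1+1] y from (Function.iterate_succ_apply' g (k-1) y).symm,
          Nat.sub_add_cancel (by omega), hper y hy]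
      rw [← hzy, Equiv.Perm.inv_def, Equiv.symm_apply_apply]
      exact hz
    have hτinvnC : ∀ y, y ∉ C → τ⁻¹ y = y := by
      intro y hy
      have := hτnC y hy
      conv_lhs => rw [← this]
      rw [Equiv.Perm.inv_def, Equiv.symm_apply_apply]
    have hreach : ∀ x ∈ C, ∀ y ∈ C, ∃ j, g^[j] x = y := by
      intro x hx y hy
      obtain ⟨i, hi, rfl⟩ := hCmem x hx
      obtain ⟨j, hj, rfl⟩ := hCmem y hy
      refine ⟨j + (k - i), ?_⟩
      rw [← Function.iterate_add_apply g (j + (k - i)) i v]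
      have he : j + (k - i) + i = j + k := by omega
      rw [he, Function.iterate_add_apply, hkv]
    have hsupp : τ.support = C := by
      ext x
      rw [Equiv.Perm.mem_support]
      constructor
      · intro h; by_contra hx; exact h (hτnC x hx)
      · intro hx; rw [hτC x hx]; exact hgne x hx
    have hCcard : 0 < C.card := card_pos.mpr ⟨v, hvC⟩
    have hτiter : ∀ (j : ℕ), ∀ x ∈ C, (⇑τ)^[j] x = g^[j] x := by
      intro j
      induction j with
      | zero => intros; rfl
      | succ j ih =>
        intro x hx
        rw [Function.iterate_succ_apply', Function.iterate_succ_apply', ih x hx,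
          hτC _ (hgiC j x hx)]
    have hcyc : τ.IsCycle := by
      refine ⟨v, by rw [hτC v hvC]; exact hgne v hvC, ?_⟩
      intro y hy
      have hyC : y ∈ C := by
        by_contra h; exact hy (hτnC y h)
      obtain ⟨j, hj⟩ := hreach v hvC y hyC
      refine ⟨(j : ℤ), ?_⟩
      rw [zpow_natCast]
      have hp : (τ ^ j) v = (⇑τ)^[j] v := by rw [Equiv.Perm.coe_pow]
      rw [hp, hτiter j v hvC, hj]
    have hsign : Equiv.Perm.sign τ = -(-1) ^ C.card := by
      rw [hcyc.sign, hsupp]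
    have hsignC : ((Equiv.Perm.sign τ : ℤ) : ℂ) = -(-1) ^ C.card := by
      rw [hsign]; push_cast; ring
    have hstep : ∀ (σ : Equiv.Perm V), (∀ i, σ i ≠ i → f i = some (σ i)) →
        ∀ z ∈ C, σ z ≠ z → σ z = g z := by
      intro σ hσ z hz hzm
      have h2 := hfsome z hz
      rw [hσ z hzm] at h2
      exact Option.some_injective V h2
    have hdich : ∀ σ : Equiv.Perm V, (∀ i, σ i ≠ i → f i = some (σ i)) →
        ∀ x ∈ C, σ x ≠ x → ∀ y ∈ C, σ y ≠ y := by
      intro σ hσ x hxC hx y hyC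
      have stepm : ∀ z ∈ C, σ z ≠ z → σ (g z) ≠ g z := by
        intro z hz hzm h
        rw [← hstep σ hσ z hz hzm] at h
        exact hzm (σ.injective h)
      have hall : ∀ j : ℕ, σ (g^[j] x) ≠ g^[j] x := by
        intro j
        induction j with
        | zero => simpa using hx
        | succ j ih =>
          rw [Function.iterate_succ_apply']
          exact stepm _ (hgiC j x hxC) ih
      obtain ⟨j, hj⟩ := hreach x hxC y hyC
      rw [← hj]; exact hall j
    -- Case A facts: σ fixes C pointwise
    have caseA : ∀ σ : Equiv.Perm V, (∀ i, σ i ≠ i → f i = some (σ i)) →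
        (∀ x ∈ C, σ x = x) →
        (∀ i, (σ * τ) i ≠ i → f i = some ((σ * τ) i)) ∧
        (∀ x ∈ C, (σ * τ) x ≠ x) ∧
        (univ.filter fun i => (σ * τ) i ≠ i).card
          = (univ.filter fun i => σ i ≠ i).card + C.card := by
      intro σ hσ hfix
      have hval : ∀ x ∈ C, (σ * τ) x = g x := by
        intro x hx
        rw [Equiv.Perm.mul_apply, hτC x hx, hfix _ (hgC x hx)]
      have hvaln : ∀ x, x ∉ C → (σ * τ) x = σ x := by
        intro x hx
        rw [Equiv.Perm.mul_apply, hτnC x hx]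
      have hmoves : ∀ x ∈ C, (σ * τ) x ≠ x := by
        intro x hx; rw [hval x hx]; exact hgne x hx
      refine ⟨?_, hmoves, ?_⟩
      · intro i hi
        by_cases hiC : i ∈ C
        · rw [hval i hiC]; exact hfsome i hiC
        · rw [hvaln i hiC] at hi ⊢; exact hσ i hi
      · have hfe : (univ.filter fun i => (σ * τ) i ≠ i)
            = (univ.filter fun i => σ i ≠ i) ∪ C := by
          ext i
          simp only [mem_filter, mem_univ, true_and, mem_union]
          by_cases hiC : i ∈ C
          · simp only [hiC, or_true, iff_true]; exact hmoves i hiC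
          · rw [hvaln i hiC]; simp [hiC]
        rw [hfe, card_union_of_disjoint]
        rw [disjoint_left]
        intro i hi hiC
        rw [mem_filter] at hi
        exact hi.2 (hfix i hiC)
    -- Case B facts: σ moves all of C
    have caseB : ∀ σ : Equiv.Perm V, (∀ i, σ i ≠ i → f i = some (σ i)) →
        (∀ x ∈ C, σ x ≠ x) →
        (∀ i, (σ * τ⁻¹) i ≠ i → f i = some ((σ * τ⁻¹) i)) ∧
        (∀ x ∈ C, (σ * τ⁻¹) x = x) ∧
        C.card ≤ (univ.filter fun i => σ i ≠ i).card ∧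
        (univ.filter fun i => (σ * τ⁻¹) i ≠ i).card
          = (univ.filter fun i => σ i ≠ i).card - C.card := by
      intro σ hσ hmov
      have hval : ∀ x ∈ C, (σ * τ⁻¹) x = x := by
        intro x hx
        have h1 : τ⁻¹ x ∈ C := hτinvC x hx
        rw [Equiv.Perm.mul_apply, hstep σ hσ _ h1 (hmov _ h1), ← hτC _ h1,
          Equiv.Perm.inv_def, Equiv.apply_symm_apply]
      have hvaln : ∀ x, x ∉ C → (σ * τ⁻¹) x = σ x := by
        intro x hx
        rw [Equiv.Perm.mul_apply, hτinvnC x hx]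
      have hsub : C ⊆ univ.filter fun i => σ i ≠ i := by
        intro x hx; rw [mem_filter]; exact ⟨mem_univ x, hmov x hx⟩
      refine ⟨?_, hval, card_le_card hsub, ?_⟩
      · intro i hi
        by_cases hiC : i ∈ C
        · exact absurd (hval i hiC) hi
        · rw [hvaln i hiC] at hi ⊢; exact hσ i hi
      · have hfe : (univ.filter fun i => (σ * τ⁻¹) i ≠ i)
            = (univ.filter fun i => σ i ≠ i) \ C := by
          ext i
          simp only [mem_filter, mem_univ, true_and, mem_sdiff]
          by_cases hiC : i ∈ C
          · simp only [hiC, not_true_eq_false, and_false, iff_false, ne_eq, not_not]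
            exact hval i hiC
          · rw [hvaln i hiC]; simp [hiC]
        rw [hfe, card_sdiff_of_subset hsub]
    -- the involution
    refine Finset.sum_involution
      (fun σ _ => if ∀ x ∈ C, σ x ≠ x then σ * τ⁻¹ else σ * τ) ?_ ?_ ?_ ?_
    · -- sums to zero
      intro σ hσ
      beta_reduce
      rw [mem_filter] at hσ
      replace hσ := hσ.2
      by_cases hc : ∀ x ∈ C, σ x ≠ x
      · rw [if_pos hc]
        obtain ⟨-, -, hle, hcard⟩ := caseB σ hσ hc
        have hsgn : ((Equiv.Perm.sign (σ * τ⁻¹) : ℤ) : ℂ)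
            = ((Equiv.Perm.sign σ : ℤ) : ℂ) * (-(-1) ^ C.card) := by
          rw [map_mul, map_inv, hsign]
          push_cast
          ring_nf
          simp [inv_pow]
        rw [hcard, hsgn]
        have h2 : (-1 : ℂ) ^ (univ.filter fun i => σ i ≠ i).card
            = (-1) ^ ((univ.filter fun i => σ i ≠ i).card - C.card) * (-1) ^ C.card := by
          rw [← pow_add, Nat.sub_add_cancel hle]
        rw [h2]; ring
      · rw [if_neg hc]
        have hfix : ∀ x ∈ C, σ x = x := by
          intro x hx
          by_contra h
          exact hc (hdich σ hσ x hx h)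
        obtain ⟨-, -, hcard⟩ := caseA σ hσ hfix
        have hsgn : ((Equiv.Perm.sign (σ * τ) : ℤ) : ℂ)
            = ((Equiv.Perm.sign σ : ℤ) : ℂ) * (-(-1) ^ C.card) := by
          rw [map_mul, hsign]; push_cast; ring
        rw [hcard, hsgn, pow_add]
        have hcc : ((-1 : ℂ)) ^ C.card * (-1) ^ C.card = 1 := by
          rw [← pow_add, ← two_mul, pow_mul]
          norm_num
        linear_combination (-(((Equiv.Perm.sign σ : ℤ) : ℂ)
          * (-1) ^ (univ.filter fun i => σ i ≠ i).card)) * hcc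
    · -- nonzero image ≠ self
      intro σ hσ _
      beta_reduce
      by_cases hc : ∀ x ∈ C, σ x ≠ x
      · rw [if_pos hc]
        intro h
        have := congrArg (fun p : Equiv.Perm V => p v) h
        rw [mem_filter] at hσ
        obtain ⟨-, hval, -, -⟩ := caseB σ hσ.2 hc
        exact hc v hvC (by rw [← this]; exact hval v hvC)
      · rw [if_neg hc]
        intro h
        have hfix : ∀ x ∈ C, σ x = x := by
          intro x hx
          by_contra hx'
          exact hc (hdich σ (mem_filter.mp hσ).2 x hx hx')
        obtain ⟨-, hmoves, -⟩ := caseA σ (mem_filter.mp hσ).2 hfix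
        have := congrArg (fun p : Equiv.Perm V => p v) h
        exact hmoves v hvC (by rw [this]; exact hfix v hvC)
    · -- stays in the set
      intro σ hσ
      beta_reduce
      rw [mem_filter] at hσ ⊢
      refine ⟨mem_univ _, ?_⟩
      by_cases hc : ∀ x ∈ C, σ x ≠ x
      · rw [if_pos hc]; exact (caseB σ hσ.2 hc).1
      · rw [if_neg hc]
        have hfix : ∀ x ∈ C, σ x = x := by
          intro x hx
          by_contra hx'
          exact hc (hdich σ hσ.2 x hx hx')
        exact (caseA σ hσ.2 hfix).1
    · -- involutive
      intro σ hσ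
      beta_reduce
      by_cases hc : ∀ x ∈ C, σ x ≠ x
      · rw [if_pos hc]
        rw [mem_filter] at hσ
        obtain ⟨-, hval, -, -⟩ := caseB σ hσ.2 hc
        have hc2 : ¬ ∀ x ∈ C, (σ * τ⁻¹) x ≠ x := by
          push_neg
          exact ⟨v, hvC, hval v hvC⟩
        rw [if_neg hc2, inv_mul_cancel_right]
      · rw [if_neg hc]
        rw [mem_filter] at hσ
        have hfix : ∀ x ∈ C, σ x = x := by
          intro x hx
          by_contra hx'
          exact hc (hdich σ hσ.2 x hx hx')
        obtain ⟨-, hmoves, -⟩ := caseA σ hσ.2 hfix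
        rw [if_pos hmoves, mul_inv_cancel_right]

end SignSum

section Det

variable {V : Type*} [Fintype V] [DecidableEq V]

lemma det_eq_sum_forests (G : Matrix V V ℂ) (μ : ℂ) :
    (μ • (1 : Matrix V V ℂ) + (Matrix.diagonal (fun i => ∑ j, G i j) - G)).det =
    ∑ f ∈ univ.filter (fun f : V → Option V => IsForest f),
      μ ^ (roots f).card * forestProd (fun i j => G i j) f := by
  set M := μ • (1 : Matrix V V ℂ) + (Matrix.diagonal (fun i => ∑ j, G i j) - G) with hM
  have hMdiag : ∀ i, M i i = μ + ∑ j ∈ univ.erase i, G i j := by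
    intro i
    have he : ∑ j ∈ univ.erase i, G i j = (∑ j, G i j) - G i i := by
      rw [eq_sub_iff_add_eq, Finset.sum_erase_add _ _ (mem_univ i)]
    simp [hM, Matrix.add_apply, Matrix.sub_apply, Matrix.smul_apply, Matrix.one_apply,
      Matrix.diagonal_apply_eq, he]
  have hMoff : ∀ i j, i ≠ j → M i j = - G i j := by
    intro i j h
    simp [hM, Matrix.add_apply, Matrix.sub_apply, Matrix.smul_apply,
      Matrix.one_apply_ne h, Matrix.diagonal_apply_ne _ h]
  -- notation
  set T : (V → Option V) → ℂ :=
    fun f => μ ^ (roots f).card * forestProd (fun i j => G i j) f with hT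
  have key : ∀ σ : Equiv.Perm V, (∏ i, M.transpose (σ i) i) =
      ∑ f ∈ univ.filter (fun f : V → Option V =>
          (∀ i, f i ≠ some i) ∧ ∀ i, σ i ≠ i → f i = some (σ i)),
        (-1 : ℂ) ^ (univ.filter fun i => σ i ≠ i).card * T f := by
    intro σ
    have h1 : ∀ i, M.transpose (σ i) i =
        ∑ o ∈ (if σ i = i then ({some i}ᶜ : Finset (Option V)) else {some (σ i)}),
          Option.elim o μ (fun j => if σ i = i then G i j else - G i j) := by
      intro i
      rw [Matrix.transpose_apply]
      by_cases h : σ i = i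
      · rw [if_pos h, h]
        simp only [eq_self_iff_true, if_true]
        have hsplit : ∑ o ∈ ({some i}ᶜ : Finset (Option V)),
              Option.elim o μ (fun j => G i j)
            = (∑ o : Option V, Option.elim o μ (fun j => G i j)) - G i i := by
          rw [eq_sub_iff_add_eq]
          have hs := Finset.sum_compl_add_sum ({some i} : Finset (Option V))
            (fun o => Option.elim o μ (fun j => G i j))
          simpa using hs
        rw [hsplit, hMdiag i, Fintype.sum_option]
        simp only [Option.elim_some, Option.elim_none]
        have he : ∑ j ∈ univ.erase i, G i j = (∑ j, G i j) - G i i := by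
          rw [eq_sub_iff_add_eq, Finset.sum_erase_add _ _ (mem_univ i)]
        rw [he]
        ring
      · rw [if_neg h, Finset.sum_singleton]
        simp only [Option.elim_some, if_neg h]
        exact hMoff i (σ i) (fun e => h e.symm)
    have h2 : Fintype.piFinset
          (fun i => if σ i = i then ({some i}ᶜ : Finset (Option V)) else {some (σ i)})
        = univ.filter (fun f : V → Option V =>
            (∀ i, f i ≠ some i) ∧ ∀ i, σ i ≠ i → f i = some (σ i)) := by
      ext f
      simp only [Fintype.mem_piFinset, mem_filter, mem_univ, true_and]
      constructor
      · intro h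
        constructor
        · intro i
          rcases eq_or_ne (σ i) i with h' | h'
          · have := h i; rw [if_pos h'] at this; simpa using this
          · have := h i; rw [if_neg h'] at this
            simp only [mem_singleton] at this
            rw [this]
            simpa using h'
        · intro i hi
          have := h i; rw [if_neg hi] at this; simpa using this
      · rintro ⟨ha, hb⟩ i
        rcases eq_or_ne (σ i) i with h' | h'
        · rw [if_pos h']; simpa using ha i
        · rw [if_neg h']; simpa using hb i h'
    calc (∏ i, M.transpose (σ i) i)
        = ∏ i, ∑ o ∈ (if σ i = i then ({some i}ᶜ : Finset (Option V)) else {some (σ i)}),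
            Option.elim o μ (fun j => if σ i = i then G i j else - G i j) :=
          Finset.prod_congr rfl (fun i _ => h1 i)
      _ = ∑ f ∈ Fintype.piFinset
            (fun i => if σ i = i then ({some i}ᶜ : Finset (Option V)) else {some (σ i)}),
            ∏ i, Option.elim (f i) μ (fun j => if σ i = i then G i j else - G i j) :=
          Finset.prod_univ_sum _ _
      _ = _ := by
          rw [h2]
          refine Finset.sum_congr rfl ?_
          intro f hf
          simp only [mem_filter, mem_univ, true_and] at hf
          obtain ⟨hp, hc⟩ := hf
          have e1 : ∀ i, Option.elim (f i) μ (fun j => if σ i = i then G i j else - G i j)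
              = (if σ i = i then (1 : ℂ) else -1) *
                ((if f i = none then μ else 1) * Option.elim (f i) 1 (fun j => G i j)) := by
            intro i
            rcases hfi : f i with _ | j
            · have hii : σ i = i := by
                by_contra h
                rw [hc i h] at hfi
                simp at hfi
              simp [hii]
            · simp only [Option.elim_some]
              have hjn : ¬ (some j = (none : Option V)) := by simp
              rw [if_neg hjn]
              split_ifs with h <;> ring
          rw [Finset.prod_congr rfl (fun i _ => e1 i), Finset.prod_mul_distrib,
            Finset.prod_mul_distrib]
          congr 1
          · rw [Finset.prod_ite, Finset.prod_const, Finset.prod_const, one_pow, one_mul]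
          · rw [hT]
            congr 1
            · rw [Finset.prod_ite, Finset.prod_const, Finset.prod_const, one_pow, mul_one]
              rw [roots]
            · rw [forestProd]
              refine Finset.prod_congr rfl fun x _ => ?_
              rcases hx : f x with _ | u <;> simp [hx]
  rw [← Matrix.det_transpose M, Matrix.det_apply']
  have step1 : ∑ σ : Equiv.Perm V, ((Equiv.Perm.sign σ : ℤ) : ℂ) * ∏ i, M.transpose (σ i) i
      = ∑ σ : Equiv.Perm V, ∑ f : V → Option V,
          if (∀ i, f i ≠ some i) ∧ (∀ i, σ i ≠ i → f i = some (σ i)) then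
            (((Equiv.Perm.sign σ : ℤ) : ℂ)
              * (-1) ^ (univ.filter fun i => σ i ≠ i).card) * T f
          else 0 := by
    refine Finset.sum_congr rfl fun σ _ => ?_
    rw [key σ, Finset.mul_sum, ← Finset.sum_filter]
    exact Finset.sum_congr rfl fun f _ => by ring
  rw [step1, Finset.sum_comm]
  have step2 : ∀ f : V → Option V,
      (∑ σ : Equiv.Perm V,
        if (∀ i, f i ≠ some i) ∧ (∀ i, σ i ≠ i → f i = some (σ i)) then
          (((Equiv.Perm.sign σ : ℤ) : ℂ)
            * (-1) ^ (univ.filter fun i => σ i ≠ i).card) * T f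
        else 0)
      = (if IsForest f then (1:ℂ) else 0) * T f := by
    intro f
    rw [← Finset.sum_filter, ← Finset.sum_mul]
    by_cases hp : ∀ i, f i ≠ some i
    · have hfe : (univ.filter fun σ : Equiv.Perm V =>
          (∀ i, f i ≠ some i) ∧ (∀ i, σ i ≠ i → f i = some (σ i)))
          = univ.filter (fun σ : Equiv.Perm V => ∀ i, σ i ≠ i → f i = some (σ i)) := by
        refine Finset.filter_congr fun σ _ => ?_
        simp [hp]
      rw [hfe, signSum hp]
    · have hfe : (univ.filter fun σ : Equiv.Perm V =>
          (∀ i, f i ≠ some i) ∧ (∀ i, σ i ≠ i → f i = some (σ i))) = ∅ := by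
        refine Finset.filter_false_of_mem fun σ _ => ?_
        exact fun h => hp h.1
      have hnf : ¬ IsForest f := by
        push_neg at hp
        obtain ⟨i, hi⟩ := hp
        intro hfor
        exact hfor i (Relation.TransGen.single hi)
      rw [hfe, if_neg hnf, Finset.sum_empty, zero_mul]
  rw [Finset.sum_congr rfl fun f _ => step2 f]
  rw [Finset.sum_congr rfl fun (f : V → Option V) _ =>
    (ite_mul (IsForest f) (1:ℂ) 0 (T f)).trans (by rw [one_mul, zero_mul])]
  rw [← Finset.sum_filter]

end Det

/-- Characteristic polynomial of the Kirchhoff matrix C = D - G in terms of the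
spanning forests of the weighted digraph G. -/
theorem stmt1 {N : ℕ} (G : Matrix (Fin N) (Fin N) ℂ) (lam : ℂ) :
    (lam • (1 : Matrix (Fin N) (Fin N) ℂ) -
        (Matrix.diagonal (fun i => ∑ j, G i j) - G)).det =
      (-1 : ℂ) ^ N * ∑ k ∈ Finset.range (N + 1), (-lam) ^ k *
        ∑ᶠ f ∈ {f : Fin N → Option (Fin N) |
            IsForest f ∧ (∀ i j, f i = some j → G i j ≠ 0) ∧ (roots f).card = k},
          forestProd (fun i j => G i j) f := by
  have h0 : lam • (1 : Matrix (Fin N) (Fin N) ℂ) -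
        (Matrix.diagonal (fun i => ∑ j, G i j) - G)
      = -((-lam) • (1 : Matrix (Fin N) (Fin N) ℂ) +
          (Matrix.diagonal (fun i => ∑ j, G i j) - G)) := by
    ext i j
    simp [Matrix.sub_apply, Matrix.add_apply, Matrix.smul_apply, Matrix.neg_apply]
    ring
  rw [h0, Matrix.det_neg, det_eq_sum_forests, Fintype.card_fin]
  congr 1
  have hfin : ∀ k : ℕ, (∑ᶠ f ∈ {f : Fin N → Option (Fin N) |
        IsForest f ∧ (∀ i j, f i = some j → G i j ≠ 0) ∧ (roots f).card = k},
      forestProd (fun i j => G i j) f)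
      = ∑ f ∈ univ.filter (fun f : Fin N → Option (Fin N) =>
          IsForest f ∧ (∀ i j, f i = some j → G i j ≠ 0) ∧ (roots f).card = k),
        forestProd (fun i j => G i j) f := by
    intro k
    have hset : {f : Fin N → Option (Fin N) |
        IsForest f ∧ (∀ i j, f i = some j → G i j ≠ 0) ∧ (roots f).card = k}
        = ↑(univ.filter (fun f : Fin N → Option (Fin N) =>
            IsForest f ∧ (∀ i j, f i = some j → G i j ≠ 0) ∧ (roots f).card = k)) := by
      ext f; simp
    rw [hset, finsum_mem_coe_finset]
  have hdrop : ∀ k : ℕ, (∑ f ∈ univ.filter (fun f : Fin N → Option (Fin N) =>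
          IsForest f ∧ (∀ i j, f i = some j → G i j ≠ 0) ∧ (roots f).card = k),
        forestProd (fun i j => G i j) f)
      = ∑ f ∈ univ.filter (fun f : Fin N → Option (Fin N) =>
          IsForest f ∧ (roots f).card = k),
        forestProd (fun i j => G i j) f := by
    intro k
    apply Finset.sum_subset
    · intro f hf
      simp only [mem_filter, mem_univ, true_and] at hf ⊢
      exact ⟨hf.1, hf.2.2⟩
    · intro f hf hnf
      simp only [mem_filter, mem_univ, true_and] at hf hnf
      have hz : ∃ i j, f i = some j ∧ G i j = 0 := by
        by_contra h
        push_neg at h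
        exact hnf ⟨hf.1, fun i j hij => h i j hij, hf.2⟩
      obtain ⟨i, j, hij, hz⟩ := hz
      rw [forestProd]
      apply Finset.prod_eq_zero (mem_univ i)
      rw [hij]
      exact hz
  symm
  calc ∑ k ∈ Finset.range (N + 1), (-lam) ^ k *
        ∑ᶠ f ∈ {f : Fin N → Option (Fin N) |
            IsForest f ∧ (∀ i j, f i = some j → G i j ≠ 0) ∧ (roots f).card = k},
          forestProd (fun i j => G i j) f
      = ∑ k ∈ Finset.range (N + 1),
          ∑ f ∈ (univ.filter (fun f : Fin N → Option (Fin N) => IsForest f)).filter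
              (fun f => (roots f).card = k),
            (-lam) ^ (roots f).card * forestProd (fun i j => G i j) f := by
        refine Finset.sum_congr rfl fun k _ => ?_
        rw [hfin k, hdrop k, Finset.mul_sum, Finset.filter_filter]
        refine Finset.sum_congr rfl fun f hf => ?_
        simp only [mem_filter, mem_univ, true_and] at hf
        rw [hf.2]
    _ = ∑ f ∈ univ.filter (fun f : Fin N → Option (Fin N) => IsForest f),
          (-lam) ^ (roots f).card * forestProd (fun i j => G i j) f := by
        refine Finset.sum_fiberwise_of_maps_to ?_ _
        intro f _
        rw [mem_range]
        have := Finset.card_le_univ (roots f)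
        rw [Fintype.card_fin] at this
        omega
end
end

section
/- Let G be an arbitrary N×N matrix. Form the augmented digraph G† on vertex set {1,...,N,†} whose arcs are the off-diagonal arcs (i,j) with weight g_ij together with arcs (i,†) of weight g_{i†} = -Σ_{j=1}^N g_ij. Then det(λI - G) = Σ_{k=0}^{N} λ^k Σ_{F ∈ F^k_†} π_F, where F^k_† is the set of spanning forests of G† with exactly k+1 trees whose roots include †, and π_F is the product of arc weights of F. -/
open scoped Classical
open Finset

noncomputable section

set_option linter.unusedSectionVars false
set_option linter.dupNamespace false
set_option maxHeartbeats 1000000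

namespace ForestAux

variable {V : Type*} [Fintype V] [DecidableEq V]

/-- `i` lies on a `g`-cycle avoiding `R`. -/
def Cyc (g : V → V) (R : Finset V) (i : V) : Prop :=
  (∃ n, 0 < n ∧ g^[n] i = i) ∧ ∀ m, g^[m] i ∉ R

/-- every `g`-cycle avoiding `R` meets `M`. -/
def NoLoop (g : V → V) (R M : Finset V) : Prop :=
  ∀ i, Cyc g R i → ∃ m, g^[m] i ∈ M

lemma cyc_iterate {g : V → V} {R : Finset V} {i : V} (h : Cyc g R i) (m : ℕ) :
    Cyc g R (g^[m] i) := by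
  obtain ⟨⟨n, hn, hper⟩, havoid⟩ := h
  refine ⟨⟨n, hn, ?_⟩, fun k => ?_⟩
  · rw [← Function.iterate_add_apply, Nat.add_comm, Function.iterate_add_apply, hper]
  · rw [← Function.iterate_add_apply]; exact havoid _

lemma iter_congr {g g' : V → V} {P : V → Prop} (hgg : ∀ j, P j → g j = g' j) {i : V}
    (hP : ∀ m, P (g^[m] i)) : ∀ m, g'^[m] i = g^[m] i := by
  intro m
  induction m with
  | zero => rfl
  | succ m ih =>
    rw [Function.iterate_succ_apply', Function.iterate_succ_apply', ih, ← hgg _ (hP m)]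

/-- `NoLoop` only depends on the values of `g` off `R ∪ M`. -/
lemma noLoop_congr {g g' : V → V} {R M : Finset V}
    (h : ∀ j, j ∉ R → j ∉ M → g j = g' j) (hg : NoLoop g R M) : NoLoop g' R M := by
  intro i hi
  by_contra hcon
  push_neg at hcon
  -- the g'-trajectory of i avoids R and M, hence coincides with the g-trajectory
  obtain ⟨⟨n, hn, hper⟩, havoid⟩ := hi
  have hiter : ∀ m, g^[m] i = g'^[m] i := by
    have := iter_congr (g := g') (g' := g) (P := fun j => j ∉ R ∧ j ∉ M)
      (fun j hj => (h j hj.1 hj.2).symm) (i := i) (fun m => ⟨havoid m, hcon m⟩)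
    exact fun m => (this m)
  have hcyc : Cyc g R i := ⟨⟨n, hn, by rw [hiter]; exact hper⟩, fun m => by rw [hiter]; exact havoid m⟩
  obtain ⟨m, hm⟩ := hg i hcyc
  rw [hiter] at hm
  exact hcon m hm



variable {V : Type*} [Fintype V] [DecidableEq V]

lemma iterate_eq_fixed {σ : Equiv.Perm V} {v : V} (hv : σ v = v) {i : V} :
    ∀ {m : ℕ}, σ^[m] i = v → i = v := by
  intro m
  induction m with
  | zero => exact fun h => h
  | succ m ih =>
    intro h
    rw [Function.iterate_succ_apply'] at h
    exact ih (σ.injective (h.trans hv.symm))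

lemma keyLemma (T : Finset V) (σ : Equiv.Perm V) (hfix : ∀ i, i ∉ T → σ i = i) :
    (∑ M ∈ T.powerset, if ∀ i ∈ T, ∃ m, σ^[m] i ∈ M then (-1 : ℂ) ^ M.card else 0)
      = (-1) ^ T.card * ((Equiv.Perm.sign σ : ℤ) : ℂ) := by
  induction T using Finset.strongInduction generalizing σ with
  | _ T ih =>
  rcases T.eq_empty_or_nonempty with rfl | ⟨v, hv⟩
  · have hσ : σ = 1 := Equiv.ext fun i => hfix i (notMem_empty i)
    subst hσ
    simp
  by_cases hσv : σ v = v
  · -- easy case: v is a fixed point of σ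
    have hvT : T = insert v (T.erase v) := (Finset.insert_erase hv).symm
    rw [hvT, Finset.sum_powerset_insert (Finset.notMem_erase v T)]
    have h1 : ∀ M ∈ (T.erase v).powerset,
        (if ∀ i ∈ insert v (T.erase v), ∃ m, σ^[m] i ∈ M then ((-1:ℂ)) ^ M.card else 0) = 0 := by
      intro M hM
      rw [if_neg]
      intro hcond
      obtain ⟨m, hm⟩ := hcond v (mem_insert_self v _)
      rw [Function.iterate_fixed hσv] at hm
      exact (Finset.notMem_erase v T) (Finset.mem_powerset.1 hM hm)
    have h2 : ∀ M ∈ (T.erase v).powerset,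
        (if ∀ i ∈ insert v (T.erase v), ∃ m, σ^[m] i ∈ insert v M then ((-1:ℂ)) ^ (insert v M).card else 0)
        = -(if ∀ i ∈ T.erase v, ∃ m, σ^[m] i ∈ M then ((-1:ℂ)) ^ M.card else 0) := by
      intro M hM
      have hvM : v ∉ M := fun h => (Finset.notMem_erase v T) (Finset.mem_powerset.1 hM h)
      have hcard : (insert v M).card = M.card + 1 := Finset.card_insert_of_notMem hvM
      have hiff : (∀ i ∈ insert v (T.erase v), ∃ m, σ^[m] i ∈ insert v M)
          ↔ (∀ i ∈ T.erase v, ∃ m, σ^[m] i ∈ M) := by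
        constructor
        · intro h i hi
          obtain ⟨m, hm⟩ := h i (Finset.mem_insert_of_mem hi)
          rcases Finset.mem_insert.1 hm with h' | h'
          · exact absurd (iterate_eq_fixed hσv h') (Finset.ne_of_mem_erase hi)
          · exact ⟨m, h'⟩
        · intro h i hi
          rcases Finset.mem_insert.1 hi with rfl | hi'
          · exact ⟨0, Finset.mem_insert_self _ _⟩
          · obtain ⟨m, hm⟩ := h i hi'
            exact ⟨m, Finset.mem_insert_of_mem hm⟩
      by_cases hcnd : ∀ i ∈ T.erase v, ∃ m, σ^[m] i ∈ M
      · rw [if_pos (hiff.2 hcnd), if_pos hcnd, hcard, pow_succ]; ring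
      · rw [if_neg (fun h => hcnd (hiff.1 h)), if_neg hcnd]; ring
    rw [Finset.sum_congr rfl h1, Finset.sum_congr rfl h2, Finset.sum_const, smul_zero, zero_add,
      Finset.sum_neg_distrib]
    have hfix' : ∀ i, i ∉ T.erase v → σ i = i := by
      intro i hi
      rcases em (i = v) with rfl | hne
      · exact hσv
      · exact hfix i fun hT => hi (Finset.mem_erase.2 ⟨hne, hT⟩)
    rw [ih (T.erase v) (Finset.erase_ssubset hv) σ hfix',
      Finset.card_insert_of_notMem (Finset.notMem_erase v T), pow_succ]
    ring
  · -- hard case: v is moved by σ; remove the cycle of v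
    set c := σ.cycleOf v with hcdef
    set C := c.support with hCdef
    have hvC : v ∈ C := by
      rw [hCdef, Equiv.Perm.mem_support_cycleOf_iff]
      exact ⟨Equiv.Perm.SameCycle.refl _ _, Equiv.Perm.mem_support.2 hσv⟩
    have hmemC : ∀ y, y ∈ C ↔ σ.SameCycle v y := by
      intro y; rw [hCdef, Equiv.Perm.mem_support_cycleOf_iff]
      exact ⟨fun h => h.1, fun h => ⟨h, Equiv.Perm.mem_support.2 hσv⟩⟩
    have hCT : C ⊆ T := by
      intro y hy
      by_contra hyT
      have h2 : y ∈ σ.support := ((hmemC y).1 hy).mem_support_iff.1 (Equiv.Perm.mem_support.2 hσv)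
      exact (Equiv.Perm.mem_support.1 h2) (hfix y hyT)
    have hCapply : ∀ y, y ∈ C ↔ σ y ∈ C := by
      intro y; rw [hmemC, hmemC]
      exact (Equiv.Perm.sameCycle_apply_right).symm
    have hCiter : ∀ (m : ℕ) (y : V), (σ^[m] y ∈ C ↔ y ∈ C) := by
      intro m
      induction m with
      | zero => intro y; exact Iff.rfl
      | succ m ihm =>
        intro y
        rw [Function.iterate_succ_apply, ihm (σ y), ← hCapply]
    have horbit : ∀ i ∈ C, ∀ y ∈ C, ∃ m : ℕ, σ^[m] i = y := by
      intro i hi y hy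
      have hsc : σ.SameCycle i y := ((hmemC i).1 hi).symm.trans ((hmemC y).1 hy)
      obtain ⟨m, _, _, hm⟩ := hsc.exists_pow_eq σ
      exact ⟨m, hm⟩
    set σ' := σ * c⁻¹ with hσ'def
    have hσ'C : ∀ i ∈ C, σ' i = i := by
      intro i hi
      have h1 : c (σ⁻¹ i) = i := by
        rw [hcdef, Equiv.Perm.cycleOf_apply, if_pos (c := σ.SameCycle v (σ⁻¹ i)) (Equiv.Perm.SameCycle.symm_apply_right ((hmemC i).1 hi))]
        exact σ.apply_symm_apply i
      have h2 : c⁻¹ i = σ⁻¹ i := by rw [Equiv.Perm.inv_eq_iff_eq]; exact h1.symm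
      show σ (c⁻¹ i) = i
      rw [h2]; exact σ.apply_symm_apply i
    have hσ'nC : ∀ i, i ∉ C → σ' i = σ i := by
      intro i hi
      have h1 : c i = i := Equiv.Perm.notMem_support.1 hi
      have h2 : c⁻¹ i = i := by rw [Equiv.Perm.inv_eq_iff_eq]; exact h1.symm
      show σ (c⁻¹ i) = σ i
      rw [h2]
    have hmul : σ' * c = σ := by rw [hσ'def, mul_assoc, inv_mul_cancel, mul_one]
    have hsgn : Equiv.Perm.sign σ = Equiv.Perm.sign σ' * Equiv.Perm.sign c := by
      rw [← hmul, map_mul]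
    have hsc : Equiv.Perm.sign c = -(-1) ^ C.card := (σ.isCycle_cycleOf hσv).sign
    have hiter' : ∀ i, i ∉ C → ∀ m : ℕ, σ'^[m] i = σ^[m] i := by
      intro i hi m
      induction m with
      | zero => rfl
      | succ m ihm =>
        have h1 : σ^[m] i ∉ C := fun h => hi ((hCiter m i).1 h)
        rw [Function.iterate_succ_apply', Function.iterate_succ_apply', ihm, hσ'nC _ h1]
    have hfix' : ∀ i, i ∉ T \ C → σ' i = i := by
      intro i hi
      rcases em (i ∈ C) with h | h
      · exact hσ'C i h
      · rw [hσ'nC i h]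
        exact hfix i fun hT => hi (Finset.mem_sdiff.2 ⟨hT, h⟩)
    -- split the sum over M ⊆ T into sums over A ⊆ C and B ⊆ T \ C
    have hsplit : (∑ M ∈ T.powerset, if ∀ i ∈ T, ∃ m, σ^[m] i ∈ M then ((-1:ℂ)) ^ M.card else 0)
        = ∑ p ∈ C.powerset ×ˢ (T \ C).powerset,
            (if p.1.Nonempty then ((-1:ℂ)) ^ p.1.card else 0) *
            (if ∀ i ∈ T \ C, ∃ m, σ'^[m] i ∈ p.2 then ((-1:ℂ)) ^ p.2.card else 0) := by
      refine Finset.sum_nbij' (fun M => (M ∩ C, M \ C)) (fun p => p.1 ∪ p.2) ?_ ?_ ?_ ?_ ?_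
      · intro M hM
        rw [Finset.mem_powerset] at hM
        rw [Finset.mem_product]
        exact ⟨Finset.mem_powerset.2 Finset.inter_subset_right,
          Finset.mem_powerset.2 (Finset.sdiff_subset_sdiff hM le_rfl)⟩
      · intro p hp
        rw [Finset.mem_product, Finset.mem_powerset, Finset.mem_powerset] at hp
        exact Finset.mem_powerset.2
          (Finset.union_subset (hp.1.trans hCT) (hp.2.trans Finset.sdiff_subset))
      · intro M _
        ext x
        simp only [Finset.mem_union, Finset.mem_inter, Finset.mem_sdiff]
        tauto
      · intro p hp
        rw [Finset.mem_product, Finset.mem_powerset, Finset.mem_powerset] at hp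
        have h1 : ∀ x ∈ p.1, x ∈ C := fun x hx => hp.1 hx
        have h2 : ∀ x ∈ p.2, x ∉ C := fun x hx => (Finset.mem_sdiff.1 (hp.2 hx)).2
        have e1 : (p.1 ∪ p.2) ∩ C = p.1 := by
          ext x
          simp only [Finset.mem_inter, Finset.mem_union]
          constructor
          · rintro ⟨h | h, hC⟩
            · exact h
            · exact absurd hC (h2 x h)
          · intro h; exact ⟨Or.inl h, h1 x h⟩
        have e2 : (p.1 ∪ p.2) \ C = p.2 := by
          ext x
          simp only [Finset.mem_sdiff, Finset.mem_union]
          constructor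
          · rintro ⟨h | h, hC⟩
            · exact absurd (h1 x h) hC
            · exact h
          · intro h; exact ⟨Or.inr h, h2 x h⟩
        show ((p.1 ∪ p.2) ∩ C, (p.1 ∪ p.2) \ C) = p
        rw [e1, e2]
      · intro M hM
        rw [Finset.mem_powerset] at hM
        have hcond : (∀ i ∈ T, ∃ m, σ^[m] i ∈ M)
            ↔ ((M ∩ C).Nonempty ∧ ∀ i ∈ T \ C, ∃ m, σ'^[m] i ∈ M \ C) := by
          constructor
          · intro h
            constructor
            · obtain ⟨m, hm⟩ := h v (hCT hvC)
              exact ⟨σ^[m] v, Finset.mem_inter.2 ⟨hm, (hCiter m v).2 hvC⟩⟩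
            · intro i hi
              rw [Finset.mem_sdiff] at hi
              obtain ⟨m, hm⟩ := h i hi.1
              have hnC : σ^[m] i ∉ C := fun h' => hi.2 ((hCiter m i).1 h')
              exact ⟨m, by rw [hiter' i hi.2 m]; exact Finset.mem_sdiff.2 ⟨hm, hnC⟩⟩
          · rintro ⟨⟨y, hy⟩, h2⟩
            intro i hi
            rcases em (i ∈ C) with hiC | hiC
            · rw [Finset.mem_inter] at hy
              obtain ⟨m, hm⟩ := horbit i hiC y hy.2
              exact ⟨m, by rw [hm]; exact hy.1⟩
            · obtain ⟨m, hm⟩ := h2 i (Finset.mem_sdiff.2 ⟨hi, hiC⟩)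
              rw [hiter' i hiC m] at hm
              exact ⟨m, (Finset.mem_sdiff.1 hm).1⟩
        have hcard : M.card = (M ∩ C).card + (M \ C).card :=
          (Finset.card_inter_add_card_sdiff M C).symm
        by_cases hP : (M ∩ C).Nonempty <;> by_cases hQ : ∀ i ∈ T \ C, ∃ m, σ'^[m] i ∈ M \ C
        · rw [if_pos (hcond.2 ⟨hP, hQ⟩), if_pos hP, if_pos hQ, hcard, pow_add]
        · rw [if_neg (fun h => hQ (hcond.1 h).2), if_pos hP, if_neg hQ, mul_zero]
        · rw [if_neg (fun h => hP (hcond.1 h).1), if_neg hP, zero_mul]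
        · rw [if_neg (fun h => hP (hcond.1 h).1), if_neg hP, zero_mul]
    have hsplit2 : (∑ p ∈ C.powerset ×ˢ (T \ C).powerset,
            (if p.1.Nonempty then ((-1:ℂ)) ^ p.1.card else 0) *
            (if ∀ i ∈ T \ C, ∃ m, σ'^[m] i ∈ p.2 then ((-1:ℂ)) ^ p.2.card else 0))
        = (∑ A ∈ C.powerset, if A.Nonempty then ((-1:ℂ)) ^ A.card else 0) *
          (∑ B ∈ (T \ C).powerset, if ∀ i ∈ T \ C, ∃ m, σ'^[m] i ∈ B then ((-1:ℂ)) ^ B.card else 0) := by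
      rw [Finset.sum_product]
      exact (Finset.sum_mul_sum C.powerset ((T \ C).powerset)
        (fun A => if A.Nonempty then ((-1:ℂ)) ^ A.card else 0)
        (fun B => if ∀ i ∈ T \ C, ∃ m, σ'^[m] i ∈ B then ((-1:ℂ)) ^ B.card else 0)).symm
    rw [hsplit, hsplit2]
    have hA : (∑ A ∈ C.powerset, if A.Nonempty then ((-1:ℂ)) ^ A.card else 0) = -1 := by
      have h0 : ∀ A ∈ C.powerset,
          (if A.Nonempty then ((-1:ℂ)) ^ A.card else 0)
            = (-1:ℂ) ^ A.card - (if A = ∅ then 1 else 0) := by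
        intro A _
        rcases A.eq_empty_or_nonempty with rfl | hA
        · simp
        · rw [if_pos hA, if_neg (Finset.nonempty_iff_ne_empty.1 hA), sub_zero]
      rw [Finset.sum_congr rfl h0, Finset.sum_sub_distrib]
      have h1 : (∑ A ∈ C.powerset, ((-1:ℂ)) ^ A.card) = 0 := by
        have hz : (∑ A ∈ C.powerset, ((-1:ℤ)) ^ A.card) = 0 :=
          Finset.sum_powerset_neg_one_pow_card_of_nonempty ⟨v, hvC⟩
        exact_mod_cast hz
      have h2 : (∑ A ∈ C.powerset, if A = ∅ then (1:ℂ) else 0) = 1 := by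
        rw [Finset.sum_ite_eq' C.powerset ∅ (fun _ => (1:ℂ))]
        rw [if_pos (Finset.empty_mem_powerset C)]
      rw [h1, h2]; ring
    rw [hA, ih (T \ C) (Finset.sdiff_ssubset hCT ⟨v, hvC⟩) σ' hfix']
    have hcards : (T \ C).card + C.card = T.card := Finset.card_sdiff_add_card_eq_card hCT
    have hsgnc : ((Equiv.Perm.sign σ : ℤ) : ℂ)
        = ((Equiv.Perm.sign σ' : ℤ) : ℂ) * (-(-1) ^ C.card) := by
      rw [hsgn, hsc]
      push_cast
      ring
    rw [hsgnc, ← hcards, pow_add]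
    have hone : ((-1:ℂ)) ^ (C.card * 2) = 1 := by rw [mul_comm, pow_mul]; norm_num
    ring_nf
    rw [hone, mul_one]


variable {V : Type*} [Fintype V] [DecidableEq V]

lemma noLoop_toggle {u : V → V} {R M : Finset V} {v : V} (hvc : ¬ Cyc u R v)
    (M' : Finset V) (hM' : ∀ x, x ≠ v → (x ∈ M' ↔ x ∈ M)) :
    NoLoop u R M ↔ NoLoop u R M' := by
  constructor <;> intro h i hi
  · obtain ⟨m, hm⟩ := h i hi
    have hne : u^[m] i ≠ v := fun he => hvc (he ▸ cyc_iterate hi m)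
    exact ⟨m, (hM' _ hne).2 hm⟩
  · obtain ⟨m, hm⟩ := h i hi
    have hne : u^[m] i ≠ v := fun he => hvc (he ▸ cyc_iterate hi m)
    exact ⟨m, (hM' _ hne).1 hm⟩

lemma S_zero {u : V → V} {R : Finset V} {v : V} (hvR : v ∉ R) (hvc : ¬ Cyc u R v) :
    (∑ M ∈ Rᶜ.powerset, ((-1:ℂ)) ^ M.card * (if NoLoop u R M then 1 else 0)) = 0 := by
  apply Finset.sum_involution (fun M _ => if v ∈ M then M.erase v else insert v M)
  · intro M hM
    by_cases hvM : v ∈ M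
    · simp only [if_pos hvM]
      have hcard : M.card = (M.erase v).card + 1 := (Finset.card_erase_add_one hvM).symm
      have hnl : NoLoop u R M ↔ NoLoop u R (M.erase v) :=
        noLoop_toggle hvc _ (fun x hx => by
          rw [Finset.mem_erase]; exact ⟨fun h => h.2, fun h => ⟨hx, h⟩⟩)
      by_cases hNL : NoLoop u R M
      · rw [if_pos hNL, if_pos (hnl.1 hNL), hcard, pow_succ]; ring
      · rw [if_neg hNL, if_neg (fun h => hNL (hnl.2 h))]; ring
    · simp only [if_neg hvM]
      have hcard : (insert v M).card = M.card + 1 := Finset.card_insert_of_notMem hvM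
      have hnl : NoLoop u R M ↔ NoLoop u R (insert v M) :=
        noLoop_toggle hvc _ (fun x hx => by
          rw [Finset.mem_insert]
          exact ⟨fun h => h.resolve_left hx, fun h => Or.inr h⟩)
      by_cases hNL : NoLoop u R M
      · rw [if_pos hNL, if_pos (hnl.1 hNL), hcard, pow_succ]; ring
      · rw [if_neg hNL, if_neg (fun h => hNL (hnl.2 h))]; ring
  · intro M hM hne0
    by_cases hvM : v ∈ M
    · rw [if_pos hvM]
      intro he
      rw [← he] at hvM
      exact (Finset.notMem_erase v M) hvM
    · rw [if_neg hvM]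
      intro he
      rw [← he] at hvM
      exact hvM (Finset.mem_insert_self v M)
  · intro M hM
    by_cases hvM : v ∈ M
    · rw [if_pos hvM, if_neg (Finset.notMem_erase v M)]
      exact Finset.insert_erase hvM
    · rw [if_neg hvM, if_pos (Finset.mem_insert_self v M)]
      exact Finset.erase_insert hvM
  · intro M hM
    rw [Finset.mem_powerset] at hM ⊢
    by_cases hvM : v ∈ M
    · rw [if_pos hvM]
      exact (Finset.erase_subset v M).trans hM
    · rw [if_neg hvM]
      exact Finset.insert_subset (Finset.mem_compl.2 hvR) hM

lemma perm_iter_avoid {σ : Equiv.Perm V} {R : Finset V} (hfixR : ∀ i ∈ R, σ i = i)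
    {i : V} (hi : i ∉ R) : ∀ m : ℕ, σ^[m] i ∉ R := by
  intro m
  induction m with
  | zero => exact hi
  | succ m ihm =>
    rw [Function.iterate_succ_apply']
    intro hmem
    have h1 : σ (σ^[m] i) ∈ R := hmem
    have h2 : σ (σ (σ^[m] i)) = σ (σ^[m] i) := hfixR _ h1
    exact ihm (by rw [← σ.injective h2]; exact h1)

lemma perm_cyc {σ : Equiv.Perm V} {R : Finset V} (hfixR : ∀ i ∈ R, σ i = i)
    {i : V} (hi : i ∉ R) : Cyc (⇑σ) R i := by
  refine ⟨⟨orderOf σ, orderOf_pos σ, ?_⟩, perm_iter_avoid hfixR hi⟩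
  have h1 : σ ^ (orderOf σ) = 1 := pow_orderOf_eq_one σ
  show (⇑σ)^[orderOf σ] i = i
  rw [Equiv.Perm.iterate_eq_pow, h1]
  rfl

lemma noLoop_perm_iff {σ : Equiv.Perm V} {R M : Finset V} (hfixR : ∀ i ∈ R, σ i = i) :
    NoLoop (⇑σ) R M ↔ ∀ i ∈ Rᶜ, ∃ m, σ^[m] i ∈ M := by
  constructor
  · intro h i hi
    exact h i (perm_cyc hfixR (Finset.mem_compl.1 hi))
  · intro h i hi
    exact h i (Finset.mem_compl.2 (hi.2 0))

/-- The `M`-sum for a permutation. -/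
lemma S_perm {σ : Equiv.Perm V} {R : Finset V} (hfixR : ∀ i ∈ R, σ i = i) :
    (∑ M ∈ Rᶜ.powerset, ((-1:ℂ)) ^ M.card * (if NoLoop (⇑σ) R M then 1 else 0))
      = (-1) ^ Rᶜ.card * ((Equiv.Perm.sign σ : ℤ) : ℂ) := by
  have hfix : ∀ i, i ∉ Rᶜ → σ i = i := fun i hi => hfixR i (by simpa using hi)
  rw [← keyLemma Rᶜ σ hfix]
  apply Finset.sum_congr rfl
  intro M hM
  rw [noLoop_perm_iff hfixR]
  by_cases h : ∀ i ∈ Rᶜ, ∃ m, σ^[m] i ∈ M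
  · rw [if_pos h, if_pos h, mul_one]
  · rw [if_neg h, if_neg h, mul_zero]

lemma step5 (w : V → V → ℂ) (R : Finset V) :
    (∑ M ∈ Rᶜ.powerset, ((-1:ℂ)) ^ M.card *
       ∑ u : V → V, if (∀ i ∈ R, u i = i) ∧ NoLoop u R M then ∏ i ∈ Rᶜ, w i (u i) else 0)
    = (-1) ^ Rᶜ.card * ∑ σ : Equiv.Perm V,
        (if ∀ i ∈ R, σ i = i then ((Equiv.Perm.sign σ : ℤ) : ℂ) * ∏ i ∈ Rᶜ, w i (σ i) else 0) := by
  -- push the (-1)^M factor inside and swap the sums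
  have e1 : (∑ M ∈ Rᶜ.powerset, ((-1:ℂ)) ^ M.card *
       ∑ u : V → V, if (∀ i ∈ R, u i = i) ∧ NoLoop u R M then ∏ i ∈ Rᶜ, w i (u i) else 0)
      = ∑ u : V → V, if (∀ i ∈ R, u i = i) then
          (∏ i ∈ Rᶜ, w i (u i)) *
            ∑ M ∈ Rᶜ.powerset, ((-1:ℂ)) ^ M.card * (if NoLoop u R M then 1 else 0)
        else 0 := by
    simp_rw [Finset.mul_sum]
    rw [Finset.sum_comm]
    apply Finset.sum_congr rfl
    intro u _
    by_cases hP : ∀ i ∈ R, u i = i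
    · rw [if_pos hP]
      apply Finset.sum_congr rfl
      intro M _
      by_cases hQ : NoLoop u R M
      · rw [if_pos ⟨hP, hQ⟩, if_pos hQ]; ring
      · rw [if_neg (fun h => hQ h.2), if_neg hQ]; ring
    · rw [if_neg hP]
      apply Finset.sum_eq_zero
      intro M _
      rw [if_neg (fun h => hP h.1), mul_zero]
  rw [e1]
  -- drop the terms where some non-root vertex is not on a cycle
  set Good : (V → V) → Prop := fun u => (∀ i ∈ R, u i = i) ∧ ∀ v, v ∉ R → Cyc u R v with hGood
  have e2 : (∑ u : V → V, if (∀ i ∈ R, u i = i) then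
          (∏ i ∈ Rᶜ, w i (u i)) *
            ∑ M ∈ Rᶜ.powerset, ((-1:ℂ)) ^ M.card * (if NoLoop u R M then 1 else 0)
        else 0)
      = ∑ u ∈ Finset.univ.filter Good, (∏ i ∈ Rᶜ, w i (u i)) *
            ∑ M ∈ Rᶜ.powerset, ((-1:ℂ)) ^ M.card * (if NoLoop u R M then 1 else 0) := by
    rw [Finset.sum_filter]
    apply Finset.sum_congr rfl
    intro u _
    by_cases hg : Good u
    · rw [if_pos hg, if_pos hg.1]
    · by_cases hP : ∀ i ∈ R, u i = i
      · rw [if_pos hP, if_neg hg]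
        have hfree : ∃ v, v ∉ R ∧ ¬ Cyc u R v := by
          by_contra hcon
          push_neg at hcon
          exact hg ⟨hP, hcon⟩
        obtain ⟨v, hvR, hvc⟩ := hfree
        rw [S_zero hvR hvc, mul_zero]
      · rw [if_neg hP, if_neg hg]
  rw [e2]
  -- reindex by permutations
  have e3 : (∑ u ∈ Finset.univ.filter Good, (∏ i ∈ Rᶜ, w i (u i)) *
            ∑ M ∈ Rᶜ.powerset, ((-1:ℂ)) ^ M.card * (if NoLoop u R M then 1 else 0))
      = ∑ σ ∈ Finset.univ.filter (fun σ : Equiv.Perm V => ∀ i ∈ R, σ i = i),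
          (∏ i ∈ Rᶜ, w i (σ i)) *
            ∑ M ∈ Rᶜ.powerset, ((-1:ℂ)) ^ M.card * (if NoLoop (⇑σ) R M then 1 else 0) := by
    refine (Finset.sum_nbij' (i := fun σ : Equiv.Perm V => ⇑σ)
      (j := fun u : V → V => if h : Function.Bijective u then Equiv.ofBijective u h else 1)
      ?_ ?_ ?_ ?_ ?_).symm
    · intro σ hσ
      rw [Finset.mem_filter] at hσ ⊢
      exact ⟨Finset.mem_univ _, ⟨hσ.2, fun v hv => perm_cyc hσ.2 hv⟩⟩
    · intro u hu
      rw [Finset.mem_filter] at hu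
      obtain ⟨-, hfixR, hcyc⟩ := hu
      have hsurj : Function.Surjective u := by
        intro y
        by_cases hy : y ∈ R
        · exact ⟨y, hfixR y hy⟩
        · obtain ⟨⟨n, hn, hper⟩, -⟩ := hcyc y hy
          refine ⟨u^[n-1] y, ?_⟩
          have h2 : u (u^[n-1] y) = u^[(n-1)+1] y := (Function.iterate_succ_apply' u (n-1) y).symm
          have h3 : n - 1 + 1 = n := by omega
          rw [h2, h3, hper]
      have hbij : Function.Bijective u := Finite.surjective_iff_bijective.1 hsurj
      show (if h : Function.Bijective u then Equiv.ofBijective u h else 1) ∈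
        Finset.univ.filter (fun σ : Equiv.Perm V => ∀ i ∈ R, σ i = i)
      rw [dif_pos hbij, Finset.mem_filter]
      refine ⟨Finset.mem_univ _, fun i hi => ?_⟩
      show u i = i
      exact hfixR i hi
    · intro σ hσ
      have hbij : Function.Bijective ⇑σ := σ.bijective
      show (if h : Function.Bijective ⇑σ then Equiv.ofBijective ⇑σ h else 1) = σ
      rw [dif_pos hbij]
      exact Equiv.ext fun x => rfl
    · intro u hu
      rw [Finset.mem_filter] at hu
      obtain ⟨-, hfixR, hcyc⟩ := hu
      have hsurj : Function.Surjective u := by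
        intro y
        by_cases hy : y ∈ R
        · exact ⟨y, hfixR y hy⟩
        · obtain ⟨⟨n, hn, hper⟩, -⟩ := hcyc y hy
          refine ⟨u^[n-1] y, ?_⟩
          have h2 : u (u^[n-1] y) = u^[(n-1)+1] y := (Function.iterate_succ_apply' u (n-1) y).symm
          have h3 : n - 1 + 1 = n := by omega
          rw [h2, h3, hper]
      have hbij : Function.Bijective u := Finite.surjective_iff_bijective.1 hsurj
      show ⇑(if h : Function.Bijective u then Equiv.ofBijective u h else 1) = u
      rw [dif_pos hbij]
      rfl
    · intro σ _
      rfl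
  rw [e3]
  rw [Finset.sum_filter, Finset.mul_sum]
  apply Finset.sum_congr rfl
  intro σ _
  by_cases hP : ∀ i ∈ R, σ i = i
  · rw [if_pos hP, if_pos hP, S_perm hP]
    ring
  · rw [if_neg hP, if_neg hP, mul_zero]



/-- The forest encoded by roots `R`, dagger-pointers `M`, and map `g`. -/
def mkForest (R M : Finset V) (g : V → V) : Option V → Option (Option V) :=
  fun v => v.elim none
    (fun i => if i ∈ R then none else if i ∈ M then some none else some (some (g i)))

lemma mkForest_none (R M : Finset V) (g : V → V) : mkForest R M g none = none := rfl

lemma mkForest_root {R M : Finset V} {g : V → V} {i : V} (h : i ∈ R) :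
    mkForest R M g (some i) = none := by simp [mkForest, h]

lemma mkForest_dag {R M : Finset V} {g : V → V} {i : V} (h1 : i ∉ R) (h2 : i ∈ M) :
    mkForest R M g (some i) = some none := by simp [mkForest, h1, h2]

lemma mkForest_arc {R M : Finset V} {g : V → V} {i : V} (h1 : i ∉ R) (h2 : i ∉ M) :
    mkForest R M g (some i) = some (some (g i)) := by simp [mkForest, h1, h2]

/-- total step map, fixing vertices with no out-arc -/
def pstep (f : Option V → Option (Option V)) : Option V → Option V :=
  fun v => (f v).getD v

lemma transGen_iterate {f : Option V → Option (Option V)} {a b : Option V}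
    (h : Relation.TransGen (FStep f) a b) : ∃ n, 0 < n ∧ (pstep f)^[n] a = b := by
  induction h with
  | single h =>
    refine ⟨1, one_pos, ?_⟩
    rw [Function.iterate_one]
    show (f a).getD a = _
    rw [h]; rfl
  | tail hab hbc ih =>
    obtain ⟨n, hn, hstep⟩ := ih
    refine ⟨n + 1, by omega, ?_⟩
    rw [Function.iterate_succ_apply', hstep]
    show (f _).getD _ = _
    rw [hbc]; rfl

lemma isForest_mkForest {R M : Finset V} {g : V → V} (hNL : NoLoop g R M) :
    IsForest (mkForest R M g) := by
  intro v hv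
  set f := mkForest R M g with hf
  have hnone : ∀ b, ¬ FStep f none b := by
    intro b hb
    have : (none : Option (Option V)) = some b := hb
    exact nomatch this
  have hQelim : ∀ j : V, Relation.TransGen (FStep f) (some j) (some j) →
      j ∉ R ∧ j ∉ M ∧ Relation.TransGen (FStep f) (some (g j)) (some (g j)) := by
    intro j hQ
    obtain ⟨b, hstep, hrest⟩ := Relation.TransGen.head'_iff.1 hQ
    have hjR : j ∉ R := by
      intro hjR
      have h1 : f (some j) = none := mkForest_root hjR
      have h2 : f (some j) = some b := hstep
      rw [h1] at h2
      exact nomatch h2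
    have hjM : j ∉ M := by
      intro hjM
      have h1 : f (some j) = some none := mkForest_dag hjR hjM
      have h2 : f (some j) = some b := hstep
      rw [h1] at h2
      have hb : b = none := (Option.some_injective _ h2).symm
      subst hb
      rcases hrest.cases_head with h3 | ⟨c, h3, -⟩
      · exact nomatch h3
      · exact hnone c h3
    have h1 : f (some j) = some (some (g j)) := mkForest_arc hjR hjM
    have h2 : f (some j) = some b := hstep
    rw [h1] at h2
    have hb : b = some (g j) := (Option.some_injective _ h2).symm
    subst hb
    exact ⟨hjR, hjM, Relation.TransGen.tail' hrest hstep⟩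
  cases v with
  | none =>
    obtain ⟨b, hstep, -⟩ := Relation.TransGen.head'_iff.1 hv
    exact hnone b hstep
  | some i =>
    have hQm : ∀ m : ℕ, Relation.TransGen (FStep f) (some (g^[m] i)) (some (g^[m] i)) := by
      intro m
      induction m with
      | zero => exact hv
      | succ m ih =>
        rw [Function.iterate_succ_apply']
        exact (hQelim _ ih).2.2
    have havoid : ∀ m : ℕ, g^[m] i ∉ R ∧ g^[m] i ∉ M :=
      fun m => ⟨(hQelim _ (hQm m)).1, (hQelim _ (hQm m)).2.1⟩
    have hps : ∀ m : ℕ, (pstep f)^[m] (some i) = some (g^[m] i) := by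
      intro m
      induction m with
      | zero => rfl
      | succ m ih =>
        rw [Function.iterate_succ_apply', ih]
        show (f (some (g^[m] i))).getD _ = _
        rw [hf, mkForest_arc (havoid m).1 (havoid m).2]
        rw [Function.iterate_succ_apply']
        rfl
    obtain ⟨n, hn, hiter⟩ := transGen_iterate hv
    rw [hps n] at hiter
    have hper : g^[n] i = i := Option.some_injective _ hiter
    obtain ⟨m, hm⟩ := hNL i ⟨⟨n, hn, hper⟩, fun m => (havoid m).1⟩
    exact (havoid m).2 hm

lemma noLoop_of_isForest {R M : Finset V} {g : V → V}
    (hfor : IsForest (mkForest R M g)) : NoLoop g R M := by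
  intro i hcyc
  by_contra hcon
  push_neg at hcon
  obtain ⟨⟨n, hn, hper⟩, havoid⟩ := hcyc
  set f := mkForest R M g with hf
  have hstep : ∀ m : ℕ, FStep f (some (g^[m] i)) (some (g^[m+1] i)) := by
    intro m
    show f (some (g^[m] i)) = some (some (g^[m+1] i))
    rw [hf, mkForest_arc (havoid m) (hcon m), Function.iterate_succ_apply']
  have hchain : ∀ k : ℕ, 0 < k → Relation.TransGen (FStep f) (some i) (some (g^[k] i)) := by
    intro k hk
    induction k with
    | zero => omega
    | succ k ih =>
      rcases Nat.eq_zero_or_pos k with rfl | hk'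
      · exact Relation.TransGen.single (hstep 0)
      · exact (ih hk').tail (hstep k)
  have h1 := hchain n hn
  rw [hper] at h1
  exact hfor _ h1

lemma mem_roots {f : Option V → Option (Option V)} {v : Option V} :
    v ∈ roots f ↔ f v = none := by
  simp [roots]

lemma roots_mkForest (R M : Finset V) (g : V → V) :
    roots (mkForest R M g) = insert none (R.image some) := by
  ext v
  rw [mem_roots]
  cases v with
  | none => simp [mkForest_none]
  | some i =>
    simp only [Finset.mem_insert, Finset.mem_image]
    constructor
    · intro h
      by_cases hiR : i ∈ R
      · exact Or.inr ⟨i, hiR, rfl⟩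
      · by_cases hiM : i ∈ M
        · rw [mkForest_dag hiR hiM] at h; exact nomatch h
        · rw [mkForest_arc hiR hiM] at h; exact nomatch h
    · rintro (h | ⟨j, hj, hji⟩)
      · exact nomatch h
      · have : j = i := Option.some_injective _ hji
        subst this
        exact mkForest_root hj

lemma card_roots_mkForest (R M : Finset V) (g : V → V) :
    (roots (mkForest R M g)).card = R.card + 1 := by
  rw [roots_mkForest]
  rw [Finset.card_insert_of_notMem (by simp)]
  rw [Finset.card_image_of_injective _ (Option.some_injective V)]

lemma forestProd_mkForest (ww : Option V → Option V → ℂ) (R M : Finset V) (g : V → V) :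
    forestProd ww (mkForest R M g)
      = ∏ i ∈ Rᶜ, (if i ∈ M then ww (some i) none else ww (some i) (some (g i))) := by
  rw [forestProd]
  refine Eq.trans (Finset.prod_subset (Finset.subset_univ ((Rᶜ).image some)) ?_).symm ?_
  · intro v _ hv
    cases v with
    | none => rw [mkForest_none]
    | some i =>
      have hiR : i ∈ R := by
        by_contra hiR
        exact hv (Finset.mem_image_of_mem some (Finset.mem_compl.2 hiR))
      rw [mkForest_root hiR]
  · refine Eq.trans (Finset.prod_image ?_) ?_
    · intro x _ y _ h
      exact Option.some_injective V h
    · apply Finset.prod_congr rfl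
      intro i hi
      have hiR : i ∉ R := Finset.mem_compl.1 hi
      by_cases hiM : i ∈ M
      · rw [mkForest_dag hiR hiM, if_pos hiM]
      · rw [mkForest_arc hiR hiM, if_neg hiM]

lemma noLoop_ne_self {R M : Finset V} {g : V → V} (hNL : NoLoop g R M) {i : V}
    (hiR : i ∉ R) (hiM : i ∉ M) : g i ≠ i := by
  intro hgi
  have hfix : ∀ m : ℕ, g^[m] i = i := fun m => Function.iterate_fixed hgi m
  obtain ⟨m, hm⟩ := hNL i ⟨⟨1, one_pos, by rw [Function.iterate_one]; exact hgi⟩,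
    fun m => by rw [hfix m]; exact hiR⟩
  rw [hfix m] at hm
  exact hiM hm

/-- splitting off the values of `u` on `M`. -/
lemma step4 (w : V → V → ℂ) (R M : Finset V) (hMR : M ⊆ Rᶜ) :
    (∑ u : V → V, if (∀ i ∈ R, u i = i) ∧ NoLoop u R M then ∏ i ∈ Rᶜ, w i (u i) else 0)
    = ∑ g : V → V, if (∀ i ∈ R ∪ M, g i = i) ∧ NoLoop g R M then
        (∏ i ∈ M, ∑ j, w i j) * ∏ i ∈ Rᶜ \ M, w i (g i) else 0 := by
  classical
  have hdisj : ∀ i ∈ M, i ∉ R := fun i hi => Finset.mem_compl.1 (hMR hi)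
  set e := (Equiv.piEquivPiSubtypeProd (fun x : V => x ∈ M) (fun _ => V)).symm with he
  rw [← Equiv.sum_comp e (fun u : V → V =>
    if (∀ i ∈ R, u i = i) ∧ NoLoop u R M then ∏ i ∈ Rᶜ, w i (u i) else 0)]
  -- canonical representative with identity on M
  set gb : ({x : V // ¬ x ∈ M} → V) → (V → V) :=
    fun b i => if h : i ∈ M then i else b ⟨i, h⟩ with hgb
  have key : ∀ (a : {x : V // x ∈ M} → V) (b : {x : V // ¬ x ∈ M} → V),
      (e (a, b) : V → V) = fun i => if h : i ∈ M then a ⟨i, h⟩ else b ⟨i, h⟩ := by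
    intro a b
    rfl
  have hcond : ∀ (a : {x : V // x ∈ M} → V) (b : {x : V // ¬ x ∈ M} → V),
      ((∀ i ∈ R, e (a, b) i = i) ∧ NoLoop (e (a, b)) R M)
        ↔ ((∀ i ∈ R, gb b i = i) ∧ NoLoop (gb b) R M) := by
    intro a b
    have hoff : ∀ i, i ∉ M → e (a, b) i = gb b i := by
      intro i hi
      rw [key, hgb]
      simp only [dif_neg hi]
    constructor
    · rintro ⟨h1, h2⟩
      refine ⟨fun i hi => by rw [← hoff i (fun h => hdisj i h hi)]; exact h1 i hi, ?_⟩
      exact noLoop_congr (fun j hjR hjM => hoff j hjM) h2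
    · rintro ⟨h1, h2⟩
      refine ⟨fun i hi => by rw [hoff i (fun h => hdisj i h hi)]; exact h1 i hi, ?_⟩
      exact noLoop_congr (fun j hjR hjM => (hoff j hjM).symm) h2
  have hval : ∀ (a : {x : V // x ∈ M} → V) (b : {x : V // ¬ x ∈ M} → V),
      (∏ i ∈ Rᶜ, w i (e (a, b) i))
        = (∏ x : {x : V // x ∈ M}, w x.1 (a x)) * ∏ i ∈ Rᶜ \ M, w i (gb b i) := by
    intro a b
    rw [← Finset.prod_sdiff hMR, mul_comm]
    congr 1
    · rw [← Finset.prod_coe_sort M (fun i => w i (e (a, b) i))]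
      apply Finset.prod_congr rfl
      intro x _
      congr 1
      rw [key]
      simp only [dif_pos x.2]
    · apply Finset.prod_congr rfl
      intro i hi
      have hiM : i ∉ M := (Finset.mem_sdiff.1 hi).2
      congr 1
      rw [key, hgb]
      simp only [dif_neg hiM]
  -- compute the inner sum over `a`
  have hmid : (∑ p : ({x : V // x ∈ M} → V) × ({x : V // ¬ x ∈ M} → V),
        if (∀ i ∈ R, e p i = i) ∧ NoLoop (e p) R M then ∏ i ∈ Rᶜ, w i (e p i) else 0)
      = ∑ b : {x : V // ¬ x ∈ M} → V,
          if (∀ i ∈ R, gb b i = i) ∧ NoLoop (gb b) R M then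
            (∏ i ∈ M, ∑ j, w i j) * ∏ i ∈ Rᶜ \ M, w i (gb b i) else 0 := by
    rw [Fintype.sum_prod_type_right]
    apply Finset.sum_congr rfl
    intro b _
    by_cases hc : (∀ i ∈ R, gb b i = i) ∧ NoLoop (gb b) R M
    · rw [if_pos hc]
      have : ∀ a : {x : V // x ∈ M} → V,
          (if (∀ i ∈ R, e (a, b) i = i) ∧ NoLoop (e (a, b)) R M
            then ∏ i ∈ Rᶜ, w i (e (a, b) i) else 0)
          = (∏ x : {x : V // x ∈ M}, w x.1 (a x)) * ∏ i ∈ Rᶜ \ M, w i (gb b i) := by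
        intro a
        rw [if_pos ((hcond a b).2 hc), hval a b]
      rw [Finset.sum_congr rfl (fun a _ => this a), ← Finset.sum_mul]
      congr 1
      rw [← Finset.prod_coe_sort M (fun i => ∑ j, w i j),
        Finset.prod_univ_sum (fun _ : {x : V // x ∈ M} => (Finset.univ : Finset V))
          (fun x j => w x.1 j), Fintype.piFinset_univ]
    · rw [if_neg hc]
      apply Finset.sum_eq_zero
      intro a _
      rw [if_neg (fun h => hc ((hcond a b).1 h))]
  refine hmid.trans ?_
  -- now reindex `b ↦ gb b` against the sum over `g`
  have hgbM : ∀ b, ∀ i ∈ M, gb b i = i := by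
    intro b i hi
    rw [hgb]; simp only [dif_pos hi]
  have hcondid : ∀ b, ((∀ i ∈ R, gb b i = i) ∧ NoLoop (gb b) R M)
      ↔ ((∀ i ∈ R ∪ M, gb b i = i) ∧ NoLoop (gb b) R M) := by
    intro b
    constructor
    · rintro ⟨h1, h2⟩
      refine ⟨fun i hi => ?_, h2⟩
      rcases Finset.mem_union.1 hi with h | h
      · exact h1 i h
      · exact hgbM b i h
    · rintro ⟨h1, h2⟩
      exact ⟨fun i hi => h1 i (Finset.mem_union_left _ hi), h2⟩
  rw [Finset.sum_congr rfl (fun b (_ : b ∈ Finset.univ) => by rw [if_congr (hcondid b) rfl rfl])]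
  -- bijection between b's and g's that are the identity on M
  rw [← Finset.sum_filter_add_sum_filter_not Finset.univ
    (fun g : V → V => (∀ i ∈ R ∪ M, g i = i) ∧ NoLoop g R M)]
  have hzero : (∑ g ∈ Finset.univ.filter
      (fun g : V → V => ¬ ((∀ i ∈ R ∪ M, g i = i) ∧ NoLoop g R M)),
        if (∀ i ∈ R ∪ M, g i = i) ∧ NoLoop g R M then
          (∏ i ∈ M, ∑ j, w i j) * ∏ i ∈ Rᶜ \ M, w i (g i) else 0) = 0 := by
    apply Finset.sum_eq_zero
    intro g hg
    rw [Finset.mem_filter] at hg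
    rw [if_neg hg.2]
  rw [hzero, add_zero]
  have hfilt : (∑ g ∈ Finset.univ.filter
      (fun g : V → V => (∀ i ∈ R ∪ M, g i = i) ∧ NoLoop g R M),
        if (∀ i ∈ R ∪ M, g i = i) ∧ NoLoop g R M then
          (∏ i ∈ M, ∑ j, w i j) * ∏ i ∈ Rᶜ \ M, w i (g i) else 0)
      = ∑ g ∈ Finset.univ.filter
      (fun g : V → V => (∀ i ∈ R ∪ M, g i = i) ∧ NoLoop g R M),
        (∏ i ∈ M, ∑ j, w i j) * ∏ i ∈ Rᶜ \ M, w i (g i) := by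
    apply Finset.sum_congr rfl
    intro g hg
    rw [Finset.mem_filter] at hg
    rw [if_pos hg.2]
  rw [hfilt]
  -- finally, the b-sum equals the filtered g-sum
  rw [← Finset.sum_filter]
  refine Finset.sum_nbij' (i := gb) (j := fun g (x : {x : V // ¬ x ∈ M}) => g x.1)
    ?_ ?_ ?_ ?_ ?_
  · intro b hb
    rw [Finset.mem_filter] at hb ⊢
    exact ⟨Finset.mem_univ _, hb.2⟩
  · intro g hg
    rw [Finset.mem_filter] at hg ⊢
    refine ⟨Finset.mem_univ _, ?_⟩
    have hgid : gb (fun x : {x : V // ¬ x ∈ M} => g x.1) = g := by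
      funext i
      rw [hgb]
      by_cases hi : i ∈ M
      · simp only [dif_pos hi]
        exact (hg.2.1 i (Finset.mem_union_right _ hi)).symm
      · simp only [dif_neg hi]
    rw [hgid]
    exact hg.2
  · intro b hb
    funext x
    rw [hgb]
    simp only [dif_neg x.2]
  · intro g hg
    rw [Finset.mem_filter] at hg
    funext i
    rw [hgb]
    by_cases hi : i ∈ M
    · simp only [dif_pos hi]
      exact (hg.2.1 i (Finset.mem_union_right _ hi)).symm
    · simp only [dif_neg hi]
  · intro b hb
    rfl

lemma mkForest_recover {f : Option V → Option (Option V)} (hf : f none = none) :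
    mkForest (Finset.univ.filter (fun i : V => f (some i) = none))
      (Finset.univ.filter (fun i : V => f (some i) = some none))
      (fun i : V => match f (some i) with | some (some j) => j | _ => i) = f := by
  funext v
  cases v with
  | none => rw [mkForest_none, hf]
  | some i =>
    cases hfi : f (some i) with
    | none =>
      exact mkForest_root (Finset.mem_filter.2 ⟨Finset.mem_univ i, hfi⟩)
    | some o =>
      cases o with
      | none =>
        have h1 : i ∉ Finset.univ.filter (fun i : V => f (some i) = none) := by
          rw [Finset.mem_filter]
          rintro ⟨-, h⟩
          rw [hfi] at h
          exact nomatch h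
        have h2 : i ∈ Finset.univ.filter (fun i : V => f (some i) = some none) :=
          Finset.mem_filter.2 ⟨Finset.mem_univ i, hfi⟩
        exact mkForest_dag h1 h2
      | some jj =>
        have h1 : i ∉ Finset.univ.filter (fun i : V => f (some i) = none) := by
          rw [Finset.mem_filter]
          rintro ⟨-, h⟩
          rw [hfi] at h
          exact nomatch h
        have h2 : i ∉ Finset.univ.filter (fun i : V => f (some i) = some none) := by
          rw [Finset.mem_filter]
          rintro ⟨-, h⟩
          rw [hfi] at h
          exact nomatch h
        refine (mkForest_arc h1 h2).trans ?_
        rw [hfi]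

/-- generic dagger weights built from `w`. -/
def dw (w : V → V → ℂ) : Option V → Option V → ℂ
  | some i, some j => if i = j then 0 else w i j
  | some i, none => -(∑ j, w i j)
  | none, _ => 0

lemma dw_some_some (w : V → V → ℂ) (i j : V) :
    dw w (some i) (some j) = if i = j then 0 else w i j := rfl

lemma dw_some_none (w : V → V → ℂ) (i : V) : dw w (some i) none = -(∑ j, w i j) := rfl

theorem main_generic (w : V → V → ℂ) (lam : ℂ) :
    (∑ σ : Equiv.Perm V, ((Equiv.Perm.sign σ : ℤ) : ℂ) *
        ∏ i : V, ((if σ i = i then lam else 0) - w i (σ i)))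
    = ∑ f ∈ Finset.univ.filter
        (fun f : Option V → Option (Option V) => IsForest f ∧ f none = none),
        lam ^ ((roots f).card - 1) * forestProd (dw w) f := by
  classical
  have e1 : ∀ σ : Equiv.Perm V,
      (∏ i : V, ((if σ i = i then lam else 0) - w i (σ i)))
      = ∑ R : Finset V, (if ∀ i ∈ R, σ i = i then lam ^ R.card else 0) *
          ((-1) ^ Rᶜ.card * ∏ i ∈ Rᶜ, w i (σ i)) := by
    intro σ
    have h1 : (∏ i : V, ((if σ i = i then lam else 0) - w i (σ i)))
        = ∏ i ∈ Finset.univ, ((if σ i = i then lam else 0) + (- w i (σ i))) := by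
      apply Finset.prod_congr rfl
      intro i _
      ring
    rw [h1, Finset.prod_add, Finset.powerset_univ]
    apply Finset.sum_congr rfl
    intro R _
    congr 1
    · by_cases hR : ∀ i ∈ R, σ i = i
      · rw [if_pos hR, Finset.prod_congr rfl (fun i hi => if_pos (hR i hi)), Finset.prod_const]
      · rw [if_neg hR]
        push_neg at hR
        obtain ⟨i, hiR, hi⟩ := hR
        exact Finset.prod_eq_zero hiR (if_neg hi)
    · rw [← Finset.compl_eq_univ_sdiff]
      calc (∏ i ∈ Rᶜ, -w i (σ i)) = ∏ i ∈ Rᶜ, (-1) * w i (σ i) := by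
            apply Finset.prod_congr rfl; intro i _; ring
        _ = (-1) ^ Rᶜ.card * ∏ i ∈ Rᶜ, w i (σ i) := by
            rw [Finset.prod_mul_distrib, Finset.prod_const]
  have e2 : (∑ σ : Equiv.Perm V, ((Equiv.Perm.sign σ : ℤ) : ℂ) *
        ∏ i : V, ((if σ i = i then lam else 0) - w i (σ i)))
      = ∑ R : Finset V, lam ^ R.card * ((-1) ^ Rᶜ.card *
          ∑ σ : Equiv.Perm V, (if ∀ i ∈ R, σ i = i then
            ((Equiv.Perm.sign σ : ℤ) : ℂ) * ∏ i ∈ Rᶜ, w i (σ i) else 0)) := by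
    rw [Finset.sum_congr rfl (fun σ (_ : σ ∈ Finset.univ) => by rw [e1 σ, Finset.mul_sum])]
    rw [Finset.sum_comm]
    apply Finset.sum_congr rfl
    intro R _
    rw [Finset.mul_sum, Finset.mul_sum]
    apply Finset.sum_congr rfl
    intro σ _
    by_cases hR : ∀ i ∈ R, σ i = i
    · rw [if_pos hR, if_pos hR]; ring
    · rw [if_neg hR, if_neg hR]; ring
  have e3 : ∀ R : Finset V,
      ((-1:ℂ)) ^ Rᶜ.card * (∑ σ : Equiv.Perm V,
        (if ∀ i ∈ R, σ i = i then ((Equiv.Perm.sign σ : ℤ) : ℂ) * ∏ i ∈ Rᶜ, w i (σ i) else 0))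
      = ∑ M ∈ Rᶜ.powerset, ((-1:ℂ)) ^ M.card *
          ∑ g : V → V, if (∀ i ∈ R ∪ M, g i = i) ∧ NoLoop g R M then
            (∏ i ∈ M, ∑ j, w i j) * ∏ i ∈ Rᶜ \ M, w i (g i) else 0 := by
    intro R
    rw [← step5 w R]
    apply Finset.sum_congr rfl
    intro M hM
    rw [step4 w R M (Finset.mem_powerset.1 hM)]
  rw [e2, Finset.sum_congr rfl (fun R (_ : R ∈ Finset.univ) => by rw [e3 R])]
  -- pack the triple sum into one finset
  set P : Finset V × Finset V × (V → V) → Prop := fun p =>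
    p.2.1 ⊆ p.1ᶜ ∧ (∀ i ∈ p.1 ∪ p.2.1, p.2.2 i = i) ∧ NoLoop p.2.2 p.1 p.2.1 with hP
  have e4 : (∑ R : Finset V, lam ^ R.card * ∑ M ∈ Rᶜ.powerset, ((-1:ℂ)) ^ M.card *
          ∑ g : V → V, if (∀ i ∈ R ∪ M, g i = i) ∧ NoLoop g R M then
            (∏ i ∈ M, ∑ j, w i j) * ∏ i ∈ Rᶜ \ M, w i (g i) else 0)
      = ∑ p ∈ (Finset.univ ×ˢ Finset.univ ×ˢ Finset.univ :
            Finset (Finset V × Finset V × (V → V))).filter P,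
          lam ^ p.1.card * (((-1:ℂ)) ^ p.2.1.card *
            ((∏ i ∈ p.2.1, ∑ j, w i j) * ∏ i ∈ p.1ᶜ \ p.2.1, w i (p.2.2 i))) := by
    rw [Finset.sum_filter, Finset.sum_product]
    apply Finset.sum_congr rfl
    intro R _
    rw [Finset.sum_product]
    have hps : Rᶜ.powerset = Finset.univ.filter (fun M : Finset V => M ⊆ Rᶜ) := by
      ext M
      simp [Finset.mem_powerset]
    rw [hps, Finset.sum_filter, Finset.mul_sum]
    apply Finset.sum_congr rfl
    intro M _
    by_cases hMR : M ⊆ Rᶜ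
    · rw [if_pos hMR, Finset.mul_sum, Finset.mul_sum]
      apply Finset.sum_congr rfl
      intro g _
      by_cases hc : (∀ i ∈ R ∪ M, g i = i) ∧ NoLoop g R M
      · rw [if_pos hc, if_pos (show P (R, M, g) from ⟨hMR, hc.1, hc.2⟩)]
      · rw [if_neg hc, if_neg (show ¬ P (R, M, g) from fun h => hc ⟨h.2.1, h.2.2⟩)]
        ring
    · rw [if_neg hMR, mul_zero]
      symm
      apply Finset.sum_eq_zero
      intro g _
      rw [if_neg (show ¬ P (R, M, g) from fun h => hMR h.1)]
  rw [e4]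
  -- the bijection with forests
  refine Finset.sum_nbij' (i := fun p => mkForest p.1 p.2.1 p.2.2)
    (j := fun f => (Finset.univ.filter (fun i : V => f (some i) = none),
                    Finset.univ.filter (fun i : V => f (some i) = some none),
                    fun i : V => match f (some i) with | some (some j) => j | _ => i))
    ?_ ?_ ?_ ?_ ?_
  · intro p hp
    rw [Finset.mem_filter] at hp ⊢
    exact ⟨Finset.mem_univ _, isForest_mkForest hp.2.2.2, mkForest_none _ _ _⟩
  · intro f hf
    rw [Finset.mem_filter] at hf
    obtain ⟨-, hfor, hnone⟩ := hf
    rw [Finset.mem_filter, hP]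
    dsimp only
    refine ⟨by simp [Finset.mem_product], ?_, ?_, ?_⟩
    · intro i hi
      rw [Finset.mem_filter] at hi
      rw [Finset.mem_compl, Finset.mem_filter]
      rintro ⟨-, h⟩
      rw [hi.2] at h
      exact nomatch h
    · intro i hi
      rcases Finset.mem_union.1 hi with h | h
      · rw [Finset.mem_filter] at h
        rw [h.2]
      · rw [Finset.mem_filter] at h
        rw [h.2]
    · have hrec := mkForest_recover (f := f) hnone
      rw [← hrec] at hfor
      exact noLoop_of_isForest hfor
  · intro p hp
    rw [Finset.mem_filter, hP] at hp
    obtain ⟨-, hMR, hid, hNL⟩ := hp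
    obtain ⟨R, M, g⟩ := p
    simp only at hMR hid hNL ⊢
    refine Prod.ext ?_ (Prod.ext ?_ ?_)
    · show Finset.univ.filter (fun i : V => mkForest R M g (some i) = none) = R
      ext i
      rw [Finset.mem_filter]
      constructor
      · rintro ⟨-, h⟩
        by_contra hiR
        by_cases hiM : i ∈ M
        · rw [mkForest_dag hiR hiM] at h
          exact nomatch h
        · rw [mkForest_arc hiR hiM] at h
          exact nomatch h
      · intro h
        exact ⟨Finset.mem_univ _, mkForest_root h⟩
    · show Finset.univ.filter (fun i : V => mkForest R M g (some i) = some none) = M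
      ext i
      rw [Finset.mem_filter]
      constructor
      · rintro ⟨-, h⟩
        by_cases hiR : i ∈ R
        · rw [mkForest_root hiR] at h
          exact nomatch h
        · by_cases hiM : i ∈ M
          · exact hiM
          · rw [mkForest_arc hiR hiM] at h
            exact nomatch h
      · intro h
        have hiR : i ∉ R := Finset.mem_compl.1 (hMR h)
        exact ⟨Finset.mem_univ _, mkForest_dag hiR h⟩
    · show (fun i : V => match mkForest R M g (some i) with | some (some j) => j | _ => i) = g
      funext i
      by_cases hiR : i ∈ R
      · rw [mkForest_root hiR]
        exact (hid i (Finset.mem_union_left _ hiR)).symm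
      · by_cases hiM : i ∈ M
        · rw [mkForest_dag hiR hiM]
          exact (hid i (Finset.mem_union_right _ hiM)).symm
        · rw [mkForest_arc hiR hiM]
  · intro f hf
    rw [Finset.mem_filter] at hf
    exact mkForest_recover hf.2.2
  · intro p hp
    rw [Finset.mem_filter, hP] at hp
    obtain ⟨-, hMR, hid, hNL⟩ := hp
    obtain ⟨R, M, g⟩ := p
    simp only at hMR hid hNL ⊢
    rw [card_roots_mkForest, Nat.add_sub_cancel, forestProd_mkForest]
    have hsplit : (∏ i ∈ Rᶜ, (if i ∈ M then dw w (some i) none else dw w (some i) (some (g i))))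
        = (∏ i ∈ Rᶜ \ M, w i (g i)) * ((-1) ^ M.card * ∏ i ∈ M, ∑ j, w i j) := by
      rw [← Finset.prod_sdiff hMR]
      congr 1
      · apply Finset.prod_congr rfl
        intro i hi
        rw [Finset.mem_sdiff] at hi
        have hiR : i ∉ R := Finset.mem_compl.1 hi.1
        rw [if_neg hi.2, dw_some_some,
          if_neg (fun h => noLoop_ne_self hNL hiR hi.2 h.symm)]
      · calc (∏ i ∈ M, (if i ∈ M then dw w (some i) none else dw w (some i) (some (g i))))
            = ∏ i ∈ M, (-1) * ∑ j, w i j := by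
              apply Finset.prod_congr rfl
              intro i hi
              rw [if_pos hi, dw_some_none]
              ring
          _ = (-1) ^ M.card * ∏ i ∈ M, ∑ j, w i j := by
              rw [Finset.prod_mul_distrib, Finset.prod_const]
    rw [hsplit]
    ring

end ForestAux

/-- Theorem 1: the characteristic polynomial of an arbitrary matrix G expressed
through spanning forests of the augmented digraph G† with k+1 trees whose roots
include †. -/
theorem stmt2 {N : ℕ} (G : Matrix (Fin N) (Fin N) ℂ) (lam : ℂ) :
    (lam • (1 : Matrix (Fin N) (Fin N) ℂ) - G).det =
      ∑ k ∈ Finset.range (N + 1), lam ^ k *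
        ∑ᶠ f ∈ {f : Option (Fin N) → Option (Option (Fin N)) |
            IsForest f ∧ f none = none ∧ (roots f).card = k + 1},
          forestProd (daggerWeight G) f := by
  classical
  have hdw : daggerWeight G = ForestAux.dw (fun i j => G i j) := by
    funext v u
    cases v <;> cases u <;> rfl
  have hdet : (lam • (1 : Matrix (Fin N) (Fin N) ℂ) - G).det
      = ∑ σ : Equiv.Perm (Fin N), ((Equiv.Perm.sign σ : ℤ) : ℂ) *
          ∏ i : Fin N, ((if σ i = i then lam else 0) - G i (σ i)) := by
    rw [← Matrix.det_transpose, Matrix.det_apply']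
    apply Finset.sum_congr rfl
    intro σ _
    congr 1
    apply Finset.prod_congr rfl
    intro i _
    rw [Matrix.transpose_apply, Matrix.sub_apply, Matrix.smul_apply, Matrix.one_apply,
      smul_eq_mul]
    by_cases h : σ i = i
    · rw [if_pos h.symm, if_pos h, mul_one]
    · rw [if_neg (fun he => h he.symm), if_neg h, mul_zero]
  have hRHS : (∑ k ∈ Finset.range (N + 1), lam ^ k *
        ∑ᶠ f ∈ {f : Option (Fin N) → Option (Option (Fin N)) |
            IsForest f ∧ f none = none ∧ (roots f).card = k + 1},
          forestProd (daggerWeight G) f)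
      = ∑ f ∈ Finset.univ.filter (fun f : Option (Fin N) → Option (Option (Fin N)) =>
            IsForest f ∧ f none = none),
          lam ^ ((roots f).card - 1) * forestProd (daggerWeight G) f := by
    have h1 : ∀ k : ℕ, (∑ᶠ f ∈ {f : Option (Fin N) → Option (Option (Fin N)) |
            IsForest f ∧ f none = none ∧ (roots f).card = k + 1},
          forestProd (daggerWeight G) f)
        = ∑ f ∈ Finset.univ.filter (fun f : Option (Fin N) → Option (Option (Fin N)) =>
            IsForest f ∧ f none = none ∧ (roots f).card = k + 1),
            forestProd (daggerWeight G) f := by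
      intro k
      have hset : {f : Option (Fin N) → Option (Option (Fin N)) |
          IsForest f ∧ f none = none ∧ (roots f).card = k + 1}
          = ↑(Finset.univ.filter (fun f : Option (Fin N) → Option (Option (Fin N)) =>
              IsForest f ∧ f none = none ∧ (roots f).card = k + 1)) := by
        ext f
        simp
      rw [hset, finsum_mem_coe_finset]
    rw [Finset.sum_congr rfl (fun k (_ : k ∈ Finset.range (N+1)) => by rw [h1 k])]
    have hmaps : ∀ f ∈ Finset.univ.filter
        (fun f : Option (Fin N) → Option (Option (Fin N)) => IsForest f ∧ f none = none),
        (roots f).card - 1 ∈ Finset.range (N + 1) := by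
      intro f _
      have hle : (roots f).card ≤ N + 1 := by
        have h2 : (roots f).card ≤ (Finset.univ : Finset (Option (Fin N))).card :=
          Finset.card_le_card (Finset.subset_univ _)
        rwa [Finset.card_univ, Fintype.card_option, Fintype.card_fin] at h2
      rw [Finset.mem_range]
      omega
    rw [← Finset.sum_fiberwise_of_maps_to hmaps
      (fun f => lam ^ ((roots f).card - 1) * forestProd (daggerWeight G) f)]
    apply Finset.sum_congr rfl
    intro k _
    have hfilt : Finset.univ.filter (fun f : Option (Fin N) → Option (Option (Fin N)) =>
            IsForest f ∧ f none = none ∧ (roots f).card = k + 1)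
        = (Finset.univ.filter (fun f : Option (Fin N) → Option (Option (Fin N)) =>
            IsForest f ∧ f none = none)).filter (fun f => (roots f).card - 1 = k) := by
      ext f
      simp only [Finset.mem_filter, Finset.mem_univ, true_and, and_assoc]
      constructor
      · rintro ⟨h1, h2, h3⟩
        exact ⟨h1, h2, by omega⟩
      · rintro ⟨h1, h2, h3⟩
        have hpos : 0 < (roots f).card :=
          Finset.card_pos.2 ⟨none, ForestAux.mem_roots.2 h2⟩
        exact ⟨h1, h2, by omega⟩
    rw [Finset.mul_sum, hfilt]
    apply Finset.sum_congr rfl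
    intro f hf
    rw [Finset.mem_filter] at hf
    rw [hf.2]
  rw [hdet, hRHS, hdw]
  exact ForestAux.main_generic (fun i j => G i j) lam
end
end

section
/- Let G be an N×N matrix and R ⊆ {1,...,N}. Let G_RR be the principal submatrix of G obtained by deleting the rows and columns indexed by R. Then det G_RR = (-1)^{N-|R|} Σ_{F ∈ F_{ {†}∪R }} π_F, where F_{ {†}∪R } is the set of spanning forests of the augmented digraph G† whose set of roots is exactly {†} ∪ R. -/
open scoped Classical
open Finset

noncomputable section

set_option linter.unusedSectionVars false
set_option linter.unusedVariables false
set_option maxHeartbeats 1000000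



section Core
variable {U T : Type*} [Fintype U] [DecidableEq U] [Fintype T]

/-- Step relation of a function `g : U → T` through an embedding `e`. -/
def StepE (e g : U → T) (a b : U) : Prop := g a = e b

lemma sfun_spec (e g : U → T) (he : Function.Injective e) {u b : U}
    (h : StepE e g u b) :
    (fun u => if h : ∃ b, g u = e b then h.choose else u) u = b := by
  have hex : ∃ b, g u = e b := ⟨b, h⟩
  simp only [hex, dif_pos]
  exact he (hex.choose_spec.symm.trans h)

lemma K_acyclic (e g : U → T)
    (hg : ∀ a, ¬ Relation.TransGen (StepE e g) a a) :
    (∑ σ : Equiv.Perm U, ((Equiv.Perm.sign σ : ℤ) : ℂ) *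
      ∏ u, (if σ u = u then (1:ℂ) else if g u = e (σ u) then -1 else 0)) = 1 := by
  rw [Finset.sum_eq_single (1 : Equiv.Perm U)]
  · simp
  · intro σ _ hσ
    by_cases hall : ∀ u, σ u ≠ u → g u = e (σ u)
    · exfalso
      obtain ⟨u0, hu0⟩ : ∃ u, σ u ≠ u := by
        by_contra h
        push_neg at h
        exact hσ (Equiv.ext h)
      have key : ∀ k : ℕ, Relation.TransGen (StepE e g) u0 ((σ ^ (k+1)) u0) := by
        intro k
        induction k with
        | zero =>
          have : StepE e g u0 (σ u0) := hall u0 hu0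
          simpa using Relation.TransGen.single this
        | succ n ih =>
          have hm : σ ((σ ^ (n+1)) u0) ≠ (σ ^ (n+1)) u0 := by
            intro h
            have hcomm : σ ((σ ^ (n+1)) u0) = (σ ^ (n+1)) (σ u0) := by
              have : σ * σ ^ (n+1) = σ ^ (n+1) * σ := ((Commute.self_pow σ (n+1)).symm : Commute _ _).eq.symm
              calc σ ((σ ^ (n+1)) u0) = (σ * σ ^ (n+1)) u0 := rfl
                _ = (σ ^ (n+1) * σ) u0 := by rw [this]
                _ = (σ ^ (n+1)) (σ u0) := rfl
            rw [hcomm] at h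
            exact hu0 ((σ ^ (n+1)).injective h)
          have hstep : StepE e g ((σ ^ (n+1)) u0) ((σ ^ (n+2)) u0) := by
            have := hall _ hm
            have h2 : σ ((σ ^ (n+1)) u0) = (σ ^ (n+2)) u0 := by
              calc σ ((σ ^ (n+1)) u0) = (σ * σ ^ (n+1)) u0 := rfl
                _ = (σ ^ (n+2)) u0 := by rw [← pow_succ']
            rwa [h2] at this
          exact ih.tail hstep
      have hpos : 0 < orderOf σ := orderOf_pos σ
      have := key (orderOf σ - 1)
      rw [Nat.sub_add_cancel hpos, pow_orderOf_eq_one] at this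
      exact hg u0 (by simpa using this)
    · push_neg at hall
      obtain ⟨u, hmoved, hne⟩ := hall
      have : (if σ u = u then (1:ℂ) else if g u = e (σ u) then -1 else 0) = 0 := by
        simp [hmoved, hne]
      rw [Finset.prod_eq_zero (Finset.mem_univ u) this, mul_zero]
  · intro h
    exact absurd (Finset.mem_univ _) h

end Core

section Core2
variable {U T : Type*} [Fintype U] [DecidableEq U] [Fintype T]

lemma transGen_iterate_s4 (e g : U → T) (he : Function.Injective e) {a b : U}
    (h : Relation.TransGen (StepE e g) a b) :
    ∃ k : ℕ, (fun u => if h : ∃ b, g u = e b then h.choose else u)^[k+1] a = b := by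
  induction h with
  | single h => exact ⟨0, by simpa using sfun_spec e g he h⟩
  | tail hab hbc ih =>
    obtain ⟨k, hk⟩ := ih
    exact ⟨k+1, by rw [Function.iterate_succ_apply', hk]; exact sfun_spec e g he hbc⟩

lemma pred_unique (e g : U → T) (he : Function.Injective e) {v b1 b2 : U}
    (h1 : Relation.TransGen (StepE e g) b1 b1) (h2 : Relation.TransGen (StepE e g) b2 b2)
    (s1 : StepE e g b1 v) (s2 : StepE e g b2 v) : b1 = b2 := by
  set s : U → U := fun u => if h : ∃ b, g u = e b then h.choose else u with hs
  obtain ⟨q1, hq1⟩ := transGen_iterate_s4 e g he h1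
  obtain ⟨q2, hq2⟩ := transGen_iterate_s4 e g he h2
  have hsb1 : s b1 = v := sfun_spec e g he s1
  have hsb2 : s b2 = v := sfun_spec e g he s2
  have hb1 : s^[q1] v = b1 := by
    have h' : s^[q1] v = s^[q1+1] b1 := by rw [← hsb1, ← Function.iterate_succ_apply]
    rw [h', hq1]
  have hb2 : s^[q2] v = b2 := by
    have h' : s^[q2] v = s^[q2+1] b2 := by rw [← hsb2, ← Function.iterate_succ_apply]
    rw [h', hq2]
  have hv1 : s^[q1+1] v = v := by
    have h' : s^[q1+1] v = s^[q1+1+1] b1 := by rw [← hsb1, ← Function.iterate_succ_apply]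
    rw [h', Function.iterate_succ_apply', hq1, hsb1]
  have hv2 : s^[q2+1] v = v := by
    have h' : s^[q2+1] v = s^[q2+1+1] b2 := by rw [← hsb2, ← Function.iterate_succ_apply]
    rw [h', Function.iterate_succ_apply', hq2, hsb2]
  have hmul : ∀ p : ℕ, s^[p+1] v = v → ∀ k : ℕ, s^[(p+1)*k] v = v := by
    intro p hp k
    induction k with
    | zero => simp
    | succ n ih =>
      have : (p+1)*(n+1) = (p+1)*n + (p+1) := by ring
      rw [this, Function.iterate_add_apply, hp, ih]
  have e1 : b1 = s^[q1 + (q1+1)*q2] v := by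
    rw [Function.iterate_add_apply, hmul q1 hv1 q2, hb1]
  have e2 : b2 = s^[q2 + (q2+1)*q1] v := by
    rw [Function.iterate_add_apply, hmul q2 hv2 q1, hb2]
  rw [e1, e2]
  congr 1
  ring

lemma K_cyclic (e g : U → T) (he : Function.Injective e)
    (hnl : ∀ u, g u ≠ e u) (a0 : U) (h0 : Relation.TransGen (StepE e g) a0 a0) :
    (∑ σ : Equiv.Perm U, ((Equiv.Perm.sign σ : ℤ) : ℂ) *
      ∏ u, (if σ u = u then (1:ℂ) else if g u = e (σ u) then -1 else 0)) = 0 := by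
  set M : Matrix U U ℂ := Matrix.of (fun u v =>
    (if u = v then (1:ℂ) else 0) - (if g u = e v then (1:ℂ) else 0)) with hM
  have hdet : (∑ σ : Equiv.Perm U, ((Equiv.Perm.sign σ : ℤ) : ℂ) *
      ∏ u, (if σ u = u then (1:ℂ) else if g u = e (σ u) then -1 else 0)) = M.transpose.det := by
    rw [Matrix.det_apply']
    refine Finset.sum_congr rfl fun σ _ => ?_
    congr 1
    refine Finset.prod_congr rfl fun u _ => ?_
    show _ = M u (σ u)
    rw [hM]
    simp only [Matrix.of_apply]
    by_cases h : σ u = u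
    · simp [h, hnl u]
    · have h' : ¬ (u = σ u) := fun hh => h hh.symm
      by_cases h2 : g u = e (σ u) <;> simp [h, h', h2]
  rw [hdet, Matrix.det_transpose]
  apply Matrix.exists_vecMul_eq_zero_iff.mp
  refine ⟨fun u => if Relation.TransGen (StepE e g) u u then (1:ℂ) else 0, ?_, ?_⟩
  · intro hx
    have := congrFun hx a0
    simp [h0] at this
  · funext v
    have hvm : Matrix.vecMul (fun u => if Relation.TransGen (StepE e g) u u then (1:ℂ) else 0) M v
        = ∑ u, (if Relation.TransGen (StepE e g) u u then (1:ℂ) else 0) * M u v := by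
      simp [Matrix.vecMul, dotProduct]
    rw [Pi.zero_apply, hvm]
    have hsplit : ∀ u, (if Relation.TransGen (StepE e g) u u then (1:ℂ) else 0) * M u v
        = (if u = v then (if Relation.TransGen (StepE e g) v v then (1:ℂ) else 0) else 0)
          - (if Relation.TransGen (StepE e g) u u ∧ g u = e v then (1:ℂ) else 0) := by
      intro u
      rw [hM]
      simp only [Matrix.of_apply]
      by_cases hc : Relation.TransGen (StepE e g) u u
      · by_cases huv : u = v
        · subst huv; simp [hc]
        · simp [hc, huv]
      · by_cases huv : u = v
        · subst huv; simp [hc]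
        · simp [hc, huv]
    rw [Finset.sum_congr rfl (fun u _ => hsplit u), Finset.sum_sub_distrib,
      Finset.sum_ite_eq' Finset.univ v]
    simp only [Finset.mem_univ, if_true]
    rw [sub_eq_zero]
    by_cases hcv : Relation.TransGen (StepE e g) v v
    · rw [if_pos hcv]
      obtain ⟨b, hvb, hbv⟩ := Relation.TransGen.tail'_iff.mp hcv
      have hb : Relation.TransGen (StepE e g) b b := Relation.TransGen.head' hbv hvb
      have hval : ∀ u, (if Relation.TransGen (StepE e g) u u ∧ g u = e v then (1:ℂ) else 0)
          = if u = b then 1 else 0 := by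
        intro u
        by_cases hub : u = b
        · subst hub; simp [hb, hbv, StepE] at *; exact hbv
        · rw [if_neg hub]
          by_cases hcu : Relation.TransGen (StepE e g) u u
          · by_cases hgu : g u = e v
            · exact absurd (pred_unique e g he hcu hb hgu hbv) hub
            · simp [hgu]
          · simp [hcu]
      rw [Finset.sum_congr rfl (fun u _ => hval u), Finset.sum_ite_eq' Finset.univ b]
      simp
    · rw [if_neg hcv]
      symm
      apply Finset.sum_eq_zero
      intro u _
      rw [if_neg]
      rintro ⟨hcu, hgu⟩
      obtain ⟨b', hub', hb'u⟩ := Relation.TransGen.head'_iff.mp hcu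
      have hb'v : b' = v := he (hub'.symm.trans hgu)
      subst hb'v
      exact hcv (Relation.TransGen.tail' hb'u hgu)

end Core2

section Core3
variable {U T : Type*} [Fintype U] [DecidableEq U] [Fintype T]

theorem det_forest (e : U → T) (he : Function.Injective e) (w : U → T → ℂ)
    (hw : ∀ u, w u (e u) = 0) :
    (Matrix.of fun u v : U => (if u = v then ∑ t, w u t else 0) - w u (e v)).det =
      ∑ g : U → T,
        if (∀ a, ¬ Relation.TransGen (StepE e g) a a) then ∏ u, w u (g u) else 0 := by
  classical
  set L : Matrix U U ℂ :=
    Matrix.of (fun u v => (if u = v then ∑ t, w u t else 0) - w u (e v)) with hL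
  have h1 : L.det = ∑ σ : Equiv.Perm U, ((Equiv.Perm.sign σ : ℤ) : ℂ) *
      ∏ u, L u (σ u) := by
    rw [← Matrix.det_transpose, Matrix.det_apply']
    rfl
  have h2 : ∀ σ : Equiv.Perm U, ∏ u, L u (σ u)
      = ∑ g : U → T, ∏ u,
          ((if σ u = u then (1:ℂ) else if g u = e (σ u) then -1 else 0) * w u (g u)) := by
    intro σ
    have hfac : ∀ u, L u (σ u)
        = ∑ t, ((if σ u = u then (1:ℂ) else if t = e (σ u) then -1 else 0) * w u t) := by
      intro u
      rw [hL]
      simp only [Matrix.of_apply]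
      by_cases h : σ u = u
      · rw [h]
        simp [hw u]
      · have h' : ¬ (u = σ u) := fun hh => h hh.symm
        simp [h, h', ite_mul, neg_one_mul, zero_mul, Finset.sum_ite_eq']
    rw [Finset.prod_congr rfl (fun u _ => hfac u), Finset.prod_univ_sum]
    rw [Fintype.piFinset_univ]
  rw [h1, Finset.sum_congr rfl (fun σ _ => by rw [h2 σ, Finset.mul_sum]), Finset.sum_comm]
  refine Finset.sum_congr rfl fun g _ => ?_
  have hsplit : ∀ σ : Equiv.Perm U, ((Equiv.Perm.sign σ : ℤ) : ℂ) *
      ∏ u, ((if σ u = u then (1:ℂ) else if g u = e (σ u) then -1 else 0) * w u (g u))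
      = (((Equiv.Perm.sign σ : ℤ) : ℂ) *
          ∏ u, (if σ u = u then (1:ℂ) else if g u = e (σ u) then -1 else 0)) * ∏ u, w u (g u) := by
    intro σ
    rw [Finset.prod_mul_distrib]
    ring
  rw [Finset.sum_congr rfl (fun σ _ => hsplit σ), ← Finset.sum_mul]
  by_cases hac : ∀ a, ¬ Relation.TransGen (StepE e g) a a
  · rw [if_pos hac, K_acyclic e g hac, one_mul]
  · rw [if_neg hac]
    push_neg at hac
    obtain ⟨a0, h0⟩ := hac
    by_cases hl : ∃ u, g u = e u
    · obtain ⟨u, hu⟩ := hl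
      rw [Finset.prod_eq_zero (Finset.mem_univ u) (by rw [hu]; exact hw u), mul_zero]
    · push_neg at hl
      rw [K_cyclic e g he hl a0 h0, zero_mul]

end Core3

section App
variable {N : ℕ}

/-- The augmented-forest map associated to `g : {i ∉ R} → Option (Fin N)`. -/
def toF (R : Finset (Fin N)) (g : {i : Fin N // i ∉ R} → Option (Fin N)) :
    Option (Fin N) → Option (Option (Fin N)) :=
  fun v => match v with
  | none => none
  | some i => if h : i ∈ R then none else some (g ⟨i, h⟩)

def eR (R : Finset (Fin N)) : {i : Fin N // i ∉ R} → Option (Fin N) :=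
  fun u => some ↑u

lemma eR_inj (R : Finset (Fin N)) : Function.Injective (eR R) :=
  fun a b h => Subtype.ext (Option.some_injective _ h)

lemma toF_step {R : Finset (Fin N)} {g : {i : Fin N // i ∉ R} → Option (Fin N)}
    {a b : Option (Fin N)} (h : FStep (toF R g) a b) :
    ∃ j, ∃ hj : j ∉ R, a = some j ∧ g ⟨j, hj⟩ = b := by
  cases a with
  | none => exact absurd h (by simp [FStep, toF])
  | some j =>
    by_cases hj : j ∈ R
    · exact absurd h (by simp [FStep, toF, hj])
    · refine ⟨j, hj, rfl, ?_⟩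
      have h2 : toF R g (some j) = some (g ⟨j, hj⟩) := by simp [toF, hj]
      rw [FStep, h2] at h
      exact Option.some_injective _ h

lemma toF_trans {R : Finset (Fin N)} {g : {i : Fin N // i ∉ R} → Option (Fin N)}
    {a b : Option (Fin N)} (h : Relation.TransGen (FStep (toF R g)) a b) :
    ∀ v : {i : Fin N // i ∉ R}, b = some ↑v →
      ∃ u : {i : Fin N // i ∉ R}, a = some ↑u ∧
        Relation.TransGen (StepE (eR R) g) u v := by
  induction h with
  | single h =>
    intro v hv
    obtain ⟨j, hj, ha, hg⟩ := toF_step h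
    refine ⟨⟨j, hj⟩, ha, Relation.TransGen.single ?_⟩
    rw [StepE, eR, hg, hv]
  | tail hab hbc ih =>
    intro v hv
    obtain ⟨j, hj, hb, hg⟩ := toF_step hbc
    obtain ⟨u, ha, htg⟩ := ih ⟨j, hj⟩ hb
    refine ⟨u, ha, htg.tail ?_⟩
    rw [StepE, eR, hg, hv]

lemma toF_lift {R : Finset (Fin N)} {g : {i : Fin N // i ∉ R} → Option (Fin N)}
    {u v : {i : Fin N // i ∉ R}} (h : Relation.TransGen (StepE (eR R) g) u v) :
    Relation.TransGen (FStep (toF R g)) (some ↑u) (some ↑v) := by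
  induction h with
  | single h =>
    refine Relation.TransGen.single ?_
    rw [FStep]
    have h2 : toF R g (some ↑u) = some (g u) := by simp [toF, u.2]
    rw [h2, h]
    rfl
  | @tail b c hab hbc ih =>
    refine ih.tail ?_
    rw [FStep]
    have h2 : toF R g (some ↑b) = some (g b) := by simp [toF, b.2]
    rw [h2, hbc]
    rfl

lemma isForest_toF_iff (R : Finset (Fin N)) (g : {i : Fin N // i ∉ R} → Option (Fin N)) :
    IsForest (toF R g) ↔ ∀ a, ¬ Relation.TransGen (StepE (eR R) g) a a := by
  constructor
  · intro hf a ha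
    exact hf (some ↑a) (toF_lift ha)
  · intro hac v hv
    obtain ⟨b, hvb, _⟩ := Relation.TransGen.head'_iff.mp hv
    obtain ⟨j, hj, hvj, _⟩ := toF_step hvb
    obtain ⟨u, hvu, htg⟩ := toF_trans hv ⟨j, hj⟩ hvj
    have : u = ⟨j, hj⟩ := Subtype.ext (Option.some_injective _ (hvu.symm.trans hvj))
    exact hac u (this ▸ htg)

lemma roots_toF (R : Finset (Fin N)) (g : {i : Fin N // i ∉ R} → Option (Fin N)) :
    roots (toF R g) = insert none (R.image some) := by
  ext v
  have hmem : v ∈ roots (toF R g) ↔ toF R g v = none := by simp [roots]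
  rw [hmem]
  cases v with
  | none => simp [toF]
  | some i =>
    by_cases hi : i ∈ R <;> simp [toF, hi]

end App



lemma toF_prod (G : Matrix (Fin N) (Fin N) ℂ) (R : Finset (Fin N))
    (g : {i : Fin N // i ∉ R} → Option (Fin N)) :
    forestProd (daggerWeight G) (toF R g) =
      ∏ u : {i : Fin N // i ∉ R}, daggerWeight G (some ↑u) (g u) := by
  rw [forestProd, Fintype.prod_option]
  simp only [toF]
  rw [one_mul]
  trans (∏ i : Fin N, if h : i ∈ R then (1:ℂ) else daggerWeight G (some i) (g ⟨i, h⟩))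
  · refine Finset.prod_congr rfl fun i _ => ?_
    by_cases hi : i ∈ R
    · simp [hi]
    · simp [hi]
  · rw [← Finset.prod_mul_prod_compl R,
      Finset.prod_eq_one (fun i hi => by simp [hi]), one_mul,
      Finset.prod_subtype Rᶜ (fun x => Finset.mem_compl)
        (fun i => if h : i ∈ R then (1:ℂ) else daggerWeight G (some i) (g ⟨i, h⟩))]
    refine Finset.prod_congr rfl fun u _ => ?_
    rw [dif_neg u.2]

lemma dagger_sum (G : Matrix (Fin N) (Fin N) ℂ) (i : Fin N) :
    ∑ t : Option (Fin N), daggerWeight G (some i) t = -(G i i) := by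
  rw [Fintype.sum_option]
  have h1 : daggerWeight G (some i) none = -(∑ j, G i j) := rfl
  have h2 : ∀ j, daggerWeight G (some i) (some j) = if i = j then 0 else G i j :=
    fun j => rfl
  rw [h1, Finset.sum_congr rfl fun j _ => h2 j]
  have h3 : ∑ j, (if i = j then (0:ℂ) else G i j) = (∑ j, G i j) - G i i := by
    have h4 : ∀ j, (if i = j then (0:ℂ) else G i j)
        = G i j - (if i = j then G i j else 0) := by
      intro j; by_cases h : i = j <;> simp [h]
    rw [Finset.sum_congr rfl fun j _ => h4 j, Finset.sum_sub_distrib, Finset.sum_ite_eq]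
    simp
  rw [h3]; ring

def backF (R : Finset (Fin N)) (f : Option (Fin N) → Option (Option (Fin N)))
    (u : {i : Fin N // i ∉ R}) : Option (Fin N) :=
  (f (some ↑u)).getD none

lemma backF_toF (R : Finset (Fin N)) (g : {i : Fin N // i ∉ R} → Option (Fin N)) :
    backF R (toF R g) = g := by
  funext u
  rw [backF]
  have h : toF R g (some ↑u) = some (g u) := by simp [toF, u.2]
  rw [h, Option.getD_some]

lemma toF_backF (R : Finset (Fin N)) (f : Option (Fin N) → Option (Option (Fin N)))
    (hf0 : f none = none) (hfr : roots f = insert none (R.image some)) :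
    toF R (backF R f) = f := by
  have hroot : ∀ v, f v = none ↔ (v = none ∨ ∃ i ∈ R, v = some i) := by
    intro v
    have h1 : v ∈ roots f ↔ f v = none := by simp [roots]
    rw [← h1, hfr]
    simp [eq_comm]
  funext v
  cases v with
  | none => rw [hf0]; rfl
  | some i =>
    by_cases hi : i ∈ R
    · have h2 : toF R (backF R f) (some i) = none := by simp [toF, hi]
      rw [h2]
      symm
      rw [hroot]
      exact Or.inr ⟨i, hi, rfl⟩
    · have h2 : toF R (backF R f) (some i) = some (backF R f ⟨i, hi⟩) := by
        simp [toF, hi]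
      have h3 : f (some i) ≠ none := by
        intro hcon
        rcases (hroot _).mp hcon with h | ⟨j, hj, hij⟩
        · simp at h
        · exact hi (by rwa [Option.some_injective _ hij.symm] at hj)
      obtain ⟨t, ht⟩ := Option.ne_none_iff_exists'.mp h3
      rw [h2, backF, ht, Option.getD_some]


/-- Determinant of a principal submatrix G_RR expressed through spanning forests
of G† whose root set is exactly {†} ∪ R. -/
theorem stmt4 {N : ℕ} (G : Matrix (Fin N) (Fin N) ℂ) (R : Finset (Fin N)) :
    (G.submatrix (fun i : {i : Fin N // i ∉ R} => (i : Fin N))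
        (fun j : {i : Fin N // i ∉ R} => (j : Fin N))).det =
      (-1 : ℂ) ^ (N - R.card) *
        ∑ᶠ f ∈ {f : Option (Fin N) → Option (Option (Fin N)) |
            IsForest f ∧ f none = none ∧ roots f = insert none (R.image some)},
          forestProd (daggerWeight G) f := by
  classical
  have hcard : Fintype.card {i : Fin N // i ∉ R} = N - R.card := by
    have h := Fintype.card_subtype_compl (fun i : Fin N => i ∈ R)
    simpa using h
  have hw0 : ∀ u : {i : Fin N // i ∉ R}, daggerWeight G (some ↑u) (eR R u) = 0 := by
    intro u; simp [daggerWeight, eR]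
  have hdf := det_forest (eR R) (eR_inj R)
    (fun u t => daggerWeight G (some ↑u) t) hw0
  have hL : (Matrix.of fun u v : {i : Fin N // i ∉ R} =>
      (if u = v then ∑ t, daggerWeight G (some ↑u) t else 0)
        - daggerWeight G (some ↑u) (eR R v))
      = -(G.submatrix (fun i : {i : Fin N // i ∉ R} => (i : Fin N))
          (fun j : {i : Fin N // i ∉ R} => (j : Fin N))) := by
    ext u v
    simp only [Matrix.of_apply, Matrix.neg_apply, Matrix.submatrix_apply]
    rw [dagger_sum]
    by_cases h : u = v
    · subst h
      rw [hw0 u]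
      simp
    · have hne : (↑u : Fin N) ≠ ↑v := fun hh => h (Subtype.ext hh)
      have h2 : daggerWeight G (some ↑u) (eR R v) = G ↑u ↑v := by
        simp [daggerWeight, eR, hne]
      rw [h2]
      simp [h]
  rw [hL, Matrix.det_neg, hcard] at hdf
  have hsq : ((-1:ℂ)^(N - R.card)) * ((-1:ℂ)^(N - R.card)) = 1 := by
    rw [← mul_pow]; norm_num
  have hS : (∑ g : {i : Fin N // i ∉ R} → Option (Fin N),
        if (∀ a, ¬ Relation.TransGen (StepE (eR R) g) a a)
        then ∏ u : {i : Fin N // i ∉ R}, daggerWeight G (some ↑u) (g u) else 0)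
      = ∑ᶠ f ∈ {f : Option (Fin N) → Option (Option (Fin N)) |
            IsForest f ∧ f none = none ∧ roots f = insert none (R.image some)},
          forestProd (daggerWeight G) f := by
    have hset : {f : Option (Fin N) → Option (Option (Fin N)) |
        IsForest f ∧ f none = none ∧ roots f = insert none (R.image some)}
        = ↑(Finset.univ.filter (fun f : Option (Fin N) → Option (Option (Fin N)) =>
            IsForest f ∧ f none = none ∧ roots f = insert none (R.image some))) := by
      ext f; simp
    rw [hset, finsum_mem_coe_finset, ← Finset.sum_filter]
    refine Finset.sum_nbij' (toF R) (backF R) ?_ ?_ ?_ ?_ ?_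
    · intro g hg
      rw [Finset.mem_filter] at hg ⊢
      exact ⟨Finset.mem_univ _, (isForest_toF_iff R g).mpr hg.2, rfl, roots_toF R g⟩
    · intro f hf
      rw [Finset.mem_filter] at hf ⊢
      obtain ⟨-, hfor, hf0, hfr⟩ := hf
      refine ⟨Finset.mem_univ _, (isForest_toF_iff R (backF R f)).mp ?_⟩
      rw [toF_backF R f hf0 hfr]
      exact hfor
    · intro g _
      exact backF_toF R g
    · intro f hf
      rw [Finset.mem_filter] at hf
      exact toF_backF R f hf.2.2.1 hf.2.2.2
    · intro g _
      exact (toF_prod G R g).symm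
  rw [← hS, ← hdf]
  rw [← mul_assoc, hsq, one_mul]
end
end

section
/- Let G be an N×N matrix and n ∈ {1,...,N}. Let G_nn be the principal submatrix obtained by deleting row n and column n. Then det(λI - G_nn) = Σ_{k=0}^{N-1} λ^k Σ_{F ∈ F^k_{{†,n}}} π_F, where F^k_{{†,n}} is the set of spanning forests of the augmented digraph G† with k+2 trees whose root set contains both † and n. -/
open scoped Classical
open Finset

noncomputable section

namespace Stmt5Aux

variable {N : ℕ}

def vecOf (n : Fin N) (i : {i : Fin N // i ≠ n}) :
    Option (Option (Fin N)) → ({i : Fin N // i ≠ n} → ℂ)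
  | none => fun j => if i = j then 1 else 0
  | some none => fun j => if i = j then 1 else 0
  | some (some u) => fun j => (if i = j then 1 else 0) - (if u = j.1 then 1 else 0)

def wtOf (G : Matrix (Fin N) (Fin N) ℂ) (lam : ℂ) (n : Fin N)
    (i : {i : Fin N // i ≠ n}) : Option (Option (Fin N)) → ℂ
  | none => lam
  | some u => daggerWeight G (some i.1) u

/-- rank of a vertex: number of vertices reachable from it. -/
def rk (F : Option (Fin N) → Option (Option (Fin N))) (x : Option (Fin N)) : ℕ :=
  (Finset.univ.filter (fun y => Reach F x y)).card

lemma rk_lt {F : Option (Fin N) → Option (Option (Fin N))} (hf : IsForest F)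
    {x y : Option (Fin N)} (h : FStep F x y) : rk F y < rk F x := by
  apply Finset.card_lt_card
  constructor
  · intro z hz
    simp only [Finset.mem_filter, Finset.mem_univ, true_and] at hz ⊢
    exact Relation.ReflTransGen.head h hz
  · intro hsub
    have hx : x ∈ Finset.univ.filter (fun z => Reach F x z) := by
      simp only [Finset.mem_filter, Finset.mem_univ, true_and]
      exact Relation.ReflTransGen.refl
    have := hsub hx
    simp only [Finset.mem_filter, Finset.mem_univ, true_and] at this
    exact hf x (Relation.TransGen.head' h this)

lemma vec_ne_of {n : Fin N} {i j : {i : Fin N // i ≠ n}} {c : Option (Option (Fin N))}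
    (hij : i ≠ j) (h : vecOf n i c j ≠ 0) : c = some (some j.1) := by
  match c with
  | none => simp [vecOf, hij] at h
  | some none => simp [vecOf, hij] at h
  | some (some u) =>
    simp only [vecOf, if_neg hij] at h
    by_cases hu : u = j.1
    · rw [hu]
    · simp [hu] at h

lemma vec_diag {n : Fin N} {i : {i : Fin N // i ≠ n}} {c : Option (Option (Fin N))}
    (h : c ≠ some (some i.1)) : vecOf n i c i = 1 := by
  match c with
  | none => simp [vecOf]
  | some none => simp [vecOf]
  | some (some u) =>
    have hu : u ≠ i.1 := by intro e; exact h (by rw [e])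
    simp [vecOf, hu]

lemma det_forest_one (n : Fin N) (F : Option (Fin N) → Option (Option (Fin N)))
    (hf : IsForest F) :
    (Matrix.of fun i j : {i : Fin N // i ≠ n} => vecOf n i (F (some i.1)) j).det = 1 := by
  set M : Matrix {i : Fin N // i ≠ n} {i : Fin N // i ≠ n} ℂ :=
    Matrix.of fun i j => vecOf n i (F (some i.1)) j with hM
  have key : ∀ i j : {i : Fin N // i ≠ n}, i ≠ j → M i j ≠ 0 →
      rk F (some j.1) < rk F (some i.1) := by
    intro i j hij h
    have hc : F (some i.1) = some (some j.1) := vec_ne_of hij h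
    exact rk_lt hf hc
  have hbt : M.transpose.BlockTriangular (fun i => rk F (some i.1)) := by
    intro i j hij
    show M j i = 0
    by_contra h
    have hji : j ≠ i := by
      intro e; rw [e] at hij; exact lt_irrefl _ hij
    exact absurd hij (not_lt_of_gt (key j i hji h))
  rw [← Matrix.det_transpose, hbt.det]
  apply Finset.prod_eq_one
  intro k _
  have : (M.transpose.toSquareBlock (fun i => rk F (some i.1)) k) = 1 := by
    ext i j
    show M j.1 i.1 = (1 : Matrix _ _ ℂ) i j
    by_cases hij : i = j
    · subst hij
      rw [Matrix.one_apply_eq]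
      apply vec_diag
      intro e
      exact hf (some i.1.1) (Relation.TransGen.single e)
    · rw [Matrix.one_apply_ne hij]
      by_contra h
      have hji : j.1 ≠ i.1 := fun e => hij (Subtype.ext e.symm)
      have := key j.1 i.1 hji h
      rw [i.2, j.2] at this
      exact lt_irrefl _ this
  rw [this, Matrix.det_one]

end Stmt5Aux

namespace Stmt5Aux

variable {N : ℕ}

lemma det_cycle_zero (n : Fin N) (F : Option (Fin N) → Option (Option (Fin N)))
    (h0 : F none = none) (hn : F (some n) = none)
    (v0 : Option (Fin N)) (hc : Relation.TransGen (FStep F) v0 v0) :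
    (Matrix.of fun i j : {i : Fin N // i ≠ n} => vecOf n i (F (some i.1)) j).det = 0 := by
  classical
  set R := FStep F with hR
  set O : Finset (Option (Fin N)) :=
    Finset.univ.filter (fun x => Relation.ReflTransGen R v0 x ∧ Relation.ReflTransGen R x v0)
    with hO
  have memO : ∀ x, x ∈ O ↔ Relation.ReflTransGen R v0 x ∧ Relation.ReflTransGen R x v0 := by
    intro x; simp [hO]
  have hv0O : v0 ∈ O := by
    rw [memO]; exact ⟨Relation.ReflTransGen.refl, Relation.ReflTransGen.refl⟩
  -- each element of O steps to an element of O
  have hstep : ∀ x ∈ O, ∃ y ∈ O, F x = some y := by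
    intro x hx
    rw [memO] at hx
    have htx : Relation.TransGen R x v0 := Relation.TransGen.trans_right hx.2 hc
    obtain ⟨y, hxy, hyv⟩ := Relation.TransGen.head'_iff.mp htx
    refine ⟨y, ?_, hxy⟩
    rw [memO]
    exact ⟨hx.1.trans (Relation.ReflTransGen.single hxy), hyv⟩
  have hsurj : ∀ y ∈ O, ∃ x ∈ O, F x = some y := by
    intro y hy
    rw [memO] at hy
    have hty : Relation.TransGen R y y :=
      Relation.TransGen.trans_right hy.2 (Relation.TransGen.trans_left hc hy.1)
    obtain ⟨x, hyx, hxy⟩ := Relation.TransGen.tail'_iff.mp hty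
    refine ⟨x, ?_, hxy⟩
    rw [memO]
    exact ⟨hy.1.trans hyx, (Relation.ReflTransGen.single hxy).trans hy.2⟩
  -- the successor map on O
  set T : Option (Fin N) → Option (Fin N) := fun x => (F x).getD v0 with hT
  have hTF : ∀ x ∈ O, F x = some (T x) := by
    intro x hx
    obtain ⟨y, _, hy⟩ := hstep x hx
    rw [hT]; simp only; rw [hy]; rfl
  have hTmem : ∀ x ∈ O, T x ∈ O := by
    intro x hx
    obtain ⟨y, hyO, hy⟩ := hstep x hx
    have := hTF x hx
    rw [hy] at this
    rwa [Option.some.inj this] at hyO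
  have hTsurj : ∀ y ∈ O, ∃ x, ∃ _ : x ∈ O, T x = y := by
    intro y hy
    obtain ⟨x, hx, hxy⟩ := hsurj y hy
    refine ⟨x, hx, ?_⟩
    have := hTF x hx
    rw [hxy] at this
    exact (Option.some.inj this).symm
  have hTinj : ∀ ⦃a₁⦄ (h₁ : a₁ ∈ O) ⦃a₂⦄ (h₂ : a₂ ∈ O), T a₁ = T a₂ → a₁ = a₂ :=
    Finset.inj_on_of_surj_on_of_card_le (fun a _ => T a) (fun a ha => hTmem a ha)
      hTsurj le_rfl
  -- elements of O are `some i` with i ≠ n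
  have hOform : ∀ x ∈ O, ∃ i : Fin N, ∃ h : i ≠ n, x = some i := by
    intro x hx
    obtain ⟨y, _, hy⟩ := hstep x hx
    match x with
    | none => rw [h0] at hy; exact absurd hy (by simp)
    | some i =>
      refine ⟨i, ?_, rfl⟩
      intro e; subst e; rw [hn] at hy; exact absurd hy (by simp)
  -- the dependent vector
  set v : {i : Fin N // i ≠ n} → ℂ := fun i => if some i.1 ∈ O then 1 else 0 with hv
  have hvne : v ≠ 0 := by
    obtain ⟨i0, hi0, he⟩ := hOform v0 hv0O
    intro hz
    have : v ⟨i0, hi0⟩ = 0 := by rw [hz]; rfl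
    rw [hv] at this
    simp only at this
    rw [if_pos (he ▸ hv0O)] at this
    exact one_ne_zero this
  set M : Matrix {i : Fin N // i ≠ n} {i : Fin N // i ≠ n} ℂ :=
    Matrix.of fun i j => vecOf n i (F (some i.1)) j with hM
  set O' : Finset {i : Fin N // i ≠ n} :=
    Finset.univ.filter (fun i => some i.1 ∈ O) with hO'
  have hOim : O'.image (fun i => some i.1) = O := by
    ext x
    simp only [Finset.mem_image, hO', Finset.mem_filter, Finset.mem_univ, true_and]
    constructor
    · rintro ⟨i, hi, rfl⟩; exact hi
    · intro hx
      obtain ⟨i, hi, he⟩ := hOform x hx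
      exact ⟨⟨i, hi⟩, he ▸ hx, he.symm⟩
  have keysum : ∀ w : Option (Fin N),
      (∑ x ∈ O, (if T x = w then (1:ℂ) else 0)) = if w ∈ O then 1 else 0 := by
    intro w
    by_cases hw : w ∈ O
    · rw [if_pos hw]
      obtain ⟨x0, hx0, hx0w⟩ := hTsurj w hw
      rw [Finset.sum_eq_single_of_mem x0 hx0]
      · rw [if_pos hx0w]
      · intro b hb hbx
        rw [if_neg]
        intro hbw
        exact hbx (hTinj hb hx0 (hbw.trans hx0w.symm))
    · rw [if_neg hw]
      apply Finset.sum_eq_zero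
      intro x hx
      rw [if_neg]
      intro he
      exact hw (he ▸ hTmem x hx)
  have hvM : Matrix.vecMul v M = 0 := by
    funext j
    show (∑ i, v i * M i j) = 0
    have hterm : ∀ i : {i : Fin N // i ≠ n}, v i * M i j =
        (if some i.1 ∈ O then
          ((if i = j then (1:ℂ) else 0) -
            (if T (some i.1) = some j.1 then 1 else 0)) else 0) := by
      intro i
      by_cases h : some i.1 ∈ O
      · rw [if_pos h, hv]
        simp only
        rw [if_pos h, one_mul]
        have hF : F (some i.1) = some (T (some i.1)) := hTF _ h
        obtain ⟨u, hu, he⟩ := hOform _ (hTmem _ h)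
        rw [he] at hF
        show vecOf n i (F (some i.1)) j = _
        rw [hF]
        show (if i = j then 1 else 0) - (if u = j.1 then (1:ℂ) else 0) = _
        congr 1
        have hiff : (T (some i.1) = some j.1) ↔ (u = j.1) := by
          rw [he]; simp
        by_cases hu2 : u = j.1
        · rw [if_pos hu2, if_pos (hiff.mpr hu2)]
        · rw [if_neg hu2, if_neg (fun hh => hu2 (hiff.mp hh))]
      · rw [if_neg h, hv]
        simp only
        rw [if_neg h, zero_mul]
    rw [Finset.sum_congr rfl (fun i _ => hterm i), ← Finset.sum_filter, ← hO',
      Finset.sum_sub_distrib]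
    have e1 : (∑ i ∈ O', (if i = j then (1:ℂ) else 0)) = if some j.1 ∈ O then 1 else 0 := by
      rw [Finset.sum_ite_eq' O' j (fun _ => (1:ℂ))]
      congr 1
      simp [hO']
    have e2 : (∑ i ∈ O', (if T (some i.1) = some j.1 then (1:ℂ) else 0)) =
        if some j.1 ∈ O then 1 else 0 := by
      rw [← keysum (some j.1), ← hOim, Finset.sum_image]
      intro a _ b _ hab
      exact Subtype.ext (Option.some.inj hab)
    rw [e1, e2, sub_self]
  exact Matrix.exists_vecMul_eq_zero_iff.mp ⟨v, hvne, hvM⟩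

end Stmt5Aux

namespace Stmt5Aux

variable {N : ℕ}

def ext' (n : Fin N) (f : {i : Fin N // i ≠ n} → Option (Option (Fin N))) :
    Option (Fin N) → Option (Option (Fin N))
  | none => none
  | some i => if h : i = n then none else f ⟨i, h⟩

lemma ext'_some (n : Fin N) (f : {i : Fin N // i ≠ n} → Option (Option (Fin N)))
    (i : {i : Fin N // i ≠ n}) : ext' n f (some i.1) = f i := by
  show (if h : i.1 = n then none else f ⟨i.1, h⟩) = f i
  rw [dif_neg i.2]

lemma det_val (n : Fin N) (f : {i : Fin N // i ≠ n} → Option (Option (Fin N))) :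
    (Matrix.of fun i j : {i : Fin N // i ≠ n} => vecOf n i (f i) j).det =
      if IsForest (ext' n f) then 1 else 0 := by
  have hM : (Matrix.of fun i j : {i : Fin N // i ≠ n} => vecOf n i (f i) j)
      = Matrix.of fun i j => vecOf n i ((ext' n f) (some i.1)) j := by
    ext i j
    rw [Matrix.of_apply, Matrix.of_apply, ext'_some]
  rw [hM]
  split_ifs with h
  · exact det_forest_one n _ h
  · rw [IsForest] at h
    push_neg at h
    obtain ⟨v, hv⟩ := h
    exact det_cycle_zero n _ rfl (by simp [ext']) v hv

lemma row_eq (G : Matrix (Fin N) (Fin N) ℂ) (lam : ℂ) (n : Fin N)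
    (i : {i : Fin N // i ≠ n}) :
    (∑ c : Option (Option (Fin N)), wtOf G lam n i c • vecOf n i c)
      = fun j => lam * (if i = j then 1 else 0) - G i.1 j.1 := by
  funext j
  have h0 : (∑ c : Option (Option (Fin N)), wtOf G lam n i c • vecOf n i c) j
      = ∑ c : Option (Option (Fin N)), wtOf G lam n i c * vecOf n i c j := by
    rw [Finset.sum_apply]; rfl
  rw [h0, Fintype.sum_option, Fintype.sum_option]
  show lam * vecOf n i none j +
      (daggerWeight G (some i.1) none * vecOf n i (some none) j +
        ∑ u : Fin N, daggerWeight G (some i.1) (some u) * vecOf n i (some (some u)) j) = _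
  have hd1 : daggerWeight G (some i.1) none = -(∑ u, G i.1 u) := rfl
  have hd2 : ∀ u, daggerWeight G (some i.1) (some u) = if i.1 = u then 0 else G i.1 u :=
    fun u => rfl
  by_cases hij : i = j
  · have hij1 : i.1 = j.1 := by rw [hij]
    have hsum : (∑ u : Fin N, daggerWeight G (some i.1) (some u) *
        vecOf n i (some (some u)) j) = (∑ u, G i.1 u) - G i.1 i.1 := by
      have : ∀ u : Fin N, daggerWeight G (some i.1) (some u) * vecOf n i (some (some u)) j
          = G i.1 u - (if u = i.1 then G i.1 u else 0) := by
        intro u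
        rw [hd2]
        show _ * ((if i = j then 1 else 0) - (if u = j.1 then (1:ℂ) else 0)) = _
        rw [if_pos hij]
        by_cases hu : u = i.1
        · rw [if_pos hu.symm, if_pos hu]
          ring
        · rw [if_neg (fun e => hu e.symm), if_neg (fun e => hu (e.trans hij1.symm)),
            if_neg hu]
          ring
      rw [Finset.sum_congr rfl (fun u _ => this u), Finset.sum_sub_distrib,
        Finset.sum_ite_eq' Finset.univ i.1 (G i.1), if_pos (Finset.mem_univ _)]
    rw [hsum, hd1]
    show lam * vecOf n i none j + (_ + _) = _
    have hv1 : vecOf n i none j = 1 := by show (if i = j then (1:ℂ) else 0) = 1; rw [if_pos hij]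
    have hv2 : vecOf n i (some none) j = 1 := by
      show (if i = j then (1:ℂ) else 0) = 1; rw [if_pos hij]
    rw [hv1, hv2, if_pos hij, ← hij1]
    ring
  · have hij1 : i.1 ≠ j.1 := fun e => hij (Subtype.ext e)
    have hsum : (∑ u : Fin N, daggerWeight G (some i.1) (some u) *
        vecOf n i (some (some u)) j) = -G i.1 j.1 := by
      have : ∀ u : Fin N, daggerWeight G (some i.1) (some u) * vecOf n i (some (some u)) j
          = -(if u = j.1 then (if i.1 = u then 0 else G i.1 u) else 0) := by
        intro u
        rw [hd2]
        show _ * ((if i = j then 1 else 0) - (if u = j.1 then (1:ℂ) else 0)) = _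
        rw [if_neg hij]
        by_cases hu : u = j.1
        · rw [if_pos hu, if_pos hu]; ring
        · rw [if_neg hu, if_neg hu]; ring
      rw [Finset.sum_congr rfl (fun u _ => this u), Finset.sum_neg_distrib,
        Finset.sum_ite_eq' Finset.univ j.1 (fun u => if i.1 = u then 0 else G i.1 u),
        if_pos (Finset.mem_univ _), if_neg hij1]
    rw [hsum, hd1]
    have hv1 : vecOf n i none j = 0 := by show (if i = j then (1:ℂ) else 0) = 0; rw [if_neg hij]
    have hv2 : vecOf n i (some none) j = 0 := by
      show (if i = j then (1:ℂ) else 0) = 0; rw [if_neg hij]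
    rw [hv1, hv2, if_neg hij]
    ring

lemma det_expand (G : Matrix (Fin N) (Fin N) ℂ) (lam : ℂ) (n : Fin N) :
    (lam • (1 : Matrix {i : Fin N // i ≠ n} {i : Fin N // i ≠ n} ℂ) -
        G.submatrix (fun i : {i : Fin N // i ≠ n} => (i : Fin N))
          (fun j : {i : Fin N // i ≠ n} => (j : Fin N))).det =
      ∑ f : {i : Fin N // i ≠ n} → Option (Option (Fin N)),
        (∏ i, wtOf G lam n i (f i)) *
          (Matrix.of fun i j => vecOf n i (f i) j).det := by
  have hM : (lam • (1 : Matrix {i : Fin N // i ≠ n} {i : Fin N // i ≠ n} ℂ) -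
        G.submatrix (fun i : {i : Fin N // i ≠ n} => (i : Fin N))
          (fun j : {i : Fin N // i ≠ n} => (j : Fin N)))
      = Matrix.of (fun i => ∑ c : Option (Option (Fin N)), wtOf G lam n i c • vecOf n i c) := by
    ext i j
    have h1 : (Matrix.of (fun i => ∑ c : Option (Option (Fin N)),
        wtOf G lam n i c • vecOf n i c)) i j
        = (∑ c : Option (Option (Fin N)), wtOf G lam n i c • vecOf n i c) j := rfl
    rw [h1, row_eq G lam n i]
    simp [Matrix.sub_apply, Matrix.smul_apply, Matrix.one_apply, smul_eq_mul]
  rw [hM]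
  show Matrix.detRowAlternating
      (fun i => ∑ c : Option (Option (Fin N)), wtOf G lam n i c • vecOf n i c) = _
  rw [show ⇑(Matrix.detRowAlternating (R := ℂ) (n := {i : Fin N // i ≠ n}))
      = ⇑(Matrix.detRowAlternating (R := ℂ)
          (n := {i : Fin N // i ≠ n})).toMultilinearMap from rfl]
  rw [MultilinearMap.map_sum]
  apply Finset.sum_congr rfl
  intro f _
  rw [MultilinearMap.map_smul_univ]
  rfl

end Stmt5Aux

namespace Stmt5Aux

variable {N : ℕ}

lemma prod_option_split {M : Type*} [CommMonoid M] (n : Fin N) (g : Option (Fin N) → M) :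
    ∏ v : Option (Fin N), g v
      = g none * g (some n) * ∏ i : {i : Fin N // i ≠ n}, g (some i.1) := by
  rw [Fintype.prod_option]
  have h1 : (∏ b : Fin N, g (some b))
      = g (some n) * ∏ b ∈ Finset.univ.erase n, g (some b) :=
    (Finset.mul_prod_erase Finset.univ (fun b => g (some b)) (Finset.mem_univ n)).symm
  have h2 : (∏ b ∈ Finset.univ.erase n, g (some b))
      = ∏ i : {i : Fin N // i ≠ n}, g (some i.1) := by
    apply Finset.prod_subtype
    intro x; simp
  rw [h1, h2, mul_assoc]

lemma sum_option_split {M : Type*} [AddCommMonoid M] (n : Fin N) (g : Option (Fin N) → M) :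
    ∑ v : Option (Fin N), g v
      = g none + g (some n) + ∑ i : {i : Fin N // i ≠ n}, g (some i.1) := by
  rw [Fintype.sum_option]
  have h1 : (∑ b : Fin N, g (some b))
      = g (some n) + ∑ b ∈ Finset.univ.erase n, g (some b) :=
    (Finset.add_sum_erase Finset.univ (fun b => g (some b)) (Finset.mem_univ n)).symm
  have h2 : (∑ b ∈ Finset.univ.erase n, g (some b))
      = ∑ i : {i : Fin N // i ≠ n}, g (some i.1) := by
    apply Finset.sum_subtype
    intro x; simp
  rw [h1, h2, add_assoc]

/-- number of roots among the ordinary non-`n` vertices -/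
def cF (n : Fin N) (F : Option (Fin N) → Option (Option (Fin N))) : ℕ :=
  (Finset.univ.filter (fun i : {i : Fin N // i ≠ n} => F (some i.1) = none)).card

lemma roots_card (n : Fin N) (F : Option (Fin N) → Option (Option (Fin N)))
    (h0 : F none = none) (hn : F (some n) = none) :
    (roots F).card = cF n F + 2 := by
  rw [roots, Finset.card_filter, sum_option_split n, cF, Finset.card_filter]
  rw [if_pos h0, if_pos hn]
  have hAB : ∀ A B : ℕ, A = B → 1 + 1 + A = B + 2 := by omega
  apply hAB
  apply Finset.sum_congr rfl
  intro i _
  by_cases h : F (some i.1) = none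
  · rw [if_pos h]
  · rw [if_neg h]

lemma cF_lt (n : Fin N) (F : Option (Fin N) → Option (Option (Fin N))) : cF n F < N := by
  have h1 : cF n F ≤ Fintype.card {i : Fin N // i ≠ n} := by
    rw [← Finset.card_univ]
    exact Finset.card_le_card (Finset.filter_subset _ _)
  have h2 : Fintype.card {i : Fin N // i ≠ n} < N := by
    have := Fintype.card_subtype_lt (p := fun i : Fin N => i ≠ n) (x := n) (by simp)
    simpa using this
  omega

/-- the arc-weight factor of a vertex -/
def fp1 (G : Matrix (Fin N) (Fin N) ℂ) (F : Option (Fin N) → Option (Option (Fin N))) :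
    Option (Fin N) → ℂ := fun v =>
  match F v with
  | some u => daggerWeight G v u
  | none => 1

lemma wt_prod (G : Matrix (Fin N) (Fin N) ℂ) (lam : ℂ) (n : Fin N)
    (F : Option (Fin N) → Option (Option (Fin N)))
    (h0 : F none = none) (hn : F (some n) = none) :
    (∏ i : {i : Fin N // i ≠ n}, wtOf G lam n i (F (some i.1)))
      = lam ^ (cF n F) * forestProd (daggerWeight G) F := by
  have hsplit : ∀ i : {i : Fin N // i ≠ n}, wtOf G lam n i (F (some i.1))
      = (if F (some i.1) = none then lam else 1) * fp1 G F (some i.1) := by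
    intro i
    unfold fp1
    cases h : F (some i.1) with
    | none => simp [wtOf, h]
    | some u => simp [wtOf, h]
  rw [Finset.prod_congr rfl (fun i _ => hsplit i), Finset.prod_mul_distrib]
  congr 1
  · rw [← Finset.prod_filter, Finset.prod_const, cF]
  · have hfp : forestProd (daggerWeight G) F = ∏ v : Option (Fin N), fp1 G F v := by
      unfold forestProd fp1
      apply Finset.prod_congr rfl
      intro v _
      cases F v <;> rfl
    rw [hfp, prod_option_split n (fp1 G F)]
    have e0 : fp1 G F none = 1 := by unfold fp1; rw [h0]
    have en : fp1 G F (some n) = 1 := by unfold fp1; rw [hn]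
    rw [e0, en, one_mul, one_mul]

lemma ext'_restrict (n : Fin N) (F : Option (Fin N) → Option (Option (Fin N)))
    (h0 : F none = none) (hn : F (some n) = none) :
    ext' n (fun i => F (some i.1)) = F := by
  funext v
  match v with
  | none => exact h0.symm
  | some i =>
    show (if h : i = n then none else F (some i)) = F (some i)
    split_ifs with h
    · rw [h, hn]
    · rfl

end Stmt5Aux

open Stmt5Aux

/-- det(λI - G_nn) = Σ_{k=0}^{N-1} λ^k Σ_{F ∈ F^k_{†,n}} π_F. -/
theorem stmt5 {N : ℕ} (G : Matrix (Fin N) (Fin N) ℂ) (n : Fin N) (lam : ℂ) :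
    (lam • (1 : Matrix {i : Fin N // i ≠ n} {i : Fin N // i ≠ n} ℂ) -
        G.submatrix (fun i : {i : Fin N // i ≠ n} => (i : Fin N))
          (fun j : {i : Fin N // i ≠ n} => (j : Fin N))).det =
      ∑ k ∈ Finset.range N, lam ^ k *
        ∑ᶠ f ∈ {f : Option (Fin N) → Option (Option (Fin N)) |
            IsForest f ∧ f none = none ∧ f (some n) = none ∧ (roots f).card = k + 2},
          forestProd (daggerWeight G) f := by
  classical
  have hfin : ∀ k : ℕ, (∑ᶠ f ∈ {f : Option (Fin N) → Option (Option (Fin N)) |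
        IsForest f ∧ f none = none ∧ f (some n) = none ∧ (roots f).card = k + 2},
        forestProd (daggerWeight G) f)
      = ∑ f ∈ Finset.univ.filter (fun f : Option (Fin N) → Option (Option (Fin N)) =>
          IsForest f ∧ f none = none ∧ f (some n) = none ∧ (roots f).card = k + 2),
          forestProd (daggerWeight G) f := by
    intro k
    rw [← finsum_mem_coe_finset]
    congr 1
    ext f
    simp
  simp only [hfin]
  rw [Stmt5Aux.det_expand G lam n]
  have h1 : ∀ f : {i : Fin N // i ≠ n} → Option (Option (Fin N)),
      (∏ i, wtOf G lam n i (f i)) *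
          (Matrix.of fun i j => vecOf n i (f i) j).det
      = if IsForest (ext' n f) then (∏ i, wtOf G lam n i (f i)) else 0 := by
    intro f
    rw [det_val]
    split_ifs <;> ring
  rw [Finset.sum_congr rfl (fun f _ => h1 f), ← Finset.sum_filter]
  set 𝔉 : Finset (Option (Fin N) → Option (Option (Fin N))) :=
    Finset.univ.filter (fun F => IsForest F ∧ F none = none ∧ F (some n) = none) with h𝔉
  have hbij : (∑ f ∈ Finset.univ.filter
        (fun f : {i : Fin N // i ≠ n} → Option (Option (Fin N)) =>
          IsForest (ext' n f)),
        ∏ i, wtOf G lam n i (f i))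
      = ∑ F ∈ 𝔉, ∏ i, wtOf G lam n i (F (some i.1)) := by
    apply Finset.sum_nbij' (fun f => ext' n f) (fun F => fun i => F (some i.1))
    · intro f hf
      simp only [Finset.mem_filter, Finset.mem_univ, true_and] at hf
      rw [h𝔉, Finset.mem_filter]
      exact ⟨Finset.mem_univ _, hf, rfl, by simp [ext']⟩
    · intro F hF
      rw [h𝔉, Finset.mem_filter] at hF
      obtain ⟨-, hfor, h0, hn⟩ := hF
      rw [Finset.mem_filter]
      refine ⟨Finset.mem_univ _, ?_⟩
      rw [ext'_restrict n F h0 hn]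
      exact hfor
    · intro f _
      funext i
      exact ext'_some n f i
    · intro F hF
      rw [h𝔉, Finset.mem_filter] at hF
      exact ext'_restrict n F hF.2.2.1 hF.2.2.2
    · intro f _
      apply Finset.prod_congr rfl
      intro i _
      rw [ext'_some]
  rw [hbij]
  have h2 : ∀ F ∈ 𝔉, (∏ i, wtOf G lam n i (F (some i.1)))
      = lam ^ (cF n F) * forestProd (daggerWeight G) F := by
    intro F hF
    rw [h𝔉, Finset.mem_filter] at hF
    exact wt_prod G lam n F hF.2.2.1 hF.2.2.2
  rw [Finset.sum_congr rfl h2]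
  have hmaps : ∀ F ∈ 𝔉, cF n F ∈ Finset.range N := by
    intro F _
    rw [Finset.mem_range]
    exact cF_lt n F
  rw [← Finset.sum_fiberwise_of_maps_to hmaps
    (fun F => lam ^ (cF n F) * forestProd (daggerWeight G) F)]
  apply Finset.sum_congr rfl
  intro k hk
  have hstep1 : (∑ F ∈ 𝔉.filter (fun F => cF n F = k),
      lam ^ (cF n F) * forestProd (daggerWeight G) F)
      = ∑ F ∈ 𝔉.filter (fun F => cF n F = k),
        lam ^ k * forestProd (daggerWeight G) F := by
    apply Finset.sum_congr rfl
    intro F hF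
    rw [Finset.mem_filter] at hF
    rw [hF.2]
  rw [hstep1, ← Finset.mul_sum]
  congr 1
  have hset : 𝔉.filter (fun F => cF n F = k)
      = Finset.univ.filter (fun f : Option (Fin N) → Option (Option (Fin N)) =>
          IsForest f ∧ f none = none ∧ f (some n) = none ∧ (roots f).card = k + 2) := by
    rw [h𝔉, Finset.filter_filter]
    apply Finset.filter_congr
    intro F _
    constructor
    · rintro ⟨⟨hfor, h0, hn⟩, hc⟩
      exact ⟨hfor, h0, hn, by rw [roots_card n F h0 hn, hc]⟩
    · rintro ⟨hfor, h0, hn, hc⟩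
      refine ⟨⟨hfor, h0, hn⟩, ?_⟩
      rw [roots_card n F h0 hn] at hc
      omega
  rw [hset]
end
end

section
/- Let G be an N×N matrix, n ≠ m, and let Δ'_nm be the (N-1)×(N-1) matrix obtained from -G by deleting row n and column n and then replacing the m-th column by the negative of the n-th column of -G (equivalently, Δ'_nm(0) from the Cramer construction). Then det Δ'_nm = Σ_{F ∈ F_{{†,n}}(m·n)} π_F, where F_{{†,n}}(m·n) is the set of spanning forests of G† with exactly two trees, rooted at † and n, that contain a directed path from m to n. -/
open scoped Classical
open Finset

noncomputable section

namespace Aux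
open Matrix

variable {ι : Type*}

/-- Totalization of a partial map. -/
def totF (f : ι → Option ι) : Option ι → Option ι := fun v => v.bind f

@[simp] lemma totF_none (f : ι → Option ι) : totF f none = none := rfl
@[simp] lemma totF_some (f : ι → Option ι) (i : ι) : totF f (some i) = f i := rfl

lemma iterate_none (f : ι → Option ι) (k : ℕ) : (totF f)^[k] none = none :=
  Function.iterate_fixed rfl k

lemma iterate_some_of_le {f : ι → Option ι} {k t : ℕ} (h : t ≤ k) {x : Option ι} {y : ι}
    (hk : (totF f)^[k] x = some y) : ∃ z, (totF f)^[t] x = some z := by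
  rcases Nat.exists_eq_add_of_le h with ⟨d, rfl⟩
  rcases h' : (totF f)^[t] x with _ | z
  · rw [Nat.add_comm, Function.iterate_add_apply, h', iterate_none] at hk
    exact absurd hk (by simp)
  · exact ⟨z, rfl⟩

lemma transGen_of_iterate {f : ι → Option ι} : ∀ {p : ℕ}, 0 < p → ∀ {i j : ι},
    (totF f)^[p] (some i) = some j → Relation.TransGen (FStep f) i j := by
  intro p
  induction p with
  | zero => omega
  | succ p ih =>
    intro _ i j h
    rcases Nat.eq_zero_or_pos p with rfl | hp
    · exact Relation.TransGen.single h
    · rw [Function.iterate_succ_apply'] at h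
      rcases hz : (totF f)^[p] (some i) with _ | z
      · rw [hz, totF_none] at h; exact absurd h (by simp)
      · rw [hz] at h
        exact (ih hp hz).tail h

lemma iterate_of_transGen {f : ι → Option ι} {i j : ι}
    (h : Relation.TransGen (FStep f) i j) : ∃ p, 0 < p ∧ (totF f)^[p] (some i) = some j := by
  induction h with
  | single h => exact ⟨1, Nat.one_pos, h⟩
  | tail _ h ih =>
    obtain ⟨p, hp, hit⟩ := ih
    exact ⟨p + 1, Nat.succ_pos _, by rw [Function.iterate_succ_apply', hit]; exact h⟩

lemma reach_iff_iterate {f : ι → Option ι} {x y : ι} :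
    Reach f x y ↔ ∃ k, (totF f)^[k] (some x) = some y := by
  constructor
  · intro h
    induction h with
    | refl => exact ⟨0, rfl⟩
    | tail _ h ih =>
      obtain ⟨k, hk⟩ := ih
      exact ⟨k + 1, by rw [Function.iterate_succ_apply', hk]; exact h⟩
  · rintro ⟨k, hk⟩
    induction k generalizing y with
    | zero =>
      simp only [Function.iterate_zero, id_eq, Option.some.injEq] at hk
      exact hk ▸ Relation.ReflTransGen.refl
    | succ k ih =>
      rw [Function.iterate_succ_apply'] at hk
      rcases h' : (totF f)^[k] (some x) with _ | z
      · rw [h', totF_none] at hk; exact absurd hk (by simp)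
      · rw [h'] at hk
        exact (ih h').tail hk


section Fin
variable [Fintype ι] [DecidableEq ι]

lemma forest_no_period {f : ι → Option ι} (hf : IsForest f) {i : ι} {p : ℕ} (hp : 0 < p) :
    (totF f)^[p] (some i) ≠ some i := fun h => hf i (transGen_of_iterate hp h)

lemma forest_iterate_lt {f : ι → Option ι} (hf : IsForest f) {x y : ι} {k : ℕ}
    (h : (totF f)^[k] (some x) = some y) : k < Fintype.card ι := by
  by_contra hk
  push_neg at hk
  set K := Fintype.card ι with hK
  have halive : ∀ t : Fin (K + 1), ∃ z, (totF f)^[(t : ℕ)] (some x) = some z := by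
    intro t
    exact iterate_some_of_le (le_trans (Nat.le_of_lt_succ t.2) hk) h
  choose g hg using halive
  obtain ⟨a, b, hab, hgab⟩ := Fintype.exists_ne_map_eq_of_card_lt g (by simp [hK])
  wlog hlt : (a : ℕ) < (b : ℕ) generalizing a b
  · exact this b a hab.symm hgab.symm (by omega; )
  · have h1 : (totF f)^[(b : ℕ) - (a : ℕ)] (some (g a)) = some (g a) := by
      have := hg b
      rw [show ((b : ℕ)) = ((b : ℕ) - a) + a by omega, Function.iterate_add_apply,
        hg a] at this
      rw [this, hgab]
    exact forest_no_period hf (by omega) h1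

/-- The 0/1 adjacency matrix of `f`. -/
def Pmat (f : ι → Option ι) : Matrix ι ι ℂ :=
  Matrix.of fun i j => if f i = some j then 1 else 0

lemma Pmat_pow (f : ι → Option ι) (k : ℕ) :
    (Pmat f) ^ k = Matrix.of fun i j => if (totF f)^[k] (some i) = some j then 1 else 0 := by
  induction k with
  | zero =>
    ext i j
    by_cases h : i = j <;> simp [Matrix.one_apply, h]
  | succ k ih =>
    ext i j
    rw [pow_succ, ih]
    simp only [Matrix.mul_apply, Matrix.of_apply, Pmat]
    rcases h' : (totF f)^[k] (some i) with _ | t₀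
    · rw [Function.iterate_succ_apply', h']
      simp
    · rw [Function.iterate_succ_apply', h']
      rw [Finset.sum_eq_single t₀]
      · simp
        congr
      · intro t _ ht; simp [ht, Ne.symm ht]
      · simp

lemma Pmat_pow_card {f : ι → Option ι} (hf : IsForest f) :
    (Pmat f) ^ (Fintype.card ι) = 0 := by
  rw [Pmat_pow]
  ext i j
  simp only [Matrix.of_apply, Matrix.zero_apply, ite_eq_right_iff]
  intro h
  exact absurd (forest_iterate_lt hf h) (lt_irrefl _)


lemma not_forest_of_perm {f : ι → Option ι} (g : Equiv.Perm ι) (hg : g ≠ 1)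
    (h : ∀ i ∈ g.support, f i = some (g i)) : ¬ IsForest f := by
  intro hf
  obtain ⟨i₀, hi₀⟩ : ∃ i, i ∈ g.support := by
    by_contra hc
    push_neg at hc
    exact hg (by ext x; by_contra hx; exact hc x (Equiv.Perm.mem_support.2 hx))
  have key : ∀ k : ℕ, 1 ≤ k → Relation.TransGen (FStep f) i₀ ((g ^ k) i₀) := by
    intro k
    induction k with
    | zero => omega
    | succ k ih =>
      intro _
      rcases Nat.eq_zero_or_pos k with rfl | hk
      · rw [pow_one]
        exact Relation.TransGen.single (h i₀ hi₀)
      · have hmem : (g ^ k) i₀ ∈ g.support := (Equiv.Perm.pow_apply_mem_support).2 hi₀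
        have : FStep f ((g ^ k) i₀) ((g ^ (k+1)) i₀) := by
          have h2 := h _ hmem
          rw [FStep, h2, pow_succ']
          simp [Equiv.Perm.mul_apply]
        exact (ih hk).tail this
  have hord : 1 ≤ orderOf g := (orderOf_pos g)
  have := key (orderOf g) hord
  rw [pow_orderOf_eq_one] at this
  exact hf i₀ (by simpa using this)

lemma det_one_sub_Pmat {f : ι → Option ι} (hf : IsForest f) :
    (1 - Pmat f).det = 1 := by
  rw [Matrix.det_apply']
  rw [Finset.sum_eq_single (1 : Equiv.Perm ι)]
  · have : ∀ i : ι, (1 - Pmat f) i i = 1 := by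
      intro i
      have : f i ≠ some i := fun hc => hf i (Relation.TransGen.single hc)
      simp [Pmat, Matrix.one_apply, this]
    simp [this]
  · intro σ _ hσ
    rcases Classical.em (∀ i ∈ σ.support, f (σ i) = some i) with hall | hnot
    · exfalso
      refine not_forest_of_perm σ⁻¹ (inv_ne_one.mpr hσ) (fun i hi => ?_) hf
      have hi2 : i ∈ σ.support := by simpa using hi
      have hj : σ⁻¹ i ∈ σ.support :=
        Equiv.Perm.apply_mem_support.mp (by simpa using hi2)
      have := hall _ hj
      simpa using this
    · push_neg at hnot
      obtain ⟨i, hi, hfi⟩ := hnot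
      have hzero : (1 - Pmat f) (σ i) i = 0 := by
        have hne : σ i ≠ i := Equiv.Perm.mem_support.1 hi
        simp [Pmat, Matrix.one_apply, hne, hfi]
      exact mul_eq_zero_of_right _ (Finset.prod_eq_zero (Finset.mem_univ i) hzero)
  · simp


lemma one_sub_Pmat_mul_geom {f : ι → Option ι} (hf : IsForest f) :
    (1 - Pmat f) * (∑ k ∈ Finset.range (Fintype.card ι), (Pmat f) ^ k) = 1 := by
  have h1 : (1 - Pmat f) * (∑ k ∈ Finset.range (Fintype.card ι), (Pmat f) ^ k)
      = ∑ k ∈ Finset.range (Fintype.card ι), ((Pmat f) ^ k - (Pmat f) ^ (k + 1)) := by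
    rw [Finset.mul_sum]
    refine Finset.sum_congr rfl fun k _ => ?_
    rw [sub_mul, one_mul, ← pow_succ']
  rw [h1, Finset.sum_range_sub', pow_zero, Pmat_pow_card hf, sub_zero]

lemma det_forest_case {f : ι → Option ι} (hf : IsForest f) (m0 : ι) (q : ι → Prop)
    [DecidablePred q] (hq : ∀ i, q i → f i = none) :
    ((1 - Pmat f).updateCol m0 (fun i => if q i then (1:ℂ) else 0)).det
      = if ∃ z, Reach f m0 z ∧ q z then 1 else 0 := by
  classical
  set K := Fintype.card ι with hK
  set c : ι → ℂ := fun i => if q i then (1:ℂ) else 0 with hc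
  set B : Matrix ι ι ℂ := ∑ k ∈ Finset.range K, (Pmat f) ^ k with hB
  have hAB : (1 - Pmat f) * B = 1 := one_sub_Pmat_mul_geom hf
  have hBA : B * (1 - Pmat f) = 1 := mul_eq_one_comm.mp hAB
  have hcramer : Matrix.cramer (1 - Pmat f) c = B *ᵥ c := by
    have h1 : (1 - Pmat f) *ᵥ (Matrix.cramer (1 - Pmat f) c) = c := by
      rw [Matrix.mulVec_cramer, det_one_sub_Pmat hf, one_smul]
    calc Matrix.cramer (1 - Pmat f) c
        = (B * (1 - Pmat f)) *ᵥ (Matrix.cramer (1 - Pmat f) c) := by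
          rw [hBA, Matrix.one_mulVec]
      _ = B *ᵥ ((1 - Pmat f) *ᵥ (Matrix.cramer (1 - Pmat f) c)) := by
          rw [Matrix.mulVec_mulVec]
      _ = B *ᵥ c := by rw [h1]
  have hdet : ((1 - Pmat f).updateCol m0 c).det = (B *ᵥ c) m0 := by
    rw [← Matrix.cramer_apply, hcramer]
  rw [hdet]
  have hBc : (B *ᵥ c) m0 = ∑ k ∈ Finset.range K,
      (if ∃ j, (totF f)^[k] (some m0) = some j ∧ q j then (1:ℂ) else 0) := by
    have h0 : (B *ᵥ c) m0 = ∑ k ∈ Finset.range K, ((Pmat f ^ k) *ᵥ c) m0 := by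
      simp only [hB, Matrix.mulVec, dotProduct, Matrix.sum_apply, Finset.sum_mul]
      rw [Finset.sum_comm]
    rw [h0]
    refine Finset.sum_congr rfl fun k _ => ?_
    rw [Pmat_pow]
    rcases h' : (totF f)^[k] (some m0) with _ | j₀
    · have : ∀ j, ¬ ((none : Option ι) = some j ∧ q j) := by simp
      simp only [Matrix.mulVec, dotProduct, Matrix.of_apply, h']
      simp
    · simp only [Matrix.mulVec, dotProduct, Matrix.of_apply, h']
      rw [Finset.sum_eq_single j₀]
      · have hiff : (∃ j, (some j₀ : Option ι) = some j ∧ q j) ↔ q j₀ := by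
          constructor
          · rintro ⟨j, hj, hqj⟩; cases hj; exact hqj
          · intro h; exact ⟨j₀, rfl, h⟩
        simp [hc, hiff]
      · intro t _ ht
        simp [Ne.symm ht, ht]
      · simp
  rw [hBc]
  by_cases hex : ∃ z, Reach f m0 z ∧ q z
  · obtain ⟨z, hz, hqz⟩ := hex
    obtain ⟨k₀, hk₀⟩ := reach_iff_iterate.mp hz
    have hk₀K : k₀ < K := forest_iterate_lt hf hk₀
    have huniq : ∀ k, (∃ j, (totF f)^[k] (some m0) = some j ∧ q j) → k = k₀ := by
      have hdead : ∀ k j, (totF f)^[k] (some m0) = some j → q j →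
          ∀ k', k < k' → (totF f)^[k'] (some m0) = none := by
        intro k j hkj hqj k' hkk'
        have h1 : (totF f)^[k + 1] (some m0) = none := by
          rw [Function.iterate_succ_apply', hkj, totF_some, hq j hqj]
        have : k' = (k' - (k + 1)) + (k + 1) := by omega
        rw [this, Function.iterate_add_apply, h1, iterate_none]
      intro k ⟨j, hkj, hqj⟩
      by_contra hne
      rcases Nat.lt_or_ge k k₀ with h | h
      · rw [hdead k j hkj hqj k₀ h] at hk₀; exact absurd hk₀ (by simp)
      · have : k₀ < k := by omega
        rw [hdead k₀ z hk₀ hqz k this] at hkj; exact absurd hkj (by simp)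
    rw [if_pos ⟨z, hz, hqz⟩]
    rw [Finset.sum_eq_single_of_mem k₀ (Finset.mem_range.mpr hk₀K)]
    · rw [if_pos ⟨z, hk₀, hqz⟩]
    · intro k _ hkne
      rw [if_neg (fun h => hkne (huniq k h))]
  · rw [if_neg hex]
    refine Finset.sum_eq_zero fun k _ => ?_
    rw [if_neg]
    rintro ⟨j, hkj, hqj⟩
    exact hex ⟨j, reach_iff_iterate.mpr ⟨k, hkj⟩, hqj⟩


lemma det_cycle_case {f : ι → Option ι} (hnf : ¬ IsForest f) (m0 : ι) (c : ι → ℂ)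
    (hc : ∀ i, f i ≠ none → c i = 0) :
    ((1 - Pmat f).updateCol m0 c).det = 0 := by
  classical
  obtain ⟨i₀, hcyc⟩ := not_forall.mp hnf
  rw [not_not] at hcyc
  obtain ⟨p, hp, hper⟩ := iterate_of_transGen hcyc
  have hmul : ∀ l : ℕ, (totF f)^[l * p] (some i₀) = some i₀ := by
    intro l
    induction l with
    | zero => simp
    | succ l ih => rw [Nat.succ_mul, Function.iterate_add_apply, hper, ih]
  have halive : ∀ t : ℕ, ∃ z, (totF f)^[t] (some i₀) = some z := fun t =>
    iterate_some_of_le (Nat.le_mul_of_pos_right t hp) (hmul t)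
  set C : Finset ι := Finset.univ.filter (fun j => ∃ k, (totF f)^[k] (some i₀) = some j)
    with hC
  have hmemC : ∀ j, j ∈ C ↔ ∃ k, (totF f)^[k] (some i₀) = some j := by
    intro j; simp [hC]
  have hi₀C : i₀ ∈ C := (hmemC i₀).mpr ⟨0, rfl⟩
  set g : ι → ι := fun i => (f i).getD i with hg
  have hstep : ∀ j ∈ C, f j = some (g j) ∧ g j ∈ C := by
    intro j hj
    obtain ⟨k, hk⟩ := (hmemC j).mp hj
    obtain ⟨z, hz⟩ := halive (k + 1)
    have hfz : f j = some z := by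
      rw [Function.iterate_succ_apply', hk, totF_some] at hz
      exact hz
    have hgz : g j = z := by rw [hg]; simp [hfz]
    exact ⟨by rw [hgz]; exact hfz, hgz ▸ (hmemC z).mpr ⟨k + 1, hz⟩⟩
  have hsurj : ∀ j ∈ C, ∃ i ∈ C, g i = j := by
    intro j hj
    obtain ⟨k, hk⟩ := (hmemC j).mp hj
    have hkp : (totF f)^[k + p] (some i₀) = some j := by
      rw [Function.iterate_add_apply, hper, hk]
    obtain ⟨i, hi⟩ := halive (k + p - 1)
    have ht1 : (k + p - 1) + 1 = k + p := by omega
    have hfi : f i = some j := by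
      have := hkp
      rw [← ht1, Function.iterate_succ_apply', hi, totF_some] at this
      exact this
    refine ⟨i, (hmemC i).mpr ⟨k + p - 1, hi⟩, ?_⟩
    rw [hg]; simp [hfi]
  have himg : C.image g = C := by
    apply Finset.Subset.antisymm
    · intro z hz
      obtain ⟨i, hi, rfl⟩ := Finset.mem_image.mp hz
      exact (hstep i hi).2
    · intro j hj
      obtain ⟨i, hi, hgi⟩ := hsurj j hj
      exact Finset.mem_image.mpr ⟨i, hi, hgi⟩
  have hinj : Set.InjOn g ↑C := Finset.card_image_iff.mp (by rw [himg])
  set v : ι → ℂ := fun i => if i ∈ C then 1 else 0 with hv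
  have hv0 : v ≠ 0 := by
    intro h
    have := congrFun h i₀
    simp [hv, hi₀C] at this
  have hsum : ∀ j, ∑ i ∈ C, ((1 - Pmat f).updateCol m0 c) i j = 0 := by
    intro j
    by_cases hjm : j = m0
    · subst hjm
      rw [Finset.sum_congr rfl (fun i hi => ?_), Finset.sum_const, smul_zero]
      rw [Matrix.updateCol_self]
      exact hc i (by rw [(hstep i hi).1]; simp)
    · have hcol : ∀ i, ((1 - Pmat f).updateCol m0 c) i j
          = (if i = j then (1:ℂ) else 0) - (if g i = j ∧ i ∈ C then (1:ℂ) else 0) ∨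
          True := fun i => Or.inr trivial
      have hrw : ∀ i ∈ C, ((1 - Pmat f).updateCol m0 c) i j
          = (if i = j then (1:ℂ) else 0) - (if g i = j then (1:ℂ) else 0) := by
        intro i hi
        rw [Matrix.updateCol_ne hjm]
        have hfi : f i = some (g i) := (hstep i hi).1
        have : (f i = some j) ↔ (g i = j) := by rw [hfi]; simp
        simp [Pmat, Matrix.sub_apply, Matrix.one_apply, this]
      rw [Finset.sum_congr rfl hrw, Finset.sum_sub_distrib]
      have hA : ∑ i ∈ C, (if i = j then (1:ℂ) else 0) = if j ∈ C then 1 else 0 :=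
        Finset.sum_ite_eq' C j (fun _ => (1:ℂ))
      have hBsum : ∑ i ∈ C, (if g i = j then (1:ℂ) else 0) = if j ∈ C then 1 else 0 := by
        by_cases hjC : j ∈ C
        · obtain ⟨i₁, hi₁, hgi₁⟩ := hsurj j hjC
          rw [Finset.sum_eq_single_of_mem i₁ hi₁]
          · simp [hgi₁, hjC]
          · intro i hi hne
            rw [if_neg]
            intro hgij
            exact hne (hinj hi hi₁ (by rw [hgij, hgi₁]))
        · rw [if_neg hjC]
          refine Finset.sum_eq_zero fun i hi => ?_
          rw [if_neg]
          intro hgij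
          exact hjC (hgij ▸ (hstep i hi).2)
      rw [hA, hBsum, sub_self]
  have hvM : Matrix.vecMul v ((1 - Pmat f).updateCol m0 c) = 0 := by
    funext j
    have : Matrix.vecMul v ((1 - Pmat f).updateCol m0 c) j
        = ∑ i, v i * ((1 - Pmat f).updateCol m0 c) i j := by
      simp [Matrix.vecMul, dotProduct]
    rw [this]
    have : ∑ i, v i * ((1 - Pmat f).updateCol m0 c) i j
        = ∑ i ∈ C, ((1 - Pmat f).updateCol m0 c) i j := by
      rw [← Finset.sum_filter_add_sum_filter_not Finset.univ (fun i => i ∈ C)]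
      have h1 : ∀ i ∈ Finset.univ.filter (fun i => i ∈ C),
          v i * ((1 - Pmat f).updateCol m0 c) i j
          = ((1 - Pmat f).updateCol m0 c) i j := by
        intro i hi
        simp only [Finset.mem_filter] at hi
        simp [hv, hi.2]
      have h2 : ∀ i ∈ Finset.univ.filter (fun i => ¬ i ∈ C),
          v i * ((1 - Pmat f).updateCol m0 c) i j = 0 := by
        intro i hi
        simp only [Finset.mem_filter] at hi
        simp [hv, hi.2]
      rw [Finset.sum_congr rfl h1, Finset.sum_congr rfl h2, Finset.sum_const_zero, add_zero]
      congr 1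
      ext i
      simp
    rw [this, hsum j]
    rfl
  exact Matrix.exists_vecMul_eq_zero_iff.mp ⟨v, hv0, hvM⟩


theorem det_forest_aux (f : ι → Option ι) (m0 : ι) (q : ι → Prop)
    [DecidablePred q] (hq : ∀ i, q i → f i = none) :
    (Matrix.of fun i j : ι => if j = m0 then (if q i then (1:ℂ) else 0)
        else ((if i = j then (1:ℂ) else 0) - (if f i = some j then (1:ℂ) else 0))).det
      = if IsForest f ∧ ∃ z, Reach f m0 z ∧ q z then 1 else 0 := by
  classical
  have hM : (Matrix.of fun i j : ι => if j = m0 then (if q i then (1:ℂ) else 0)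
        else ((if i = j then (1:ℂ) else 0) - (if f i = some j then (1:ℂ) else 0)))
      = (1 - Pmat f).updateCol m0 (fun i => if q i then (1:ℂ) else 0) := by
    ext i j
    rw [Matrix.updateCol_apply, Matrix.of_apply]
    by_cases h : j = m0
    · simp [h]
    · simp [h, Pmat, Matrix.sub_apply, Matrix.one_apply]
  rw [hM]
  by_cases hf : IsForest f
  · rw [det_forest_case hf m0 q hq]
    by_cases hex : ∃ z, Reach f m0 z ∧ q z
    · rw [if_pos hex, if_pos ⟨hf, hex⟩]
    · rw [if_neg hex, if_neg (fun h => hex h.2)]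
  · rw [det_cycle_case hf m0 (fun i => if q i then (1:ℂ) else 0)
      (fun i hfi => by
        show (if q i then (1:ℂ) else 0) = 0
        rw [if_neg]
        intro hqi
        exact hfi (hq i hqi))]
    rw [if_neg (fun h => hf h.1)]

end Fin

section Main
variable {N : ℕ} {n : Fin N}

abbrev Vn {N : ℕ} (n : Fin N) := {i : Fin N // i ≠ n}

/-- induced next-map on the subtype -/
def nxt (r : Vn n → Option (Fin N)) : Vn n → Option (Vn n) := fun i =>
  match r i with
  | none => none
  | some j => if h : j = n then none else some ⟨j, h⟩

/-- induced out-neighbour map on the dagger digraph -/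
def Phi (r : Vn n → Option (Fin N)) : Option (Fin N) → Option (Option (Fin N)) :=
  fun v => match v with
  | none => none
  | some i => if h : i = n then none else some (r ⟨i, h⟩)

lemma Phi_none (r : Vn n → Option (Fin N)) : Phi r none = none := rfl

lemma Phi_some_n (r : Vn n → Option (Fin N)) : Phi r (some n) = none := by
  simp [Phi]

lemma Phi_coe (r : Vn n → Option (Fin N)) (i : Vn n) :
    Phi r (some (i : Fin N)) = some (r i) := by
  simp [Phi, i.2]

lemma exists_first {α : Type*} {rel : α → α → Prop} {a b : α}
    (h : Relation.TransGen rel a b) : ∃ c, rel a c := by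
  induction h with
  | single h => exact ⟨_, h⟩
  | tail _ _ ih => exact ih

lemma step_nxt_iff (r : Vn n → Option (Fin N)) (i j : Vn n) :
    FStep (nxt r) i j ↔ r i = some (j : Fin N) := by
  rcases h : r i with _ | t
  · simp [FStep, nxt, h]
  · by_cases ht : t = n
    · subst ht
      simp only [FStep, nxt, h]
      constructor
      · intro hc; simp at hc
      · intro hc
        exact absurd (Option.some_injective _ hc).symm j.2
    · simp only [FStep, nxt, h, dif_neg ht]
      constructor
      · intro hc
        obtain rfl := Option.some_injective _ hc
        rfl
      · intro hc
        have ht2 : t = (j : Fin N) := Option.some_injective _ hc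
        subst ht2
        simp

lemma step_Phi_of_nxt {r : Vn n → Option (Fin N)} {a b : Vn n}
    (h : FStep (nxt r) a b) :
    FStep (Phi r) (some (a : Fin N)) (some (b : Fin N)) := by
  rw [FStep, Phi_coe, (step_nxt_iff r a b).mp h]

lemma out_step_shape {r : Vn n → Option (Fin N)} {u w : Option (Fin N)}
    (h : FStep (Phi r) u w) : ∃ k : Vn n, u = some (k : Fin N) ∧ r k = w := by
  rcases u with _ | i
  · exact absurd h (by simp [FStep, Phi_none])
  · by_cases hi : i = n
    · subst hi
      exact absurd h (by simp [FStep, Phi_some_n])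
    · refine ⟨⟨i, hi⟩, rfl, ?_⟩
      have h2 : Phi r (some i) = some (r ⟨i, hi⟩) := by simp [Phi, hi]
      rw [FStep, h2] at h
      exact Option.some_injective _ h

lemma transGen_back {r : Vn n → Option (Fin N)} {a : Vn n} {w : Option (Fin N)}
    (h : Relation.TransGen (FStep (Phi r)) (some (a : Fin N)) w) :
    ∀ b : Vn n, w = some (b : Fin N) → Relation.TransGen (FStep (nxt r)) a b := by
  induction h with
  | single h =>
    intro b hb
    subst hb
    obtain ⟨k, hk, hrk⟩ := out_step_shape h
    have : k = a := Subtype.ext (by exact_mod_cast (Option.some_injective _ hk).symm)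
    subst this
    exact Relation.TransGen.single ((step_nxt_iff r k b).mpr hrk)
  | tail hh hstep ih =>
    intro b hb
    subst hb
    obtain ⟨k, hk, hrk⟩ := out_step_shape hstep
    subst hk
    exact (ih k rfl).tail ((step_nxt_iff r k b).mpr hrk)

lemma reflTransGen_back {r : Vn n → Option (Fin N)} {a : Vn n} {w : Option (Fin N)}
    (h : Relation.ReflTransGen (FStep (Phi r)) (some (a : Fin N)) w) :
    ∀ b : Vn n, w = some (b : Fin N) → Relation.ReflTransGen (FStep (nxt r)) a b := by
  induction h with
  | refl =>
    intro b hb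
    have : a = b := Subtype.ext (by exact_mod_cast Option.some_injective _ hb)
    exact this ▸ Relation.ReflTransGen.refl
  | tail hh hstep ih =>
    intro b hb
    subst hb
    obtain ⟨k, hk, hrk⟩ := out_step_shape hstep
    subst hk
    exact (ih k rfl).tail ((step_nxt_iff r k b).mpr hrk)

lemma isForest_Phi_iff (r : Vn n → Option (Fin N)) :
    IsForest (Phi r) ↔ IsForest (nxt r) := by
  constructor
  · intro h i hi
    have : Relation.TransGen (FStep (Phi r)) (some (i : Fin N)) (some (i : Fin N)) :=
      Relation.TransGen.lift (fun j : Vn n => some (j : Fin N))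
        (fun a b hab => step_Phi_of_nxt hab) _ _ hi
    exact h _ this
  · intro h v hv
    obtain ⟨w, hw⟩ := exists_first hv
    obtain ⟨k, hk, _⟩ := out_step_shape hw
    subst hk
    exact h k (transGen_back hv k rfl)

lemma reach_Phi_iff (r : Vn n → Option (Fin N)) (m : Fin N) (hm : m ≠ n) :
    Reach (Phi r) (some m) (some n) ↔
      ∃ z : Vn n, Reach (nxt r) ⟨m, hm⟩ z ∧ r z = some n := by
  constructor
  · intro h
    rcases (Relation.reflTransGen_iff_eq_or_transGen.mp h) with heq | htg
    · exact absurd (Option.some_injective _ heq.symm) hm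
    · rcases Relation.TransGen.tail'_iff.mp htg with ⟨u, hu, hstep⟩
      obtain ⟨k, hk, hrk⟩ := out_step_shape hstep
      subst hk
      exact ⟨k, reflTransGen_back (a := ⟨m, hm⟩) hu k rfl, hrk⟩
  · rintro ⟨z, hz, hrz⟩
    have h1 : Relation.ReflTransGen (FStep (Phi r)) (some m) (some (z : Fin N)) :=
      Relation.ReflTransGen.lift (fun j : Vn n => some (j : Fin N))
        (fun a b hab => step_Phi_of_nxt hab) _ _ hz
    refine h1.tail ?_
    rw [FStep, Phi_coe, hrz]

lemma Phi_injective : Function.Injective (Phi (n := n)) := by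
  intro r r' h
  funext i
  have := congrFun h (some (i : Fin N))
  rw [Phi_coe, Phi_coe] at this
  exact Option.some_injective _ this


lemma roots_Phi (r : Vn n → Option (Fin N)) :
    roots (Phi r) = {none, some n} := by
  ext v
  simp only [roots, Finset.mem_filter, Finset.mem_univ, true_and, Finset.mem_insert,
    Finset.mem_singleton]
  rcases v with _ | i
  · simp [Phi_none]
  · by_cases hi : i = n
    · subst hi; simp [Phi_some_n]
    · simp [Phi, hi]

def aW (G : Matrix (Fin N) (Fin N) ℂ) (i : Vn n) (k : Option (Fin N)) : ℂ :=
  daggerWeight G (some (i : Fin N)) k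

lemma forestProd_eq {V K : Type*} [Fintype V] [CommRing K] (w : V → V → K)
    (f : V → Option V) : forestProd w f = ∏ v, Option.elim (f v) 1 (w v) := by
  rw [forestProd]
  refine Finset.prod_congr rfl fun v _ => ?_
  cases f v <;> rfl

lemma forestProd_Phi (G : Matrix (Fin N) (Fin N) ℂ) (r : Vn n → Option (Fin N)) :
    forestProd (daggerWeight G) (Phi r) = ∏ i : Vn n, aW G i (r i) := by
  rw [forestProd_eq, Fintype.prod_option]
  rw [Phi_none, Option.elim_none, one_mul]
  rw [← Finset.mul_prod_erase Finset.univ _ (Finset.mem_univ n), Phi_some_n,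
    Option.elim_none, one_mul]
  rw [Finset.prod_subtype (p := fun i : Fin N => i ≠ n) (Finset.univ.erase n)
    (fun x => by simp [Finset.mem_erase]) (fun i : Fin N =>
      Option.elim (Phi r (some i)) 1 (daggerWeight G (some i)))]
  refine Finset.prod_congr rfl fun i _ => ?_
  rw [Phi_coe, Option.elim_some]
  rfl

lemma sum_aW (G : Matrix (Fin N) (Fin N) ℂ) (i : Vn n) :
    ∑ k : Option (Fin N), aW G i k = -G (i : Fin N) (i : Fin N) := by
  rw [Fintype.sum_option]
  have h0 : aW G i none = -(∑ t, G (i : Fin N) t) := rfl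
  have h1 : ∀ t : Fin N, aW G i (some t) = if (i : Fin N) = t then 0 else G (i : Fin N) t :=
    fun t => rfl
  have h2 : ∀ t : Fin N, (if (i : Fin N) = t then (0:ℂ) else G (i : Fin N) t)
      = G (i : Fin N) t - (if (i : Fin N) = t then G (i : Fin N) t else 0) := by
    intro t; by_cases h : (i : Fin N) = t <;> simp [h]
  rw [h0, Finset.sum_congr rfl (fun t _ => (h1 t).trans (h2 t)), Finset.sum_sub_distrib,
    Finset.sum_ite_eq Finset.univ (i : Fin N) (fun t => G (i : Fin N) t)]
  simp only [Finset.mem_univ, if_true]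
  ring

def uW (m : Fin N) (i : Vn n) (k : Option (Fin N)) (j : Vn n) : ℂ :=
  if (j : Fin N) = m then (if k = some n then 1 else 0)
  else ((if i = j then (1:ℂ) else 0) - (if k = some (j : Fin N) then 1 else 0))

lemma row_identity (G : Matrix (Fin N) (Fin N) ℂ) (m : Fin N) (i j : Vn n) :
    (if (j : Fin N) = m then G (i : Fin N) n else -G (i : Fin N) (j : Fin N))
      = ∑ k : Option (Fin N), aW G i k * uW m i k j := by
  by_cases hjm : (j : Fin N) = m
  · rw [if_pos hjm]
    have h1 : ∀ k, aW G i k * uW m i k j = (if k = some n then aW G i k else 0) := by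
      intro k
      rw [uW, if_pos hjm]
      by_cases hk : k = some n <;> simp [hk]
    rw [Finset.sum_congr rfl (fun k _ => h1 k),
      Finset.sum_ite_eq' Finset.univ (some n) (fun k => aW G i k)]
    simp only [Finset.mem_univ, if_true]
    have : aW G i (some n) = if (i : Fin N) = n then 0 else G (i : Fin N) n := rfl
    rw [this, if_neg i.2]
  · rw [if_neg hjm]
    by_cases hij : i = j
    · subst hij
      have h1 : ∀ k, aW G i k * uW m i k i
          = aW G i k - (if k = some (i : Fin N) then aW G i k else 0) := by
        intro k
        rw [uW, if_neg hjm, if_pos rfl, mul_sub, mul_one]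
        congr 1
        by_cases hk : k = some (i : Fin N) <;> simp [hk]
      rw [Finset.sum_congr rfl (fun k _ => h1 k), Finset.sum_sub_distrib,
        Finset.sum_ite_eq' Finset.univ (some (i : Fin N)) (fun k => aW G i k), sum_aW]
      simp only [Finset.mem_univ, if_true]
      have : aW G i (some (i : Fin N)) = if (i : Fin N) = (i : Fin N) then 0
          else G (i : Fin N) (i : Fin N) := rfl
      rw [this, if_pos rfl, sub_zero]
    · have h1 : ∀ k, aW G i k * uW m i k j
          = -(if k = some (j : Fin N) then aW G i k else 0) := by
        intro k
        rw [uW, if_neg hjm, if_neg hij, zero_sub, mul_neg]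
        congr 1
        by_cases hk : k = some (j : Fin N) <;> simp [hk]
      rw [Finset.sum_congr rfl (fun k _ => h1 k), Finset.sum_neg_distrib,
        Finset.sum_ite_eq' Finset.univ (some (j : Fin N)) (fun k => aW G i k)]
      simp only [Finset.mem_univ, if_true]
      have : aW G i (some (j : Fin N)) = if (i : Fin N) = (j : Fin N) then 0
          else G (i : Fin N) (j : Fin N) := rfl
      rw [this, if_neg (fun hc => hij (Subtype.ext hc))]

end Main
end Aux

lemma mem_roots {V : Type*} [Fintype V] (f : V → Option V) (v : V) :
    v ∈ roots f ↔ f v = none := by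
  rw [roots]
  simp

open Aux

/-- det Δ'_nm = Σ_{F ∈ F_{†,n}(m·n)} π_F, where Δ'_nm is obtained from -G by
deleting row n and column n and replacing the m-th column by the negative of the
n-th column of -G. -/
theorem stmt7 {N : ℕ} (G : Matrix (Fin N) (Fin N) ℂ) (n m : Fin N) (hnm : n ≠ m) :
    (Matrix.of fun i j : {i : Fin N // i ≠ n} =>
        if (j : Fin N) = m then G i n else -G i j).det =
      ∑ᶠ f ∈ {f : Option (Fin N) → Option (Option (Fin N)) |
          IsForest f ∧ f none = none ∧ roots f = {none, some n} ∧
            Reach f (some m) (some n)},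
        forestProd (daggerWeight G) f := by
  classical
  have hm : m ≠ n := Ne.symm hnm
  set m' : Vn n := ⟨m, hm⟩ with hm'
  have hrow : (Matrix.of fun i j : Vn n => if (j : Fin N) = m then G i n else -G i j)
      = Matrix.of (fun i : Vn n =>
          ∑ k : Option (Fin N), (fun j : Vn n => aW G i k * uW m i k j)) := by
    ext i j
    rw [Matrix.of_apply, Matrix.of_apply, Finset.sum_apply]
    exact row_identity G m i j
  rw [hrow]
  have hexp : (Matrix.of (fun i : Vn n =>
          ∑ k : Option (Fin N), (fun j : Vn n => aW G i k * uW m i k j))).det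
      = ∑ r : Vn n → Option (Fin N),
          (Matrix.of fun i j : Vn n => aW G i (r i) * uW m i (r i) j).det :=
    (Matrix.detRowAlternating (R := ℂ) (n := Vn n)).toMultilinearMap.map_sum
      (g := fun (i : Vn n) (k : Option (Fin N)) => (fun j : Vn n => aW G i k * uW m i k j))
  rw [hexp]
  have hscal : ∀ r : Vn n → Option (Fin N),
      (Matrix.of fun i j : Vn n => aW G i (r i) * uW m i (r i) j).det
        = (∏ i : Vn n, aW G i (r i))
          * (Matrix.of fun i j : Vn n => uW m i (r i) j).det := fun r =>
    Matrix.det_mul_column (fun i => aW G i (r i)) _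
  have hforest : ∀ r : Vn n → Option (Fin N),
      (Matrix.of fun i j : Vn n => uW m i (r i) j).det
        = if IsForest (nxt r) ∧ ∃ z, Reach (nxt r) m' z ∧ r z = some n then 1 else 0 := by
    intro r
    have hMeq : (Matrix.of fun i j : Vn n => uW m i (r i) j)
        = Matrix.of (fun i j : Vn n => if j = m' then (if r i = some n then (1:ℂ) else 0)
            else ((if i = j then (1:ℂ) else 0)
              - (if nxt r i = some j then (1:ℂ) else 0))) := by
      ext i j
      rw [Matrix.of_apply, Matrix.of_apply, uW]
      have hjm : ((j : Fin N) = m) ↔ (j = m') := by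
        rw [hm']
        exact ⟨fun h => Subtype.ext h, fun h => congrArg Subtype.val h⟩
      by_cases h : j = m'
      · rw [if_pos (hjm.mpr h), if_pos h]
      · rw [if_neg (fun hc => h (hjm.mp hc)), if_neg h]
        congr 1
        have hstep : (r i = some (j : Fin N)) ↔ (nxt r i = some j) :=
          (step_nxt_iff r i j).symm
        by_cases h2 : r i = some (j : Fin N)
        · rw [if_pos h2, if_pos (hstep.mp h2)]
        · rw [if_neg h2, if_neg (fun hc => h2 (hstep.mpr hc))]
    rw [hMeq]
    exact det_forest_aux (nxt r) m' (fun i => r i = some n)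
      (fun i hqi => by simp [nxt, hqi])
  have hfilter : ∑ r : Vn n → Option (Fin N),
        (Matrix.of fun i j : Vn n => aW G i (r i) * uW m i (r i) j).det
      = ∑ r ∈ Finset.univ.filter (fun r : Vn n → Option (Fin N) =>
          IsForest (nxt r) ∧ ∃ z, Reach (nxt r) m' z ∧ r z = some n),
          ∏ i : Vn n, aW G i (r i) := by
    rw [Finset.sum_filter]
    refine Finset.sum_congr rfl fun r _ => ?_
    rw [hscal r, hforest r]
    by_cases hc : IsForest (nxt r) ∧ ∃ z, Reach (nxt r) m' z ∧ r z = some n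
    · rw [if_pos hc, if_pos hc, mul_one]
    · rw [if_neg hc, if_neg hc, mul_zero]
  rw [hfilter]
  have hSfin : {f : Option (Fin N) → Option (Option (Fin N)) |
      IsForest f ∧ f none = none ∧ roots f = {none, some n} ∧
        Reach f (some m) (some n)}.Finite := Set.toFinite _
  rw [← Set.Finite.coe_toFinset hSfin, finsum_mem_coe_finset]
  refine Finset.sum_bij (fun r _ => Phi r) ?_ ?_ ?_ ?_
  · intro r hr
    rw [Finset.mem_filter] at hr
    rw [Set.Finite.mem_toFinset, Set.mem_setOf_eq]
    exact ⟨(isForest_Phi_iff r).mpr hr.2.1, Phi_none r, roots_Phi r,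
      (reach_Phi_iff r m hm).mpr hr.2.2⟩
  · intro r₁ _ r₂ _ h
    exact Phi_injective h
  · intro b hb
    rw [Set.Finite.mem_toFinset, Set.mem_setOf_eq] at hb
    obtain ⟨hbf, hbnone, hbroots, hbreach⟩ := hb
    have hbn : ∀ i : Fin N, i ≠ n → b (some i) ≠ none := by
      intro i hin hc
      have : some i ∈ roots b := (mem_roots b _).mpr hc
      rw [hbroots] at this
      simp only [Finset.mem_insert, Finset.mem_singleton] at this
      rcases this with h | h
      · exact Option.some_ne_none _ h
      · exact hin (Option.some_injective _ h)
    have hbsn : b (some n) = none := by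
      have : some n ∈ roots b := by
        rw [hbroots]
        simp
      exact (mem_roots b _).mp this
    set r : Vn n → Option (Fin N) := fun i => (b (some (i : Fin N))).getD none with hr
    have hPhi : Phi r = b := by
      funext v
      rcases v with _ | i
      · rw [Phi_none, hbnone]
      · by_cases hi : i = n
        · subst hi
          rw [Phi_some_n, hbsn]
        · have h1 : Phi r (some i) = some (r ⟨i, hi⟩) := by simp [Phi, hi]
          rw [h1, hr]
          rcases hb2 : b (some i) with _ | w
          · exact absurd hb2 (hbn i hi)
          · simp [hb2]
      -- done
    refine ⟨r, ?_, hPhi⟩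
    rw [Finset.mem_filter]
    refine ⟨Finset.mem_univ _, (isForest_Phi_iff r).mp (hPhi ▸ hbf), ?_⟩
    exact (reach_Phi_iff r m hm).mp (hPhi ▸ hbreach)
  · intro r _
    exact (forestProd_Phi G r).symm
end
end

section
/- Let F be a spanning forest of G† with exactly three trees T_†, T_n, T_m rooted at †, n, m respectively. Adding to F an arc (m,i) (i ≠ m) yields: a spanning forest with two trees rooted at † and n if i ∈ V(T_†) ∪ V(T_n); and a functional graph containing exactly one directed circuit, that circuit passing through m, with all vertices except † and n having out-degree 1, if i ∈ V(T_m). -/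
open scoped Classical
open Finset

noncomputable section

section Aux

variable {V : Type*} {f : V → Option V}

lemma fstep_det {a b c : V} (h1 : FStep f a b) (h2 : FStep f a c) : b = c := by
  unfold FStep at h1 h2; rw [h1] at h2; exact (Option.some_injective _ h2)

lemma reach_comp {a b c : V} (h1 : Reach f a b) (h2 : Reach f a c) :
    Reach f b c ∨ Reach f c b := by
  induction h2 with
  | refl => exact Or.inr h1
  | tail _ hstep ih =>
    rcases ih with h | h
    · exact Or.inl (h.tail hstep)
    · rcases Relation.ReflTransGen.cases_head h with rfl | ⟨u, hu, hub⟩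
      · exact Or.inl (Relation.ReflTransGen.single hstep)
      · cases fstep_det hstep hu
        exact Or.inr hub

lemma sink_reach {a b : V} (ha : f a = none) (h : Reach f a b) : b = a := by
  rcases Relation.ReflTransGen.cases_head h with rfl | ⟨u, hu, _⟩
  · rfl
  · unfold FStep at hu; rw [ha] at hu; cases hu

lemma cycle_reach {v w : V} (hc : Relation.TransGen (FStep f) v v) (hr : Reach f v w) :
    Reach f w v := by
  induction hr with
  | refl => exact .refl
  | tail _ hstep ih =>
    rcases Relation.ReflTransGen.cases_head ih with rfl | ⟨u, hu, hub⟩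
    · obtain ⟨u, hu, huv⟩ := (Relation.TransGen.head'_iff).mp hc
      cases fstep_det hstep hu
      exact huv
    · cases fstep_det hstep hu
      exact hub

end Aux

/-- Adding to a three-tree spanning forest F (with trees rooted at †, n, m) an arc
(m,i): if i lies in the tree of † or of n, one gets a two-tree spanning forest
rooted at † and n; if i lies in the tree of m, one gets a graph in which exactly
† and n have out-degree 0 and which contains exactly one directed circuit, that
circuit passing through m. -/
theorem stmt13 {N : ℕ} (n m : Fin N) (hnm : n ≠ m)
    (f : Option (Fin N) → Option (Option (Fin N)))
    (hf : IsForest f ∧ f none = none ∧ roots f = {none, some n, some m})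
    (i : Option (Fin N)) (hi : i ≠ some m) :
    ((Reach f i none ∨ Reach f i (some n)) →
        IsForest (Function.update f (some m) (some i)) ∧
          roots (Function.update f (some m) (some i)) = {none, some n}) ∧
    (Reach f i (some m) →
        (∀ v, Function.update f (some m) (some i) v = none ↔
            (v = none ∨ v = some n)) ∧
        Relation.TransGen (FStep (Function.update f (some m) (some i)))
          (some m) (some m) ∧
        ∀ v, Relation.TransGen (FStep (Function.update f (some m) (some i))) v v →
          Relation.TransGen (FStep (Function.update f (some m) (some i)))
            v (some m)) := by
  obtain ⟨hforest, hnone, hroots⟩ := hf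
  set g := Function.update f (some m) (some i) with hg
  have hfm : f (some m) = none := by
    have : (some m : Option (Fin N)) ∈ roots f := by rw [hroots]; simp
    simpa [roots] using this
  have hfn : f (some n) = none := by
    have : (some n : Option (Fin N)) ∈ roots f := by rw [hroots]; simp
    simpa [roots] using this
  have hroot_iff : ∀ v, f v = none ↔ (v = none ∨ v = some n ∨ v = some m) := by
    intro v
    have := Finset.ext_iff.mp hroots v
    simpa [roots] using this
  have hgm : g (some m) = some i := by simp [hg]
  have hgne : ∀ a, a ≠ some m → g a = f a := fun a h => Function.update_of_ne h _ _
  have hfg : ∀ a b, FStep f a b → FStep g a b := by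
    intro a b h
    have ha : a ≠ some m := by
      rintro rfl; unfold FStep at h; rw [hfm] at h; cases h
    unfold FStep at h ⊢; rwa [hgne a ha]
  have hfgR : ∀ a b, Reach f a b → Reach g a b :=
    fun a b h => Relation.ReflTransGen.mono (fun x y => hfg x y) _ _ h
  have hgfR : ∀ a, Relation.ReflTransGen (FStep g) a (some m) → Reach f a (some m) := by
    intro a h
    induction h using Relation.ReflTransGen.head_induction_on with
    | refl => exact .refl
    | head h' hrest ih =>
      rename_i x c
      by_cases hx : x = some m
      · subst hx; exact .refl
      · have : FStep f x c := by unfold FStep at h' ⊢; rwa [hgne x hx] at h'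
        exact Relation.ReflTransGen.head this ih
  have htf : ∀ a b, Relation.TransGen (FStep g) a b →
      ¬ Relation.ReflTransGen (FStep g) a (some m) → Relation.TransGen (FStep f) a b := by
    intro a b h
    induction h using Relation.TransGen.head_induction_on with
    | single h' =>
      rename_i x
      intro hna
      have hx : x ≠ some m := fun e => hna (e ▸ Relation.ReflTransGen.refl)
      have : FStep f x b := by unfold FStep at h' ⊢; rwa [hgne x hx] at h'
      exact Relation.TransGen.single this
    | head h' hrest ih =>
      rename_i x c
      intro hna
      have hx : x ≠ some m := fun e => hna (e ▸ Relation.ReflTransGen.refl)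
      have hstep : FStep f x c := by unfold FStep at h' ⊢; rwa [hgne x hx] at h'
      have hnc : ¬ Relation.ReflTransGen (FStep g) c (some m) := fun hc =>
        hna (Relation.ReflTransGen.head h' hc)
      exact Relation.TransGen.head hstep (ih hnc)
  have key1 : Relation.TransGen (FStep g) (some m) (some m) ↔ Reach f i (some m) := by
    constructor
    · intro h
      obtain ⟨u, hu, hum⟩ := Relation.TransGen.head'_iff.mp h
      have hui : u = i := by
        unfold FStep at hu; rw [hgm] at hu; exact (Option.some_injective _ hu.symm)
      subst hui
      exact hgfR _ hum
    · intro h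
      exact Relation.TransGen.head' (show FStep g (some m) i from hgm) (hfgR _ _ h)
  have key2 : ∀ v, Relation.TransGen (FStep g) v v →
      Relation.TransGen (FStep g) v (some m) := by
    intro v hv
    by_contra hnv
    have hnr : ¬ Relation.ReflTransGen (FStep g) v (some m) := by
      intro h
      rcases Relation.ReflTransGen.cases_head h with rfl | ⟨u, hu, hum⟩
      · exact hnv hv
      · exact hnv (Relation.TransGen.head' hu hum)
    exact hforest v (htf v v hv hnr)
  have hgnone : ∀ v, g v = none ↔ (v = none ∨ v = some n) := by
    intro v
    by_cases hv : v = some m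
    · subst hv
      rw [hgm]
      simp only [reduceCtorEq, Option.some.injEq, false_iff]
      rintro (h | h)
      · cases h
      · exact hnm h.symm
    · rw [hgne v hv, hroot_iff v]
      constructor
      · rintro (h | h | h)
        · exact Or.inl h
        · exact Or.inr h
        · exact absurd h hv
      · rintro (h | h)
        · exact Or.inl h
        · exact Or.inr (Or.inl h)
  constructor
  · intro hr
    have hnim : ¬ Reach f i (some m) := by
      intro him
      rcases hr with h | h
      · rcases reach_comp him h with hc | hc
        · cases sink_reach hfm hc
        · cases sink_reach hnone hc
      · rcases reach_comp him h with hc | hc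
        · exact hnm (Option.some_injective _ (sink_reach hfm hc))
        · exact hnm (Option.some_injective _ (sink_reach hfn hc)).symm
    constructor
    · intro v hv
      have h1 := key2 v hv
      have h2 : Relation.ReflTransGen (FStep g) v (some m) := h1.to_reflTransGen
      have h3 : Relation.ReflTransGen (FStep g) (some m) v := cycle_reach hv h2
      exact hnim (key1.mp (Relation.TransGen.trans_right h3 h1))
    · ext v
      simp only [roots, Finset.mem_filter, Finset.mem_univ, true_and, Finset.mem_insert,
        Finset.mem_singleton]
      exact hgnone v
  · intro him
    exact ⟨hgnone, key1.mpr him, fun v hv => key2 v hv⟩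
end
end
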